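/- arXiv:2206.11638 — 13 statements merged into one kernel-verified Lean document; each statement's English description precedes it below -/
import Mathlib

section
/- Let C∞ := {z ∈ ℓ∞ : z n = 0 for some n ∈ ℕ} be the coordinate cross. The closure of C∞ in ℓ∞ is exactly the set {z ∈ ℓ∞ : ⨅_{n ∈ ℕ} |z n| = 0}. -/
open scoped ENNReal

/-- The closure in `ℓ∞` of the coordinate cross `C∞ = {z | ∃ n, z n = 0}` is exactly
the set of bounded sequences whose moduli have infimum `0`. -/
theorem closure_coordinate_cross :
    closure {z : lp (fun _ : ℕ => ℂ) ∞ | ∃ n : ℕ, z n = 0} =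
      {z : lp (fun _ : ℕ => ℂ) ∞ | (⨅ n : ℕ, ‖z n‖) = 0} := by
  ext z
  constructor
  · intro hz
    have hbdd : BddBelow (Set.range fun n => ‖z n‖) :=
      ⟨0, by rintro x ⟨n, rfl⟩; exact norm_nonneg _⟩
    have h0 : 0 ≤ ⨅ n : ℕ, ‖z n‖ :=
      le_ciInf fun n => norm_nonneg _
    have hle : ∀ ε : ℝ, 0 < ε → (⨅ n : ℕ, ‖z n‖) ≤ ε := by
      intro ε hε
      obtain ⟨w, hw, hdist⟩ := Metric.mem_closure_iff.mp hz ε hε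
      obtain ⟨n, hn⟩ := hw
      have h1 : ‖z n‖ = ‖(z - w) n‖ := by
        rw [lp.coeFn_sub]
        simp [hn]
      have h2 : ‖(z - w) n‖ ≤ ‖z - w‖ :=
        lp.norm_apply_le_norm ENNReal.top_ne_zero _ _
      have h3 : ‖z n‖ ≤ ε := by
        rw [h1]
        exact h2.trans (by rw [← dist_eq_norm]; exact hdist.le)
      exact (ciInf_le hbdd n).trans h3
    show (⨅ n : ℕ, ‖z n‖) = 0
    by_contra h
    have hpos : 0 < ⨅ n : ℕ, ‖z n‖ := lt_of_le_of_ne h0 (Ne.symm h)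
    have := hle _ (half_pos hpos)
    linarith
  · intro hz
    rw [Metric.mem_closure_iff]
    intro ε hε
    have hinf : (⨅ n : ℕ, ‖z n‖) < ε := by
      rw [Set.mem_setOf_eq] at hz; rw [hz]; exact hε
    obtain ⟨n, hn⟩ := exists_lt_of_ciInf_lt hinf
    refine ⟨z - lp.single ∞ n (z n), ⟨n, ?_⟩, ?_⟩
    · rw [lp.coeFn_sub]
      simp [lp.single_apply_self]
    · have : z - (z - lp.single ∞ n (z n)) = lp.single ∞ n (z n) := sub_sub_cancel _ _
      rw [dist_eq_norm, this]
      refine lt_of_le_of_lt (lp.norm_le_of_forall_le (norm_nonneg (z n)) ?_) hn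
      intro j
      rcases eq_or_ne j n with rfl | hj
      · rw [lp.single_apply_self]
      · rw [lp.single_apply_ne _ _ _ hj]; simp [norm_nonneg]
end

section
/- The open set {z ∈ ℓ∞ : 0 < ⨅_{n ∈ ℕ} |z n|} (the complement in ℓ∞ of the closure of the coordinate cross C∞ := {z : z n = 0 for some n}) is path-connected. -/
open scoped ENNReal

open Complex in
private lemma expI_lipschitz : LipschitzWith 1 (fun x : ℝ => Complex.exp (x * Complex.I)) := by
  apply lipschitzWith_of_nnnorm_deriv_le
  · intro x
    exact ((Complex.ofRealCLM.differentiable.differentiableAt).mul_const Complex.I).cexp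
  · intro x
    have h : HasDerivAt (fun x : ℝ => Complex.exp (x * Complex.I))
        (Complex.exp (x * Complex.I) * Complex.I) x := by
      simpa using ((Complex.ofRealCLM.hasDerivAt (x := x)).mul_const Complex.I).cexp
    rw [h.deriv]
    simp [nnnorm, Complex.norm_exp_ofReal_mul_I]

private lemma expI_dist (a b : ℝ) :
    ‖Complex.exp (a * Complex.I) - Complex.exp (b * Complex.I)‖ ≤ |a - b| := by
  have := expI_lipschitz.dist_le_mul a b
  simpa [Complex.dist_eq, Real.dist_eq] using this

/-- The complement in `ℓ∞` of the closure of the coordinate cross, i.e. the set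
`{z | 0 < ⨅ n, |z n|}`, is path-connected. -/
theorem isPathConnected_compl_closure_coordinate_cross :
    IsPathConnected {z : lp (fun _ : ℕ => ℂ) ∞ | 0 < ⨅ n : ℕ, ‖z n‖} := by
  set S := {z : lp (fun _ : ℕ => ℂ) ∞ | 0 < ⨅ n : ℕ, ‖z n‖} with hS
  have h1 : (1 : lp (fun _ : ℕ => ℂ) ∞) ∈ S := by
    have : ∀ n : ℕ, ‖(1 : lp (fun _ : ℕ => ℂ) ∞) n‖ = 1 := by
      intro n; rw [lp.infty_coeFn_one]; simp
    simp only [hS, Set.mem_setOf_eq]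
    simp_rw [this]
    have h2 : (⨅ _ : ℕ, (1:ℝ)) = 1 := ciInf_const
    rw [h2]
    exact one_pos
  refine ⟨1, h1, ?_⟩
  intro z hz
  -- the key construction: a path from `z` to `1`
  set ε : ℝ := ⨅ n : ℕ, ‖z n‖ with hε
  have hε0 : 0 < ε := hz
  have hbdd : BddBelow (Set.range fun n : ℕ => ‖z n‖) :=
    ⟨0, by rintro x ⟨n, rfl⟩; exact norm_nonneg _⟩
  have hεle : ∀ n : ℕ, ε ≤ ‖z n‖ := fun n => ciInf_le hbdd n
  set M : ℝ := ‖z‖ with hM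
  have hM0 : 0 ≤ M := norm_nonneg z
  have hMle : ∀ n : ℕ, ‖z n‖ ≤ M := by
    intro n
    calc ‖z n‖ = ‖z n‖ := rfl
      _ ≤ ‖z‖ := lp.norm_apply_le_norm ENNReal.top_ne_zero z n
  set F : ℝ → ℕ → ℂ := fun t n =>
    (((1 - t) * ‖z n‖ + t : ℝ) : ℂ) *
      Complex.exp ((((1 - t) * Complex.arg (z n) : ℝ)) * Complex.I) with hF
  have habs : ∀ t : ℝ, t ∈ Set.Icc (0:ℝ) 1 → ∀ n : ℕ,
      ‖F t n‖ = (1 - t) * ‖z n‖ + t := by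
    intro t ht n
    have h1t : 0 ≤ 1 - t := by linarith [ht.2]
    have hpos : 0 ≤ (1 - t) * ‖z n‖ + t :=
      add_nonneg (mul_nonneg h1t (norm_nonneg _)) ht.1
    show ‖(((1 - t) * ‖z n‖ + t : ℝ) : ℂ) *
      Complex.exp ((((1 - t) * Complex.arg (z n) : ℝ)) * Complex.I)‖ = _
    rw [norm_mul, Complex.norm_real, Real.norm_eq_abs, Complex.norm_exp_ofReal_mul_I, mul_one, abs_of_nonneg hpos]
  have hmem : ∀ t : ℝ, t ∈ Set.Icc (0:ℝ) 1 → Memℓp (F t) ∞ := by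
    intro t ht
    apply memℓp_infty
    refine ⟨M + 1, ?_⟩
    rintro x ⟨n, rfl⟩
    have := habs t ht n
    have hMn := hMle n
    have han : 0 ≤ ‖z n‖ := norm_nonneg _
    simp only [this]
    nlinarith [ht.1, ht.2]
  set G : unitInterval → lp (fun _ : ℕ => ℂ) ∞ := fun t => ⟨F t.1, hmem t.1 t.2⟩ with hG
  have hGapply : ∀ (t : unitInterval) (n : ℕ), (G t : ℕ → ℂ) n = F t.1 n := fun _ _ => rfl
  -- Lipschitz estimate
  have hlip : LipschitzWith ((M + 1) * (1 + Real.pi)).toNNReal G := by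
    apply LipschitzWith.of_dist_le_mul
    intro t s
    rw [dist_eq_norm]
    have hK0 : (0:ℝ) ≤ (M + 1) * (1 + Real.pi) := by positivity
    have hC0 : (0:ℝ) ≤ (M + 1) * (1 + Real.pi) * dist t s :=
      mul_nonneg hK0 dist_nonneg
    rw [Real.coe_toNNReal _ hK0]
    apply lp.norm_le_of_forall_le hC0
    intro n
    have hts : dist t s = |t.1 - s.1| := rfl
    set a : ℝ := ‖z n‖ with ha
    set θ : ℝ := Complex.arg (z n) with hθ
    have han : 0 ≤ a := norm_nonneg _
    have haM : a ≤ M := hMle n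
    have hθπ : |θ| ≤ Real.pi := Complex.abs_arg_le_pi _
    have hsub : ((G t - G s : lp (fun _ : ℕ => ℂ) ∞) : ℕ → ℂ) n = F t.1 n - F s.1 n := by
      rw [lp.coeFn_sub]; rfl
    rw [hsub, hts]
    set At : ℝ := (1 - t.1) * a + t.1 with hAtd
    set As : ℝ := (1 - s.1) * a + s.1 with hAsd
    set Et : ℂ := Complex.exp ((((1 - t.1) * θ : ℝ)) * Complex.I) with hEt
    set Es : ℂ := Complex.exp ((((1 - s.1) * θ : ℝ)) * Complex.I) with hEs
    have hFt : F t.1 n = (At : ℂ) * Et := rfl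
    have hFs : F s.1 n = (As : ℂ) * Es := rfl
    have hdecomp : F t.1 n - F s.1 n = ((At - As : ℝ) : ℂ) * Et + (As : ℂ) * (Et - Es) := by
      rw [hFt, hFs]; push_cast; ring
    rw [hdecomp]
    have h1 : ‖((At - As : ℝ) : ℂ) * Et‖ = |At - As| := by
      rw [hEt, norm_mul, Complex.norm_real, Real.norm_eq_abs, Complex.norm_exp_ofReal_mul_I, mul_one]
    have h2 : ‖(As : ℂ) * (Et - Es)‖ ≤ |As| * (|t.1 - s.1| * Real.pi) := by
      rw [norm_mul, Complex.norm_real, Real.norm_eq_abs]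
      apply mul_le_mul_of_nonneg_left _ (abs_nonneg _)
      have := expI_dist ((1 - t.1) * θ) ((1 - s.1) * θ)
      have heq : (1 - t.1) * θ - (1 - s.1) * θ = (s.1 - t.1) * θ := by ring
      rw [heq, abs_mul] at this
      calc ‖Et - Es‖ ≤ |s.1 - t.1| * |θ| := this
        _ ≤ |t.1 - s.1| * Real.pi := by
            rw [abs_sub_comm]
            exact mul_le_mul_of_nonneg_left hθπ (abs_nonneg _)
    have hAtAs : |At - As| ≤ |t.1 - s.1| * (M + 1) := by
      have : At - As = (t.1 - s.1) * (1 - a) := by simp only [At, As]; ring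
      rw [this, abs_mul]
      apply mul_le_mul_of_nonneg_left _ (abs_nonneg _)
      rw [abs_le]; constructor <;> nlinarith
    have hAs : |As| ≤ M + 1 := by
      have ht1 := s.2.1; have ht2 := s.2.2
      have hs0 : (0:ℝ) ≤ 1 - s.1 := by linarith
      rw [hAsd, abs_le]
      constructor
      · nlinarith [mul_nonneg hs0 han]
      · nlinarith [mul_le_mul_of_nonneg_left haM hs0]
    calc ‖((At - As : ℝ) : ℂ) * Et + (As : ℂ) * (Et - Es)‖
        ≤ ‖((At - As : ℝ) : ℂ) * Et‖ + ‖(As : ℂ) * (Et - Es)‖ :=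
          norm_add_le _ _
      _ ≤ |t.1 - s.1| * (M + 1) + (M + 1) * (|t.1 - s.1| * Real.pi) := by
          rw [h1]
          exact add_le_add hAtAs (h2.trans (by
            apply mul_le_mul_of_nonneg_right hAs
            positivity))
      _ = (M + 1) * (1 + Real.pi) * |t.1 - s.1| := by ring
  have hG0 : G 0 = z := by
    apply lp.ext
    funext n
    have : F (0:ℝ) n = z n := by
      simp [hF, Complex.norm_mul_exp_arg_mul_I]
    simpa [hGapply] using this
  have hG1 : G 1 = 1 := by
    apply lp.ext
    funext n
    have : F (1:ℝ) n = 1 := by simp [hF]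
    rw [lp.infty_coeFn_one]
    simpa [hGapply] using this
  have hGmem : ∀ t : unitInterval, G t ∈ S := by
    intro t
    simp only [hS, Set.mem_setOf_eq]
    have hlow : ∀ n : ℕ, min ε 1 ≤ ‖(G t : ℕ → ℂ) n‖ := by
      intro n
      rw [hGapply, habs t.1 t.2 n]
      have := hεle n
      have h1 := min_le_left ε (1:ℝ)
      have h2 := min_le_right ε (1:ℝ)
      nlinarith [t.2.1, t.2.2]
    have : min ε 1 ≤ ⨅ n : ℕ, ‖(G t : ℕ → ℂ) n‖ := le_ciInf hlow
    exact lt_of_lt_of_le (lt_min hε0 one_pos) this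
  have hjoined : JoinedIn S z 1 := by
    refine ⟨⟨⟨G, hlip.continuous⟩, hG0, hG1⟩, fun t => hGmem t⟩
  exact hjoined.symm
end

section
/- Every continuous path in ℓ∞ avoiding the closure of the coordinate cross has bounded argument: if γ : ℝ → ℓ∞ is continuous on [0,1] and 0 < ⨅_{n ∈ ℕ} |γ(t) n| for every t ∈ [0,1], then there exist functions A : ℕ → ℝ → ℝ and a constant Π ∈ ℝ such that each A n is continuous on [0,1], γ(t) n = |γ(t) n| · exp(i · A n t) for all n ∈ ℕ and t ∈ [0,1], and |A n t| ≤ Π for all n ∈ ℕ and t ∈ [0,1]. -/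
open scoped ENNReal
open Complex Set

lemma aux_coord_bound (x y : lp (fun _ : ℕ => ℂ) ∞) (n : ℕ) :
    ‖x n - y n‖ ≤ ‖x - y‖ := by
  have h := lp.norm_apply_le_norm (E := fun _ : ℕ => ℂ) ENNReal.top_ne_zero (x - y) n
  rw [lp.coeFn_sub, Pi.sub_apply] at h
  exact h

lemma aux_coord_cont (n : ℕ) : Continuous (fun x : lp (fun _ : ℕ => ℂ) ∞ => x n) := by
  apply LipschitzWith.continuous (K := 1)
  apply LipschitzWith.of_dist_le_mul
  intro x y
  simp only [NNReal.coe_one, one_mul, dist_eq_norm]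
  exact aux_coord_bound x y n

/-- Every continuous path in `ℓ∞` avoiding the closure of the coordinate cross has
bounded argument: there is a continuous choice of arguments of all coordinates,
uniformly bounded by a single constant `Pi₀`. -/
theorem path_off_cross_has_bounded_argument
    (γ : ℝ → lp (fun _ : ℕ => ℂ) ∞)
    (hγ : ContinuousOn γ (Set.Icc 0 1))
    (hcross : ∀ t ∈ Set.Icc (0:ℝ) 1, 0 < ⨅ n : ℕ, ‖γ t n‖) :
    ∃ (A : ℕ → ℝ → ℝ) (Pi₀ : ℝ),
      (∀ n : ℕ, ContinuousOn (A n) (Set.Icc 0 1)) ∧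
      (∀ n : ℕ, ∀ t ∈ Set.Icc (0:ℝ) 1,
        γ t n = (‖γ t n‖ : ℂ) * Complex.exp (Complex.I * (A n t))) ∧
      (∀ n : ℕ, ∀ t ∈ Set.Icc (0:ℝ) 1, |A n t| ≤ Pi₀) := by
  classical
  set g : lp (fun _ : ℕ => ℂ) ∞ → ℝ := fun x => ⨅ n : ℕ, ‖x n‖ with hg
  have hbdd : ∀ x : lp (fun _ : ℕ => ℂ) ∞,
      BddBelow (Set.range fun n : ℕ => ‖x n‖) := by
    intro x
    refine ⟨0, ?_⟩
    rintro s ⟨k, rfl⟩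
    positivity
  have hglip : ∀ x y : lp (fun _ : ℕ => ℂ) ∞, g x ≤ g y + ‖x - y‖ := by
    intro x y
    have h1 : ∀ k : ℕ, g x - ‖x - y‖ ≤ ‖y k‖ := by
      intro k
      have h3 : ‖x k - y k‖ ≤ ‖x - y‖ := aux_coord_bound x y k
      have h4 : ‖x k‖ - ‖y k‖ ≤ ‖x k - y k‖ := by
        exact norm_sub_norm_le (x k) (y k)
      have h5 : g x ≤ ‖x k‖ := ciInf_le (hbdd x) k
      linarith
    have h2 : g x - ‖x - y‖ ≤ g y := le_ciInf h1
    linarith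
  have hgcont : Continuous g := by
    apply LipschitzWith.continuous (K := 1)
    apply LipschitzWith.of_dist_le_mul
    intro x y
    simp only [NNReal.coe_one, one_mul]
    rw [Real.dist_eq, dist_eq_norm]
    have a1 := hglip x y
    have a2 := hglip y x
    rw [norm_sub_rev] at a2
    rw [abs_sub_le_iff]
    constructor <;> linarith
  have hcomp : IsCompact (Set.Icc (0:ℝ) 1) := isCompact_Icc
  obtain ⟨t₀, ht₀, hmin⟩ := hcomp.exists_isMinOn ⟨0, by norm_num⟩
    (hgcont.comp_continuousOn hγ)
  set m : ℝ := g (γ t₀) with hm_def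
  have hm : 0 < m := hcross t₀ ht₀
  have hlow : ∀ t ∈ Set.Icc (0:ℝ) 1, ∀ k : ℕ, m ≤ ‖γ t k‖ := by
    intro t ht k
    exact le_trans (isMinOn_iff.mp hmin t ht) (ciInf_le (hbdd (γ t)) k)
  have hne : ∀ t ∈ Set.Icc (0:ℝ) 1, ∀ k : ℕ, γ t k ≠ 0 := by
    intro t ht k h0
    have h := hlow t ht k
    rw [h0, norm_zero] at h
    linarith
  have huc := hcomp.uniformContinuousOn_of_continuous hγ
  obtain ⟨δ, hδ, hδ'⟩ := Metric.uniformContinuousOn_iff.mp huc m hm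
  obtain ⟨N, hN⟩ := exists_nat_one_div_lt hδ
  set M : ℕ := N + 1 with hM_def
  have hMpos : (0:ℝ) < M := by positivity
  have hNδ : 1 / (M:ℝ) < δ := by exact_mod_cast hN
  set c : ℕ → ℝ := fun i => (i : ℝ) / M with hc
  have hc0 : c 0 = 0 := by simp [hc]
  have hcM : c M = 1 := by
    simp only [hc]
    rw [div_self (ne_of_gt hMpos)]
  have hcnonneg : ∀ i, 0 ≤ c i := by
    intro i
    have : (0:ℝ) ≤ (i:ℝ) / M := by positivity
    simpa [hc] using this
  have hcstep : ∀ i : ℕ, c (i + 1) - c i = 1 / M := by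
    intro i
    simp only [hc]
    rw [div_sub_div_same]
    push_cast
    ring_nf
  have hqmem : ∀ t ∈ Set.Icc (0:ℝ) 1, ∀ i : ℕ, min t (c i) ∈ Set.Icc (0:ℝ) 1 := by
    intro t ht i
    exact ⟨le_min ht.1 (hcnonneg i), le_trans (min_le_left _ _) ht.2⟩
  have hqdist : ∀ t : ℝ, ∀ i : ℕ, dist (min t (c (i+1))) (min t (c i)) < δ := by
    intro t i
    rw [Real.dist_eq]
    have h1 := abs_min_sub_min_le_max t (c (i+1)) t (c i)
    have h2 : |t - t| = 0 := by simp
    have h3 : |c (i+1) - c i| = 1 / M := by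
      rw [hcstep]
      rw [abs_of_pos]
      positivity
    rw [h2, h3] at h1
    have h4 : max 0 (1/(M:ℝ)) = 1/(M:ℝ) := max_eq_right (by positivity)
    rw [h4] at h1
    linarith
  set r : ℕ → ℕ → ℝ → ℂ := fun n i t => γ (min t (c (i+1))) n / γ (min t (c i)) n with hr
  have hrne : ∀ n : ℕ, ∀ t ∈ Set.Icc (0:ℝ) 1, ∀ i : ℕ, r n i t ≠ 0 := by
    intro n t ht i
    exact div_ne_zero (hne _ (hqmem t ht (i+1)) n) (hne _ (hqmem t ht i) n)
  have hrslit : ∀ n : ℕ, ∀ t ∈ Set.Icc (0:ℝ) 1, ∀ i : ℕ, r n i t ∈ Complex.slitPlane := by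
    intro n t ht i
    have hamem := hqmem t ht (i+1)
    have hbmem := hqmem t ht i
    set a := min t (c (i+1)) with ha
    set b := min t (c i) with hb
    have hzw : ‖γ a n - γ b n‖ < m := by
      have hd := hδ' a hamem b hbmem (hqdist t i)
      rw [dist_eq_norm] at hd
      calc ‖γ a n - γ b n‖ ≤ ‖γ a - γ b‖ := aux_coord_bound _ _ n
        _ < m := hd
    have hwpos : 0 < ‖γ b n‖ := lt_of_lt_of_le hm (hlow b hbmem n)
    have hwne : γ b n ≠ 0 := hne b hbmem n
    have hlt1 : ‖r n i t - 1‖ < 1 := by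
      rw [hr]
      simp only
      rw [div_sub_one hwne, norm_div, div_lt_one hwpos]
      exact lt_of_lt_of_le hzw (hlow b hbmem n)
    rw [Complex.mem_slitPlane_iff]
    left
    have h6 : |(r n i t - 1).re| ≤ ‖r n i t - 1‖ := Complex.abs_re_le_norm _
    have h7 : (r n i t - 1).re = (r n i t).re - 1 := by simp
    rw [abs_le, h7] at h6
    linarith [h6.1]
  refine ⟨fun n t => Complex.arg (γ 0 n) +
      ∑ i ∈ Finset.range M, Complex.arg (r n i t),
    Real.pi + M * Real.pi, ?_, ?_, ?_⟩
  · -- continuity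
    intro n
    apply ContinuousOn.add continuousOn_const
    apply continuousOn_finset_sum
    intro i _
    have hcont1 : ∀ j : ℕ, ContinuousOn (fun t => γ (min t (c j)) n) (Set.Icc (0:ℝ) 1) := by
      intro j
      apply (aux_coord_cont n).comp_continuousOn
      apply hγ.comp ((continuous_id.min continuous_const).continuousOn)
      intro t ht
      exact hqmem t ht j
    have hcontr : ContinuousOn (fun t => r n i t) (Set.Icc (0:ℝ) 1) := by
      apply (hcont1 (i+1)).div (hcont1 i)
      intro t ht
      exact hne _ (hqmem t ht i) n
    intro t ht
    exact (Complex.continuousAt_arg (hrslit n t ht i)).comp_continuousWithinAt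
      (hcontr t ht)
  · -- formula
    intro n t ht
    have key : ∀ k : ℕ, k ≤ M →
        γ (min t (c k)) n = (‖γ (min t (c k)) n‖ : ℂ) *
          Complex.exp (Complex.I * ((Complex.arg (γ 0 n) +
            ∑ i ∈ Finset.range k, Complex.arg (r n i t) : ℝ) : ℂ)) := by
      intro k hk
      induction k with
      | zero =>
        have h0 : min t (c 0) = 0 := by rw [hc0]; exact min_eq_right ht.1
        have hs : Complex.arg (γ 0 n) + ∑ i ∈ Finset.range 0, Complex.arg (r n i t) =
            Complex.arg (γ 0 n) := by simp
        rw [h0, hs, mul_comm Complex.I]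
        exact (Complex.norm_mul_exp_arg_mul_I (γ 0 n)).symm
      | succ k ih =>
        have hk' : k ≤ M := Nat.le_of_succ_le hk
        have IH := ih hk'
        have hamem := hqmem t ht k
        have hbmem := hqmem t ht (k+1)
        set a := min t (c k) with ha
        set b := min t (c (k+1)) with hb
        have hzne : γ a n ≠ 0 := hne a hamem n
        have hwne : γ b n ≠ 0 := hne b hbmem n
        have habz : (‖γ a n‖ : ℂ) ≠ 0 := by
          simpa [Complex.ofReal_eq_zero] using norm_ne_zero_iff.mpr hzne
        have habw : (‖γ b n‖ : ℂ) ≠ 0 := by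
          simpa [Complex.ofReal_eq_zero] using norm_ne_zero_iff.mpr hwne
        have hrval : r n k t = γ b n / γ a n := rfl
        have hrne' : r n k t ≠ 0 := hrne n t ht k
        have habr : (‖r n k t‖ : ℂ) ≠ 0 := by
          simpa [Complex.ofReal_eq_zero] using norm_ne_zero_iff.mpr hrne'
        have hsum : ((Complex.arg (γ 0 n) +
            ∑ i ∈ Finset.range (k+1), Complex.arg (r n i t) : ℝ) : ℂ)
            = ((Complex.arg (γ 0 n) +
              ∑ i ∈ Finset.range k, Complex.arg (r n i t) : ℝ) : ℂ)
              + (Complex.arg (r n k t) : ℂ) := by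
          push_cast [Finset.sum_range_succ]
          ring
        rw [hsum, mul_add, Complex.exp_add]
        have he1 : Complex.exp (Complex.I * (Complex.arg (r n k t) : ℂ)) =
            r n k t / (‖r n k t‖ : ℂ) := by
          rw [mul_comm Complex.I, eq_div_iff habr, mul_comm]
          exact Complex.norm_mul_exp_arg_mul_I (r n k t)
        have he2 : (‖r n k t‖ : ℂ) =
            (‖γ b n‖ : ℂ) / (‖γ a n‖ : ℂ) := by
          rw [hrval, norm_div]
          push_cast
          ring
        have hexpθ : Complex.exp (Complex.I * ((Complex.arg (γ 0 n) +
            ∑ i ∈ Finset.range k, Complex.arg (r n i t) : ℝ) : ℂ)) =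
            γ a n / (‖γ a n‖ : ℂ) := by
          rw [eq_div_iff habz, mul_comm]
          exact IH.symm
        rw [hexpθ, he1, he2, hrval]
        field_simp
    have hfin := key M le_rfl
    rw [hcM, min_eq_left ht.2] at hfin
    exact hfin
  · -- bound
    intro n t ht
    have h1 : |Complex.arg (γ 0 n) + ∑ i ∈ Finset.range M, Complex.arg (r n i t)| ≤
        |Complex.arg (γ 0 n)| + |∑ i ∈ Finset.range M, Complex.arg (r n i t)| := abs_add_le _ _
    have h2 : |∑ i ∈ Finset.range M, Complex.arg (r n i t)| ≤
        ∑ i ∈ Finset.range M, |Complex.arg (r n i t)| := Finset.abs_sum_le_sum_abs _ _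
    have h3 : ∑ i ∈ Finset.range M, |Complex.arg (r n i t)| ≤
        ∑ i ∈ Finset.range M, Real.pi := by
      apply Finset.sum_le_sum
      intro i _
      exact Complex.abs_arg_le_pi _
    have h4 : ∑ i ∈ Finset.range M, Real.pi = M * Real.pi := by
      rw [Finset.sum_const, Finset.card_range, nsmul_eq_mul]
    have h5 := Complex.abs_arg_le_pi (γ 0 n)
    calc |Complex.arg (γ 0 n) + ∑ i ∈ Finset.range M, Complex.arg (r n i t)|
        ≤ |Complex.arg (γ 0 n)| + |∑ i ∈ Finset.range M, Complex.arg (r n i t)| := h1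
      _ ≤ Real.pi + M * Real.pi := by rw [← h4]; exact add_le_add h5 (le_trans h2 h3)
end

section
/- Let r, ρ : ℕ → ℝ be sequences of positive reals with ρ n / r n → 0 as n → ∞. Let z0 : ℕ → ℂ satisfy 0 < ⨅_{n} (|z0 n| / r n), and let z : ℕ → ℂ satisfy |z n| ≤ β · ρ n for all n, for some constant β. Then ⨅_{n} (|z0 n + z n| / r n) = 0 if and only if z0 n + z n = 0 for some n ∈ ℕ. -/
/-- If `ρ n / r n → 0`, `z0` avoids the closure of the coordinate cross in `l_r`,
and `z ∈ l_ρ` (i.e. `|z n| ≤ β ρ n`), then `z0 + z` lies in the closure of the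
coordinate cross in `l_r` iff it lies on the coordinate cross itself. -/
theorem affine_slice_closure_cross_eq_cross
    (r ρ : ℕ → ℝ) (hr : ∀ n, 0 < r n) (hρ : ∀ n, 0 < ρ n)
    (hlim : Filter.Tendsto (fun n => ρ n / r n) Filter.atTop (nhds 0))
    (z0 : ℕ → ℂ) (hz0 : 0 < ⨅ n : ℕ, ‖z0 n‖ / r n)
    (z : ℕ → ℂ) (β : ℝ) (hz : ∀ n, ‖z n‖ ≤ β * ρ n) :
    (⨅ n : ℕ, ‖z0 n + z n‖ / r n) = 0 ↔ ∃ n : ℕ, z0 n + z n = 0 := by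
  set f : ℕ → ℝ := fun n => ‖z0 n + z n‖ / r n with hf
  have hbddf : BddBelow (Set.range f) := by
    refine ⟨0, ?_⟩
    rintro x ⟨n, rfl⟩
    have := hr n
    positivity
  constructor
  · intro h0
    by_contra hne
    push_neg at hne
    have hfpos : ∀ n, 0 < f n := fun n =>
      div_pos (norm_pos_iff.mpr (hne n)) (hr n)
    set m := ⨅ n : ℕ, ‖z0 n‖ / r n with hm
    have hbdd : BddBelow (Set.range fun n => ‖z0 n‖ / r n) := by
      refine ⟨0, ?_⟩
      rintro x ⟨n, rfl⟩
      have := hr n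
      positivity
    have hmle : ∀ n, m ≤ ‖z0 n‖ / r n := fun n => ciInf_le hbdd n
    have htend : Filter.Tendsto (fun n => β * (ρ n / r n)) Filter.atTop (nhds 0) := by
      simpa using hlim.const_mul β
    have hev : ∀ᶠ n in Filter.atTop, β * (ρ n / r n) < m / 2 :=
      htend.eventually_lt_const (half_pos hz0)
    obtain ⟨N, hN⟩ := Filter.eventually_atTop.1 hev
    have hbig : ∀ n, N ≤ n → m / 2 ≤ f n := by
      intro n hn
      have h1 : ‖z0 n‖ - ‖z n‖ ≤ ‖z0 n + z n‖ := by
        have := norm_add_le (z0 n + z n) (-z n)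
        simp at this
        linarith
      have h2 : ‖z n‖ / r n ≤ β * (ρ n / r n) := by
        rw [mul_div_assoc'] at *
        exact div_le_div_of_nonneg_right (hz n) (hr n).le |>.trans_eq rfl
      have h3 : m - β * (ρ n / r n) ≤ f n := by
        have := hmle n
        have hdiv : (‖z0 n‖ - ‖z n‖) / r n ≤ f n :=
          div_le_div_of_nonneg_right h1 (hr n).le |>.trans_eq rfl
        rw [sub_div] at hdiv
        linarith
      have := hN n hn
      linarith
    have hNe : (Finset.range (N + 1)).Nonempty := ⟨0, by simp⟩
    set c := min (m / 2) ((Finset.range (N + 1)).inf' hNe f) with hc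
    have hcpos : 0 < c := by
      refine lt_min (half_pos hz0) ?_
      rw [Finset.lt_inf'_iff]
      intro i _
      exact hfpos i
    have hcle : ∀ n, c ≤ f n := by
      intro n
      rcases le_or_gt n N with h | h
      · exact (min_le_right _ _).trans
          (Finset.inf'_le f (by simp [Nat.lt_succ_iff, h]))
      · exact (min_le_left _ _).trans (hbig n h.le)
    have : c ≤ 0 := h0 ▸ le_ciInf hcle
    linarith
  · rintro ⟨n, hn⟩
    refine le_antisymm ?_ ?_
    · have : f n = 0 := by simp [hf, hn]
      exact (ciInf_le hbddf n).trans this.le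
    · refine le_ciInf fun n => ?_
      have := hr n
      positivity
end

section
/- Define f : ℓ∞ × ℓ∞ × ℂ → ℂ by f(b, u, s) = Σ'_{n ∈ ℕ} b n · ((u n)/(n+1))^s, where z^s denotes the principal-branch complex power (well defined since ‖u − 1‖ < 1 forces Re(u n) > 0 for all n). Then the series converges absolutely and f is analytic (AnalyticOnNhd over ℂ) on the open set {(b, u, s) : ‖u − 1‖ < 1 and Re s > 1}. (Under z n := (u n)/(n+1), this is the Euler–Riemann zeta function ζ(b, z, s) = Σ b n · (z n)^s on ℓ∞ × B∞_{n⁻¹}(n⁻¹, 1) × H₁.) -/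
open scoped ENNReal

set_option maxHeartbeats 1000000
set_option synthInstance.maxHeartbeats 400000

noncomputable section ZetaAux

/-- Evaluation at a coordinate, as a ring homomorphism on `ℓ∞`. -/
def zEvalRH (n : ℕ) : lp (fun _ : ℕ => ℂ) ∞ →+* ℂ where
  toFun x := x n
  map_one' := congrFun (lp.infty_coeFn_one (B := fun _ : ℕ => ℂ)) n
  map_mul' x y := congrFun (lp.infty_coeFn_mul x y) n
  map_zero' := congrFun (lp.coeFn_zero (fun _ : ℕ => ℂ) ∞) n
  map_add' x y := congrFun (lp.coeFn_add x y) n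

lemma zEvalRH_continuous (n : ℕ) : Continuous (zEvalRH n) :=
  AddMonoidHomClass.continuous_of_bound (zEvalRH n) 1 fun x => by
    simpa using (show ‖zEvalRH n x‖ ≤ ‖x‖ from lp.norm_apply_le_norm ENNReal.top_ne_zero x n)

/-- Evaluation at a coordinate, as a continuous linear map on `lp _ p`, `p ≠ 0`. -/
def zEval (p : ℝ≥0∞) [Fact (1 ≤ p)] (hp : p ≠ 0) (n : ℕ) :
    lp (fun _ : ℕ => ℂ) p →L[ℂ] ℂ :=
  LinearMap.mkContinuous
    { toFun := fun x => x n
      map_add' := fun x y => congrFun (lp.coeFn_add x y) n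
      map_smul' := fun c x => congrFun (lp.coeFn_smul c x) n }
    1 (fun x => by
      show ‖x n‖ ≤ 1 * ‖x‖
      simpa using lp.norm_apply_le_norm hp x n)

@[simp] lemma zEval_apply (p : ℝ≥0∞) [Fact (1 ≤ p)] (hp : p ≠ 0) (n : ℕ)
    (x : lp (fun _ : ℕ => ℂ) p) : zEval p hp n x = x n := rfl

/-- The Taylor series of `log` at `1`, as a formal multilinear series on `ℓ∞`. -/
def zLogSeries : FormalMultilinearSeries ℂ (lp (fun _ : ℕ => ℂ) ∞) (lp (fun _ : ℕ => ℂ) ∞) :=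
  fun k => ((-1 : ℂ) ^ (k + 1) / k) • ContinuousMultilinearMap.mkPiAlgebraFin ℂ k _

lemma znorm_coef_le (k : ℕ) : ‖((-1 : ℂ) ^ (k + 1) / k)‖ ≤ 1 := by
  rcases Nat.eq_zero_or_pos k with rfl | hk
  · simp
  · rw [norm_div]
    simp only [norm_pow, norm_neg, norm_one, one_pow]
    rw [div_le_one (by exact_mod_cast hk)]
    simpa using Nat.one_le_iff_ne_zero.mpr hk.ne'

lemma zLogSeries_norm_le (k : ℕ) : ‖zLogSeries k‖ ≤ 1 := by
  refine ContinuousMultilinearMap.opNorm_le_bound zero_le_one (fun m => ?_)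
  show ‖((-1 : ℂ) ^ (k + 1) / k) • (ContinuousMultilinearMap.mkPiAlgebraFin ℂ k _) m‖ ≤ _
  rw [norm_smul, ContinuousMultilinearMap.mkPiAlgebraFin_apply]
  have h1 : ‖(List.ofFn m).prod‖ ≤ ∏ i, ‖m i‖ := by
    refine le_trans (List.norm_prod_le _) ?_
    rw [List.map_ofFn, List.prod_ofFn]
    simp [Function.comp]
  calc ‖((-1 : ℂ) ^ (k + 1) / k)‖ * ‖(List.ofFn m).prod‖ ≤ 1 * ∏ i, ‖m i‖ :=
        mul_le_mul (znorm_coef_le k) h1 (norm_nonneg _) zero_le_one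
    _ = 1 * ∏ i, ‖m i‖ := rfl

lemma zLogSeries_radius : 1 ≤ zLogSeries.radius := by
  simpa using zLogSeries.le_radius_of_bound 1 (r := 1) fun k => by
    simpa using zLogSeries_norm_le k

/-- Componentwise logarithm on the unit ball of `ℓ∞` around `1`. -/
def zLog (u : lp (fun _ : ℕ => ℂ) ∞) : lp (fun _ : ℕ => ℂ) ∞ := zLogSeries.sum (u - 1)

lemma zmem_ball {u : lp (fun _ : ℕ => ℂ) ∞} (hu : ‖u - 1‖ < 1) :
    u - 1 ∈ Metric.eball (0 : lp (fun _ : ℕ => ℂ) ∞) zLogSeries.radius := by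
  rw [Metric.mem_eball, edist_eq_enorm_sub, sub_zero, enorm_eq_nnnorm]
  refine lt_of_lt_of_le ?_ zLogSeries_radius
  exact_mod_cast (show ‖u - 1‖₊ < 1 by exact_mod_cast hu)

lemma zLog_analyticAt {u : lp (fun _ : ℕ => ℂ) ∞} (hu : ‖u - 1‖ < 1) :
    AnalyticAt ℂ zLog u := by
  have h0 : 0 < zLogSeries.radius := lt_of_lt_of_le zero_lt_one zLogSeries_radius
  have hb := (zLogSeries.hasFPowerSeriesOnBall h0).analyticOnNhd
  have houter : AnalyticAt ℂ zLogSeries.sum (u - 1) := hb (u - 1) (zmem_ball hu)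
  show AnalyticAt ℂ (fun x : lp (fun _ : ℕ => ℂ) ∞ => zLogSeries.sum (x - 1)) u
  have hin : AnalyticAt ℂ (fun x : lp (fun _ : ℕ => ℂ) ∞ => x - 1) u :=
    analyticAt_id.sub analyticAt_const
  exact AnalyticAt.comp (g := zLogSeries.sum) (f := fun x => x - 1) houter hin

lemma zLog_apply {u : lp (fun _ : ℕ => ℂ) ∞} (hu : ‖u - 1‖ < 1) (n : ℕ) :
    zLog u n = Complex.log (u n) := by
  have h0 : 0 < zLogSeries.radius := lt_of_lt_of_le zero_lt_one zLogSeries_radius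
  have hs := ((zLogSeries.hasFPowerSeriesOnBall h0).hasSum (zmem_ball hu))
  rw [zero_add] at hs
  have hs2 := (zEval ⊤ ENNReal.top_ne_zero n).hasSum hs
  simp only [zEval_apply] at hs2
  have hterm : ∀ k : ℕ, ((zLogSeries k fun _ => u - 1) : lp (fun _ : ℕ => ℂ) ∞) n
      = (-1 : ℂ) ^ (k + 1) * ((u - 1) n) ^ k / k := by
    intro k
    have h1 : (zLogSeries k fun _ => u - 1) = ((-1 : ℂ) ^ (k + 1) / k) • ((u - 1) ^ k) := by
      simp only [zLogSeries, ContinuousMultilinearMap.smul_apply,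
        ContinuousMultilinearMap.mkPiAlgebraFin_apply, List.ofFn_const, List.prod_replicate]
    rw [h1]
    rw [congrFun (lp.coeFn_smul _ _) n]
    rw [Pi.smul_apply, congrFun (lp.infty_coeFn_pow (u - 1) k) n]
    rw [Pi.pow_apply, smul_eq_mul, div_mul_eq_mul_div]
  rw [funext hterm] at hs2
  have hz : ‖(u - 1) n‖ < 1 :=
    lt_of_le_of_lt (lp.norm_apply_le_norm ENNReal.top_ne_zero (u - 1) n) hu
  have hlog := Complex.hasSum_taylorSeries_log hz
  have := hs2.unique hlog
  rw [show (1 : ℂ) + (u - 1) n = u n by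
    rw [congrFun (lp.coeFn_sub u 1) n]; simp [congrFun (lp.infty_coeFn_one (B := fun _ : ℕ => ℂ)) n]] at this
  exact this

/-- The exponential kernel `(n+1)^{-s}`. -/
def zexp (n : ℕ) (s : ℂ) : ℂ := Complex.exp (-(Real.log ((n : ℝ) + 1)) * s)

lemma znorm_zexp (n : ℕ) (s : ℂ) : ‖zexp n s‖ = ((n : ℝ) + 1) ^ (-s.re) := by
  have hpos : (0 : ℝ) < (n : ℝ) + 1 := by positivity
  rw [zexp, Complex.norm_exp]
  rw [show (-(Real.log ((n : ℝ) + 1)) * s : ℂ) = ((-(Real.log ((n : ℝ) + 1)) : ℝ) : ℂ) * s by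
    push_cast; ring]
  rw [Complex.re_ofReal_mul, Real.rpow_def_of_pos hpos]
  ring_nf

lemma zsummable_rpow {σ : ℝ} (hσ : 1 < σ) :
    Summable (fun n : ℕ => ((n : ℝ) + 1) ^ (-σ)) := by
  have h := Real.summable_nat_rpow (p := -σ).mpr (by linarith)
  have h2 := (summable_nat_add_iff (f := fun n : ℕ => (n : ℝ) ^ (-σ)) 1).mpr h
  refine h2.congr fun n => ?_
  push_cast
  ring_nf

lemma zsummable_log_rpow {σ : ℝ} (hσ : 1 < σ) :
    Summable (fun n : ℕ => Real.log ((n : ℝ) + 1) * ((n : ℝ) + 1) ^ (-σ)) := by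
  set ε : ℝ := (σ - 1) / 2 with hε
  have hε0 : 0 < ε := by rw [hε]; linarith
  have hσε : 1 < σ - ε := by rw [hε]; linarith
  have hsum : Summable (fun n : ℕ => ε⁻¹ * ((n : ℝ) + 1) ^ (-(σ - ε))) :=
    (zsummable_rpow hσε).mul_left _
  refine Summable.of_nonneg_of_le (fun n => ?_) (fun n => ?_) hsum
  · have h1 : (0 : ℝ) ≤ Real.log ((n : ℝ) + 1) := Real.log_nonneg (by have : (0:ℝ) ≤ (n:ℝ) := Nat.cast_nonneg n; linarith)
    positivity
  · have hpos : (0 : ℝ) < (n : ℝ) + 1 := by positivity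
    have hlog : Real.log ((n : ℝ) + 1) ≤ ((n : ℝ) + 1) ^ ε / ε :=
      Real.log_le_rpow_div hpos.le hε0
    calc Real.log ((n : ℝ) + 1) * ((n : ℝ) + 1) ^ (-σ)
        ≤ (((n : ℝ) + 1) ^ ε / ε) * ((n : ℝ) + 1) ^ (-σ) := by
          refine mul_le_mul_of_nonneg_right hlog (Real.rpow_nonneg hpos.le _)
      _ = ε⁻¹ * ((n : ℝ) + 1) ^ (-(σ - ε)) := by
          rw [div_eq_inv_mul, mul_assoc, ← Real.rpow_add hpos]
          ring_nf

lemma znorm_single (n : ℕ) : ‖lp.single (E := fun _ : ℕ => ℂ) 1 n (1 : ℂ)‖ = 1 := by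
  have := lp.norm_single (E := fun _ : ℕ => ℂ) (p := 1) (by norm_num) n (1 : ℂ)
  simpa using this

lemma zc_norm_term (n : ℕ) (s : ℂ) :
    ‖zexp n s • lp.single (E := fun _ : ℕ => ℂ) 1 n (1 : ℂ)‖ = ((n : ℝ) + 1) ^ (-s.re) := by
  rw [norm_smul, znorm_single, znorm_zexp, mul_one]

lemma zc_summable {s : ℂ} (hs : 1 < s.re) :
    Summable (fun n : ℕ => zexp n s • lp.single (E := fun _ : ℕ => ℂ) 1 n (1 : ℂ)) := by
  refine Summable.of_norm ?_
  simp only [zc_norm_term]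
  exact zsummable_rpow hs

/-- The `ℓ¹`-valued function `s ↦ ((n+1)^{-s})ₙ`. -/
def zC (s : ℂ) : lp (fun _ : ℕ => ℂ) 1 :=
  ∑' n : ℕ, zexp n s • lp.single 1 n (1 : ℂ)

lemma zC_apply {s : ℂ} (hs : 1 < s.re) (n : ℕ) : zC s n = zexp n s := by
  have h := ((zEval 1 one_ne_zero n).hasSum (zc_summable hs).hasSum).tsum_eq
  rw [zC, ← zEval_apply 1 one_ne_zero n, ← h]
  rw [show (fun m => zEval 1 one_ne_zero n (zexp m s • lp.single 1 m (1 : ℂ)))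
      = (fun m => zexp m s * (lp.single (E := fun _ : ℕ => ℂ) 1 m (1 : ℂ) : ∀ _, ℂ) n) from
    funext fun m => by rw [zEval_apply, congrFun (lp.coeFn_smul _ _) n, Pi.smul_apply, smul_eq_mul]]
  rw [tsum_eq_single n (fun m hm => by rw [lp.single_apply_ne 1 m _ (Ne.symm hm), mul_zero])]
  rw [lp.single_apply_self, mul_one]

lemma zexp_hasDerivAt (n : ℕ) (s : ℂ) :
    HasDerivAt (zexp n) ((-((Real.log ((n : ℝ) + 1) : ℝ)) : ℂ) * zexp n s) s := by
  have h : HasDerivAt (fun z : ℂ => (-((Real.log ((n : ℝ) + 1) : ℝ)) : ℂ) * z)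
      ((-((Real.log ((n : ℝ) + 1) : ℝ)) : ℂ)) s := by
    simpa using (hasDerivAt_id s).const_mul ((-((Real.log ((n : ℝ) + 1) : ℝ)) : ℂ))
  have h2 := h.cexp
  have h3 : (-((Real.log ((n : ℝ) + 1) : ℝ)) : ℂ) * zexp n s
      = Complex.exp ((-((Real.log ((n : ℝ) + 1) : ℝ)) : ℂ) * s)
        * (-((Real.log ((n : ℝ) + 1) : ℝ)) : ℂ) := by
    rw [zexp]; ring
  rw [h3]
  exact h2

lemma zC_differentiableAt {σ : ℝ} (hσ : 1 < σ) {s : ℂ} (hs : σ < s.re) :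
    DifferentiableAt ℂ zC s := by
  have hopen : IsOpen {z : ℂ | σ < z.re} := isOpen_lt continuous_const Complex.continuous_re
  have hconn : IsPreconnected {z : ℂ | σ < z.re} :=
    (convex_halfSpace_re_gt σ).isPreconnected
  have hbound : ∀ (n : ℕ), ∀ y ∈ {z : ℂ | σ < z.re},
      ‖((-((Real.log ((n : ℝ) + 1) : ℝ)) : ℂ) * zexp n y) •
        lp.single (E := fun _ : ℕ => ℂ) 1 n (1 : ℂ)‖
      ≤ Real.log ((n : ℝ) + 1) * ((n : ℝ) + 1) ^ (-σ) := by
    intro n y hy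
    rw [norm_smul, znorm_single, mul_one, norm_mul, znorm_zexp]
    have h1 : ‖(-((Real.log ((n : ℝ) + 1) : ℝ)) : ℂ)‖ = Real.log ((n : ℝ) + 1) := by
      rw [norm_neg, Complex.norm_real, Real.norm_eq_abs, abs_of_nonneg]
      exact Real.log_nonneg (by have : (0:ℝ) ≤ (n:ℝ) := Nat.cast_nonneg n; linarith)
    rw [h1]
    have h2 : ((n : ℝ) + 1) ^ (-y.re) ≤ ((n : ℝ) + 1) ^ (-σ) :=
      Real.rpow_le_rpow_of_exponent_le (by have : (0:ℝ) ≤ (n:ℝ) := Nat.cast_nonneg n; linarith)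
        (by have := hy; simp only [Set.mem_setOf_eq] at this; linarith)
    exact mul_le_mul_of_nonneg_left h2
      (Real.log_nonneg (by have : (0:ℝ) ≤ (n:ℝ) := Nat.cast_nonneg n; linarith))
  have hmem : ((σ + 1 : ℝ) : ℂ) ∈ {z : ℂ | σ < z.re} := by
    simp only [Set.mem_setOf_eq, Complex.ofReal_re]; linarith
  have hsum0 : Summable (fun n : ℕ =>
      zexp n ((σ + 1 : ℝ) : ℂ) • lp.single (E := fun _ : ℕ => ℂ) 1 n (1 : ℂ)) :=
    zc_summable (by rw [Complex.ofReal_re]; linarith)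
  have hderiv := hasDerivAt_tsum_of_isPreconnected
    (g := fun (n : ℕ) (y : ℂ) => zexp n y • lp.single (E := fun _ : ℕ => ℂ) 1 n (1 : ℂ))
    (g' := fun (n : ℕ) (y : ℂ) => ((-((Real.log ((n : ℝ) + 1) : ℝ)) : ℂ) * zexp n y) •
      lp.single (E := fun _ : ℕ => ℂ) 1 n (1 : ℂ))
    (zsummable_log_rpow hσ) hopen hconn
    (fun n y _ => by exact (zexp_hasDerivAt n y).smul_const (lp.single (E := fun _ : ℕ => ℂ) 1 n (1 : ℂ)))
    hbound hmem hsum0 hs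
  exact hderiv.differentiableAt

lemma zC_analyticAt {s₀ : ℂ} (hs : 1 < s₀.re) : AnalyticAt ℂ zC s₀ := by
  have hσ : 1 < (1 + s₀.re) / 2 := by linarith
  have hmem : (1 + s₀.re) / 2 < s₀.re := by linarith
  have hdiff : DifferentiableOn ℂ zC {z : ℂ | (1 + s₀.re) / 2 < z.re} := fun z hz =>
    (zC_differentiableAt hσ hz).differentiableWithinAt
  exact (hdiff.analyticOnNhd (isOpen_lt continuous_const Complex.continuous_re)) s₀ hmem

lemma za_summable (a : lp (fun _ : ℕ => ℂ) 1) : Summable (fun n => ‖a n‖) := by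
  have h := (lp.memℓp a).summable (p := 1) (by simp)
  simpa using h

lemma znorm_l1 (a : lp (fun _ : ℕ => ℂ) 1) : ∑' n, ‖a n‖ = ‖a‖ := by
  have h := lp.hasSum_norm (p := 1) (by simp) a
  simpa using h.tsum_eq

lemma zmul_summable (b : lp (fun _ : ℕ => ℂ) ∞) (a : lp (fun _ : ℕ => ℂ) 1) :
    Summable (fun n => ‖b n * a n‖) := by
  refine Summable.of_nonneg_of_le (fun n => norm_nonneg _) (fun n => ?_)
    ((za_summable a).mul_left ‖b‖)
  rw [norm_mul]
  exact mul_le_mul_of_nonneg_right (lp.norm_apply_le_norm ENNReal.top_ne_zero b n)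
    (norm_nonneg _)

/-- The `ℓ∞ × ℓ¹` pairing as a continuous bilinear map. -/
def zPair : lp (fun _ : ℕ => ℂ) ∞ →L[ℂ] lp (fun _ : ℕ => ℂ) 1 →L[ℂ] ℂ :=
  LinearMap.mkContinuous₂
    (LinearMap.mk₂ ℂ (fun b a => ∑' n, b n * a n)
      (fun b b' a => by
        rw [← Summable.tsum_add ((zmul_summable b a).of_norm) ((zmul_summable b' a).of_norm)]
        exact tsum_congr fun n => by
          rw [congrFun (lp.coeFn_add b b') n, Pi.add_apply, add_mul])
      (fun c b a => by
        rw [smul_eq_mul, ← tsum_mul_left]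
        exact tsum_congr fun n => by
          rw [congrFun (lp.coeFn_smul c b) n, Pi.smul_apply, smul_eq_mul, mul_assoc])
      (fun b a a' => by
        rw [← Summable.tsum_add ((zmul_summable b a).of_norm) ((zmul_summable b a').of_norm)]
        exact tsum_congr fun n => by
          rw [congrFun (lp.coeFn_add a a') n, Pi.add_apply, mul_add])
      (fun c b a => by
        rw [smul_eq_mul, ← tsum_mul_left]
        exact tsum_congr fun n => by
          rw [congrFun (lp.coeFn_smul c a) n, Pi.smul_apply, smul_eq_mul]
          ring))
    1
    (fun b a => by
      have h1 : ‖∑' n, b n * a n‖ ≤ ∑' n, ‖b n * a n‖ :=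
        norm_tsum_le_tsum_norm (zmul_summable b a)
      have h2 : ∑' n, ‖b n * a n‖ ≤ ∑' n, ‖b‖ * ‖a n‖ := by
        refine Summable.tsum_le_tsum (fun n => ?_) (zmul_summable b a) ((za_summable a).mul_left ‖b‖)
        rw [norm_mul]
        exact mul_le_mul_of_nonneg_right (lp.norm_apply_le_norm ENNReal.top_ne_zero b n)
          (norm_nonneg _)
      have h3 : ∑' n, ‖b‖ * ‖a n‖ = ‖b‖ * ‖a‖ := by rw [tsum_mul_left, znorm_l1]
      calc ‖∑' n, b n * a n‖ ≤ ∑' n, ‖b‖ * ‖a n‖ := le_trans h1 h2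
        _ = 1 * ‖b‖ * ‖a‖ := by rw [h3, one_mul])

lemma zPair_apply (b : lp (fun _ : ℕ => ℂ) ∞) (a : lp (fun _ : ℕ => ℂ) 1) :
    zPair b a = ∑' n, b n * a n := rfl

lemma zre_pos {u : lp (fun _ : ℕ => ℂ) ∞} (hu : ‖u - 1‖ < 1) (n : ℕ) : 0 < (u n).re := by
  have h1 : ‖(u - 1) n‖ ≤ ‖u - 1‖ := lp.norm_apply_le_norm ENNReal.top_ne_zero (u - 1) n
  have h2 : (u - 1) n = u n - 1 := by
    rw [congrFun (lp.coeFn_sub u 1) n, Pi.sub_apply,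
      congrFun (lp.infty_coeFn_one (B := fun _ : ℕ => ℂ)) n]
    rfl
  have h3 : |(u n).re - 1| ≤ ‖u n - 1‖ := by
    have h := Complex.abs_re_le_norm (u n - 1)
    simpa [Complex.sub_re, Complex.one_re] using h
  have h4 := abs_lt.mp (lt_of_le_of_lt h3 (by rw [← h2]; exact lt_of_le_of_lt h1 hu))
  linarith [h4.1]

lemma zne_zero {u : lp (fun _ : ℕ => ℂ) ∞} (hu : ‖u - 1‖ < 1) (n : ℕ) : u n ≠ 0 := by
  intro h
  have := zre_pos hu n
  rw [h] at this
  simp at this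

lemma zG_apply {u : lp (fun _ : ℕ => ℂ) ∞} (hu : ‖u - 1‖ < 1) (s : ℂ) (n : ℕ) :
    (NormedSpace.exp (s • zLog u)) n = Complex.exp (s * Complex.log (u n)) := by
  have h : zEvalRH n (NormedSpace.exp (s • zLog u))
      = NormedSpace.exp (zEvalRH n (s • zLog u)) :=
    NormedSpace.map_exp (zEvalRH n) (zEvalRH_continuous n) (s • zLog u)
  have h2 : zEvalRH n (s • zLog u) = s * Complex.log (u n) := by
    show (s • zLog u) n = _
    rw [congrFun (lp.coeFn_smul s (zLog u)) n, Pi.smul_apply, smul_eq_mul, zLog_apply hu n]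
  show zEvalRH n (NormedSpace.exp (s • zLog u)) = _
  rw [h, h2, ← Complex.exp_eq_exp_ℂ]

lemma zterm_eq {u : lp (fun _ : ℕ => ℂ) ∞} (hu : ‖u - 1‖ < 1) (s : ℂ) (n : ℕ) :
    (u n / ((n : ℂ) + 1)) ^ s = Complex.exp (s * Complex.log (u n)) * zexp n s := by
  have hne : u n ≠ 0 := zne_zero hu n
  have hpos : (0 : ℝ) < ((n : ℝ) + 1)⁻¹ := by positivity
  have hc : ((((n : ℝ) + 1) : ℝ) : ℂ) = (n : ℂ) + 1 := by push_cast; ring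
  have hrepr : u n / ((n : ℂ) + 1) = ((((n : ℝ) + 1)⁻¹ : ℝ) : ℂ) * u n := by
    rw [Complex.ofReal_inv, hc, div_eq_inv_mul]
  rw [hrepr, Complex.cpow_def_of_ne_zero
    (mul_ne_zero (by exact_mod_cast ne_of_gt hpos) hne)]
  rw [Complex.log_ofReal_mul hpos hne, Real.log_inv]
  rw [add_mul, Complex.exp_add, zexp, mul_comm s (Complex.log (u n)), mul_comm]
  congr 2
  push_cast
  ring

lemma zterm_eq' {b u : lp (fun _ : ℕ => ℂ) ∞} (hu : ‖u - 1‖ < 1) (s : ℂ) (n : ℕ) :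
    b n * (u n / ((n : ℂ) + 1)) ^ s
      = (b * NormedSpace.exp (s • zLog u)) n * zexp n s := by
  rw [congrFun (lp.infty_coeFn_mul b _) n, Pi.mul_apply, zG_apply hu s n,
    zterm_eq hu s n, mul_assoc]

lemma zsummable_main {b u : lp (fun _ : ℕ => ℂ) ∞} (hu : ‖u - 1‖ < 1) {s : ℂ} (hs : 1 < s.re) :
    Summable fun n : ℕ => ‖b n * (u n / ((n : ℂ) + 1)) ^ s‖ := by
  refine Summable.of_nonneg_of_le (fun n => norm_nonneg _) (fun n => ?_)
    ((zsummable_rpow hs).mul_left ‖b * NormedSpace.exp (s • zLog u)‖)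
  rw [zterm_eq' hu s n, norm_mul, znorm_zexp]
  exact mul_le_mul_of_nonneg_right
    (lp.norm_apply_le_norm ENNReal.top_ne_zero _ n) (Real.rpow_nonneg (by positivity) _)

lemma zfun_eq {b u : lp (fun _ : ℕ => ℂ) ∞} {s : ℂ} (hu : ‖u - 1‖ < 1) (hs : 1 < s.re) :
    ∑' n : ℕ, b n * (u n / ((n : ℂ) + 1)) ^ s
      = zPair (b * NormedSpace.exp (s • zLog u)) (zC s) := by
  rw [zPair_apply]
  exact tsum_congr fun n => by rw [zC_apply hs n, zterm_eq' hu s n]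

end ZetaAux


/-- The Euler–Riemann zeta function `ζ(b, z, s) = ∑ b n (z n)^s`, written with
`z n = u n / (n+1)` for `u` in the unit ball centered at the constant sequence `1`,
converges absolutely and is analytic in the triple `(b, u, s)` on
`ℓ∞ × B(1,1) × H₁`. -/
theorem zeta_ER_analytic :
    (∀ (b u : lp (fun _ : ℕ => ℂ) ∞) (s : ℂ), ‖u - 1‖ < 1 → 1 < s.re →
      Summable fun n : ℕ => ‖b n * (u n / ((n : ℂ) + 1)) ^ s‖) ∧
    AnalyticOnNhd ℂ
      (fun p : lp (fun _ : ℕ => ℂ) ∞ × lp (fun _ : ℕ => ℂ) ∞ × ℂ =>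
        ∑' n : ℕ, p.1 n * (p.2.1 n / ((n : ℂ) + 1)) ^ p.2.2)
      {p : lp (fun _ : ℕ => ℂ) ∞ × lp (fun _ : ℕ => ℂ) ∞ × ℂ |
        ‖p.2.1 - 1‖ < 1 ∧ 1 < p.2.2.re} := by
  constructor
  · intro b u s hu hs
    exact zsummable_main hu hs
  · intro p hp
    obtain ⟨hu, hs⟩ := hp
    have hSopen : IsOpen {p : lp (fun _ : ℕ => ℂ) ∞ × lp (fun _ : ℕ => ℂ) ∞ × ℂ |
        ‖p.2.1 - 1‖ < 1 ∧ 1 < p.2.2.re} := by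
      refine IsOpen.inter ?_ ?_
      · exact isOpen_lt (Continuous.norm (continuous_snd.fst.sub continuous_const))
          continuous_const
      · exact isOpen_lt continuous_const (Complex.continuous_re.comp continuous_snd.snd)
    have h21 : AnalyticAt ℂ (fun q : lp (fun _ : ℕ => ℂ) ∞ × lp (fun _ : ℕ => ℂ) ∞ × ℂ =>
        q.2.1) p := analyticAt_fst.comp analyticAt_snd
    have h22 : AnalyticAt ℂ (fun q : lp (fun _ : ℕ => ℂ) ∞ × lp (fun _ : ℕ => ℂ) ∞ × ℂ =>
        q.2.2) p := analyticAt_snd.comp analyticAt_snd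
    have hlog : AnalyticAt ℂ (fun q : lp (fun _ : ℕ => ℂ) ∞ × lp (fun _ : ℕ => ℂ) ∞ × ℂ =>
        zLog q.2.1) p := by exact AnalyticAt.comp (g := zLog) (f := fun q : lp (fun _ : ℕ => ℂ) ∞ × lp (fun _ : ℕ => ℂ) ∞ × ℂ => q.2.1) (x := p) (zLog_analyticAt hu) h21
    have hsmul : AnalyticAt ℂ (fun q : lp (fun _ : ℕ => ℂ) ∞ × lp (fun _ : ℕ => ℂ) ∞ × ℂ =>
        q.2.2 • zLog q.2.1) p := h22.smul hlog
    have hexp0 : AnalyticAt ℂ (NormedSpace.exp) (p.2.2 • zLog p.2.1) :=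
      NormedSpace.analyticAt_exp_of_mem_ball _ (by
        rw [NormedSpace.expSeries_radius_eq_top ℂ]
        exact Metric.mem_eball.mpr (edist_lt_top _ _))
    have hexp : AnalyticAt ℂ (fun q : lp (fun _ : ℕ => ℂ) ∞ × lp (fun _ : ℕ => ℂ) ∞ × ℂ =>
        NormedSpace.exp (q.2.2 • zLog q.2.1)) p := by exact AnalyticAt.comp (g := NormedSpace.exp) (f := fun q : lp (fun _ : ℕ => ℂ) ∞ × lp (fun _ : ℕ => ℂ) ∞ × ℂ => q.2.2 • zLog q.2.1) (x := p) hexp0 hsmul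
    have hmul : AnalyticAt ℂ (fun q : lp (fun _ : ℕ => ℂ) ∞ × lp (fun _ : ℕ => ℂ) ∞ × ℂ =>
        q.1 * NormedSpace.exp (q.2.2 • zLog q.2.1)) p := analyticAt_fst.mul hexp
    have hc : AnalyticAt ℂ (fun q : lp (fun _ : ℕ => ℂ) ∞ × lp (fun _ : ℕ => ℂ) ∞ × ℂ =>
        zC q.2.2) p := by exact AnalyticAt.comp (g := zC) (f := fun q : lp (fun _ : ℕ => ℂ) ∞ × lp (fun _ : ℕ => ℂ) ∞ × ℂ => q.2.2) (x := p) (zC_analyticAt hs) h22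
    have hF : AnalyticAt ℂ (fun q : lp (fun _ : ℕ => ℂ) ∞ × lp (fun _ : ℕ => ℂ) ∞ × ℂ =>
        zPair (q.1 * NormedSpace.exp (q.2.2 • zLog q.2.1)) (zC q.2.2)) p :=
      (zPair.analyticAt_bilinear _).comp₂ hmul hc
    refine hF.congr ?_
    refine Filter.eventuallyEq_of_mem (hSopen.mem_nhds ⟨hu, hs⟩) (fun q hq => ?_)
    exact (zfun_eq hq.1 hq.2).symm
end

section
/- Let z : ℕ → ℂ with z n ≠ 0 for all n and sup_n (n+1)·|z n| < ∞, and let θ : ℕ → ℝ be bounded with z n = |z n| · exp(i·θ n) for all n (a bounded choice of arguments). Then the function g(b, u, s) := Σ'_{n ∈ ℕ} b n · exp(s·(log|z n| + i·θ n)) · (1 + u n)^s, where (1 + u n)^s is the principal-branch power (well defined since ‖u‖ < 1 forces Re(1 + u n) > 0), is analytic on the open set {(b, u, s) ∈ ℓ∞ × ℓ∞ × ℂ : ‖u‖ < 1 and Re s > 1}. -/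
open scoped ENNReal
open Complex

noncomputable section ZetaAux

abbrev Linf := lp (fun _ : ℕ => ℂ) ∞
abbrev Lone := lp (fun _ : ℕ => ℂ) 1

/-- Coordinate evaluation as a continuous linear map. -/
def evalCLM (p : ℝ≥0∞) [Fact (1 ≤ p)] (hp : p ≠ 0) (n : ℕ) :
    lp (fun _ : ℕ => ℂ) p →L[ℂ] ℂ :=
  LinearMap.mkContinuous
    { toFun := fun f => f n
      map_add' := fun f g => by
        show (f + g) n = f n + g n
        rw [lp.coeFn_add]; rfl
      map_smul' := fun c f => by
        show (c • f) n = c • f n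
        rw [lp.coeFn_smul]; rfl }
    1 (fun f => by
      show ‖f n‖ ≤ 1 * ‖f‖
      rw [one_mul]
      exact lp.norm_apply_le_norm hp f n)

@[simp] lemma evalCLM_apply (p : ℝ≥0∞) [Fact (1 ≤ p)] (hp : p ≠ 0) (n : ℕ)
    (f : lp (fun _ : ℕ => ℂ) p) : evalCLM p hp n f = f n := rfl

lemma summable_norm_lone (v : Lone) : Summable fun n => ‖v n‖ := by
  have := lp.hasSum_norm (p := 1) (by norm_num) v
  simp only [ENNReal.toReal_one, Real.rpow_one] at this
  exact this.summable

lemma norm_lone_eq (v : Lone) : ‖v‖ = ∑' n, ‖v n‖ := by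
  have := lp.hasSum_norm (p := 1) (by norm_num) v
  simp only [ENNReal.toReal_one, Real.rpow_one] at this
  exact this.tsum_eq.symm

lemma summable_norm_mul_pair (v : Lone) (a : Linf) : Summable fun n => ‖v n * a n‖ := by
  apply Summable.of_nonneg_of_le (fun n => norm_nonneg _) (fun n => ?_)
    ((summable_norm_lone v).mul_right ‖a‖)
  rw [norm_mul]
  exact mul_le_mul_of_nonneg_left (lp.norm_apply_le_norm ENNReal.top_ne_zero a n) (norm_nonneg _)

lemma summable_mul_pair (v : Lone) (a : Linf) : Summable fun n => v n * a n :=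
  (summable_norm_mul_pair v a).of_norm

/-- The `ℓ¹`–`ℓ∞` duality pairing. -/
def pairL : Lone →L[ℂ] Linf →L[ℂ] ℂ :=
  LinearMap.mkContinuous₂
    (LinearMap.mk₂ ℂ (fun v a => ∑' n, v n * a n)
      (fun v w a => by
        show (∑' n, (v + w) n * a n) = (∑' n, v n * a n) + ∑' n, w n * a n
        have : (fun n => (v + w) n * a n) = fun n => v n * a n + w n * a n := by
          funext n; rw [lp.coeFn_add]; simp [add_mul]
        rw [this, Summable.tsum_add (summable_mul_pair v a) (summable_mul_pair w a)])
      (fun c v a => by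
        show (∑' n, (c • v) n * a n) = c • ∑' n, v n * a n
        have : (fun n => (c • v) n * a n) = fun n => c * (v n * a n) := by
          funext n; rw [lp.coeFn_smul]; simp [mul_assoc]
        rw [this, tsum_mul_left]; rfl)
      (fun v a b => by
        show (∑' n, v n * (a + b) n) = (∑' n, v n * a n) + ∑' n, v n * b n
        have : (fun n => v n * (a + b) n) = fun n => v n * a n + v n * b n := by
          funext n; rw [lp.coeFn_add]; simp [mul_add]
        rw [this, Summable.tsum_add (summable_mul_pair v a) (summable_mul_pair v b)])
      (fun c v a => by
        show (∑' n, v n * (c • a) n) = c • ∑' n, v n * a n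
        have : (fun n => v n * (c • a) n) = fun n => c * (v n * a n) := by
          funext n; rw [lp.coeFn_smul]; simp; ring
        rw [this, tsum_mul_left]; rfl))
    1 (fun v a => by
      show ‖∑' n, v n * a n‖ ≤ 1 * ‖v‖ * ‖a‖
      rw [one_mul]
      calc ‖∑' n, v n * a n‖ ≤ ∑' n, ‖v n * a n‖ :=
            norm_tsum_le_tsum_norm (summable_norm_mul_pair v a)
        _ ≤ ∑' n, ‖v n‖ * ‖a‖ := by
            apply Summable.tsum_le_tsum (fun n => ?_) (summable_norm_mul_pair v a)
              ((summable_norm_lone v).mul_right ‖a‖)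
            rw [norm_mul]
            exact mul_le_mul_of_nonneg_left (lp.norm_apply_le_norm ENNReal.top_ne_zero a n)
              (norm_nonneg _)
        _ = ‖v‖ * ‖a‖ := by rw [tsum_mul_right, norm_lone_eq])

@[simp] lemma pairL_apply (v : Lone) (a : Linf) : pairL v a = ∑' n, v n * a n := rfl


set_option maxHeartbeats 1000000
set_option synthInstance.maxHeartbeats 200000

lemma linf_coeFn_pow (f : Linf) (k : ℕ) (n : ℕ) : (f ^ k) n = (f n) ^ k := by
  induction k with
  | zero => rfl
  | succ k ih =>
    rw [pow_succ, pow_succ, ← ih]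
    have := lp.infty_coeFn_mul (f ^ k) f
    exact congrFun this n

/-- Principal branch logarithm on the unit ball of `ℓ∞`, as a power series sum. -/
def logA (y : Linf) : Linf := ∑' k : ℕ, ((-1) ^ (k + 1) / k : ℂ) • y ^ k

lemma norm_logA_coeff_le (k : ℕ) : ‖((-1) ^ (k + 1) / k : ℂ)‖ ≤ 1 := by
  rcases Nat.eq_zero_or_pos k with rfl | hk
  · simp
  · rw [norm_div, norm_pow, norm_neg, norm_one, one_pow, Complex.norm_natCast]
    rw [div_le_one (by exact_mod_cast hk)]
    exact_mod_cast hk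

lemma norm_logA_term_le {y : Linf} (k : ℕ) :
    ‖((-1) ^ (k + 1) / k : ℂ) • y ^ k‖ ≤ ‖y‖ ^ k := by
  rw [norm_smul]
  rcases Nat.eq_zero_or_pos k with rfl | hk
  · simp
  · calc ‖((-1) ^ (k + 1) / k : ℂ)‖ * ‖y ^ k‖ ≤ 1 * ‖y‖ ^ k :=
        mul_le_mul (norm_logA_coeff_le k) (norm_pow_le' y hk) (norm_nonneg _) one_pos.le
      _ = ‖y‖ ^ k := one_mul _

lemma summable_logA_terms {y : Linf} (hy : ‖y‖ < 1) :
    Summable fun k : ℕ => ((-1) ^ (k + 1) / k : ℂ) • y ^ k := by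
  apply Summable.of_norm
  exact Summable.of_nonneg_of_le (fun k => norm_nonneg _) (fun k => norm_logA_term_le k)
    (summable_geometric_of_lt_one (norm_nonneg y) hy)

lemma logA_apply {y : Linf} (hy : ‖y‖ < 1) (n : ℕ) :
    logA y n = Complex.log (1 + y n) := by
  have h1 : ‖y n‖ < 1 := lt_of_le_of_lt (lp.norm_apply_le_norm ENNReal.top_ne_zero y n) hy
  rw [logA]
  rw [show ((∑' k : ℕ, ((-1) ^ (k + 1) / k : ℂ) • y ^ k : Linf) n)
      = evalCLM ∞ ENNReal.top_ne_zero n (∑' k : ℕ, ((-1) ^ (k + 1) / k : ℂ) • y ^ k) from rfl]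
  rw [(evalCLM ∞ ENNReal.top_ne_zero n).map_tsum (summable_logA_terms hy)]
  have hterm : ∀ k : ℕ, evalCLM ∞ ENNReal.top_ne_zero n (((-1) ^ (k + 1) / k : ℂ) • y ^ k)
      = (-1) ^ (k + 1) * (y n) ^ k / k := by
    intro k
    rw [map_smul]
    simp only [evalCLM_apply, smul_eq_mul]
    rw [linf_coeFn_pow]
    ring
  rw [tsum_congr hterm]
  exact (hasSum_taylorSeries_log h1).tsum_eq

/-- The power series of `logA`. -/
def logSeries : FormalMultilinearSeries ℂ Linf Linf := fun k =>
  ((-1) ^ (k + 1) / k : ℂ) • ContinuousMultilinearMap.mkPiAlgebraFin ℂ k Linf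

lemma hasFPowerSeries_logA : HasFPowerSeriesOnBall logA logSeries 0 1 := by
  constructor
  · apply FormalMultilinearSeries.le_radius_of_bound _ 1 (r := 1)
    intro k
    rw [NNReal.coe_one, one_pow, mul_one]
    rw [show logSeries k
        = ((-1) ^ (k + 1) / k : ℂ) • ContinuousMultilinearMap.mkPiAlgebraFin ℂ k Linf from rfl]
    apply le_trans (ContinuousMultilinearMap.opNorm_smul_le _ _)
    apply mul_le_one₀ (norm_logA_coeff_le k) (norm_nonneg _)
    apply le_trans ContinuousMultilinearMap.norm_mkPiAlgebraFin_le
    simp [norm_one]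
  · exact one_pos
  · intro y hy
    rw [EMetric.mem_ball, edist_zero_right] at hy
    have hy' : ‖y‖ < 1 := by
      rw [← ENNReal.coe_one] at hy
      exact_mod_cast hy
    have hterm : ∀ k : ℕ, logSeries k (fun _ => y) = ((-1) ^ (k + 1) / k : ℂ) • y ^ k := by
      intro k
      rw [show logSeries k
          = ((-1) ^ (k + 1) / k : ℂ) • ContinuousMultilinearMap.mkPiAlgebraFin ℂ k Linf from rfl]
      simp only [ContinuousMultilinearMap.smul_apply,
        ContinuousMultilinearMap.mkPiAlgebraFin_apply]
      congr 1
      rw [List.ofFn_const, List.prod_replicate]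
    simp only [zero_add, hterm]
    exact (summable_logA_terms hy').hasSum

lemma analyticAt_logA {u : Linf} (hu : ‖u‖ < 1) : AnalyticAt ℂ logA u := by
  apply hasFPowerSeries_logA.analyticAt_of_mem
  rw [EMetric.mem_ball, edist_zero_right, ← ENNReal.coe_one]
  exact_mod_cast hu

lemma expA_apply (x : Linf) (n : ℕ) :
    (NormedSpace.exp x) n = Complex.exp (x n) := by
  rw [NormedSpace.exp_eq_tsum ℂ]
  have hs : Summable fun k : ℕ => ((k.factorial : ℂ))⁻¹ • x ^ k :=
    NormedSpace.expSeries_summable' (𝕂 := ℂ) x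
  rw [show ((∑' k : ℕ, ((k.factorial : ℂ))⁻¹ • x ^ k : Linf) n)
      = evalCLM ∞ ENNReal.top_ne_zero n (∑' k : ℕ, ((k.factorial : ℂ))⁻¹ • x ^ k) from rfl]
  rw [(evalCLM ∞ ENNReal.top_ne_zero n).map_tsum hs]
  have hterm : ∀ k : ℕ, evalCLM ∞ ENNReal.top_ne_zero n (((k.factorial : ℂ))⁻¹ • x ^ k)
      = ((k.factorial : ℂ))⁻¹ • (x n) ^ k := by
    intro k
    rw [map_smul]
    simp only [evalCLM_apply, smul_eq_mul]
    rw [linf_coeFn_pow]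
  rw [tsum_congr hterm, Complex.exp_eq_exp_ℂ, NormedSpace.exp_eq_tsum ℂ]

lemma analyticAt_expA (x : Linf) : AnalyticAt ℂ (NormedSpace.exp) x := by
  apply NormedSpace.analyticAt_exp_of_mem_ball
  rw [NormedSpace.expSeries_radius_eq_top]
  exact edist_lt_top _ _


lemma norm_W_term (c : ℕ → ℂ) (s : ℂ) (n : ℕ) :
    ‖Complex.exp (s * c n) • (lp.single 1 n (1 : ℂ) : Lone)‖ = ‖Complex.exp (s * c n)‖ := by
  rw [norm_smul]
  have hs := lp.norm_single (E := fun _ : ℕ => ℂ) (p := 1)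
    (by simp : (0:ℝ≥0∞) < 1) n (1:ℂ)
  simp only [norm_one] at hs
  rw [hs, mul_one]

lemma analyticAt_W (c : ℕ → ℂ) (s₀ : ℂ) (r : ℝ) (hr : 0 < r) (u : ℕ → ℝ) (hu : Summable u)
    (hb : ∀ n : ℕ, ∀ s ∈ Metric.ball s₀ r, ‖Complex.exp (s * c n)‖ ≤ u n) :
    AnalyticAt ℂ (fun s : ℂ => ∑' n : ℕ, Complex.exp (s * c n) • lp.single 1 n (1 : ℂ) : ℂ → Lone)
      s₀ := by
  have hd : DifferentiableOn ℂ
      (fun s : ℂ => ∑' n : ℕ, Complex.exp (s * c n) • lp.single 1 n (1 : ℂ) : ℂ → Lone)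
      (Metric.ball s₀ r) := by
    apply differentiableOn_tsum_of_summable_norm hu ?_ Metric.isOpen_ball ?_
    · intro n
      exact (((differentiable_id.mul_const (c n)).cexp).smul_const _).differentiableOn
    · intro n s hs
      rw [norm_W_term]
      exact hb n s hs
  exact hd.analyticAt (Metric.ball_mem_nhds _ hr)

lemma summable_W_terms (c : ℕ → ℂ) (s : ℂ) (u : ℕ → ℝ) (hu : Summable u)
    (hb : ∀ n : ℕ, ‖Complex.exp (s * c n)‖ ≤ u n) :
    Summable fun n : ℕ => Complex.exp (s * c n) • lp.single 1 n (1 : ℂ) := by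
  apply Summable.of_norm
  apply Summable.of_nonneg_of_le (fun n => norm_nonneg _) (fun n => ?_) hu
  rw [norm_W_term]
  exact hb n

lemma W_apply (c : ℕ → ℂ) (s : ℂ) (u : ℕ → ℝ) (hu : Summable u)
    (hb : ∀ n : ℕ, ‖Complex.exp (s * c n)‖ ≤ u n) (m : ℕ) :
    ((∑' n : ℕ, Complex.exp (s * c n) • lp.single 1 n (1 : ℂ) : Lone) : ∀ _ : ℕ, ℂ) m
      = Complex.exp (s * c m) := by
  have hsum := summable_W_terms c s u hu hb
  rw [show ((∑' n : ℕ, Complex.exp (s * c n) • lp.single 1 n (1 : ℂ) : Lone) m)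
      = evalCLM 1 one_ne_zero m (∑' n : ℕ, Complex.exp (s * c n) • lp.single 1 n (1 : ℂ)) from rfl]
  rw [(evalCLM 1 one_ne_zero m).map_tsum hsum]
  have hterm : ∀ n : ℕ, evalCLM 1 one_ne_zero m (Complex.exp (s * c n) • lp.single 1 n (1 : ℂ))
      = Complex.exp (s * c n) * ((lp.single 1 n (1 : ℂ) : Lone) m) := by
    intro n
    rw [map_smul]
    simp [smul_eq_mul]
  rw [tsum_congr hterm]
  rw [tsum_eq_single m ?_]
  · rw [lp.single_apply_self, mul_one]
  · intro n hn
    rw [lp.single_apply_ne 1 n _ (Ne.symm hn), mul_zero]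


lemma exp_bound_exists (z : ℕ → ℂ) (hz : ∀ n, z n ≠ 0) (M : ℝ)
    (hM : ∀ n : ℕ, ((n : ℝ) + 1) * ‖z n‖ ≤ M)
    (θ : ℕ → ℝ) (Θ : ℝ) (hΘ : ∀ n : ℕ, |θ n| ≤ Θ)
    (s₀ : ℂ) (hs₀ : 1 < s₀.re) :
    ∃ r > 0, ∃ u : ℕ → ℝ, Summable u ∧ ∀ n : ℕ, ∀ s ∈ Metric.ball s₀ r,
      ‖Complex.exp (s * ((Real.log (‖z n‖) : ℂ) + Complex.I * θ n))‖ ≤ u n := by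
  set M' : ℝ := max M 1 with hM'def
  have hM1 : 1 ≤ M' := le_max_right _ _
  have hM0 : 0 < M' := lt_of_lt_of_le one_pos hM1
  have hΘ0 : 0 ≤ Θ := le_trans (abs_nonneg _) (hΘ 0)
  set r : ℝ := (s₀.re - 1) / 2 with hrdef
  have hr : 0 < r := by simp only [hrdef]; linarith
  set a : ℝ := s₀.re - r with hadef
  have ha : 1 < a := by simp only [hadef, hrdef]; linarith
  have ha0 : 0 < a := by linarith
  set A : ℝ := s₀.re + r with hAdef
  have haA : a ≤ A := by simp only [hadef, hAdef]; linarith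
  set T : ℝ := |s₀.im| + r with hTdef
  have hT0 : 0 ≤ T := by positivity
  have hlogM0 : 0 ≤ Real.log M' := Real.log_nonneg hM1
  refine ⟨r, hr, fun n => M' ^ a * ((n : ℝ) + 1) ^ (-a) * Real.exp ((A - a) * Real.log M')
    * Real.exp (T * Θ), ?_, ?_⟩
  · have h1 : Summable (fun n : ℕ => 1 / (n : ℝ) ^ a) := Real.summable_one_div_nat_rpow.mpr ha
    have h2 : Summable (fun n : ℕ => 1 / ((n : ℝ) + 1) ^ a) := by
      have := (summable_nat_add_iff (f := fun n : ℕ => 1 / (n : ℝ) ^ a) 1).mpr h1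
      refine this.congr fun n => ?_
      push_cast
      ring_nf
    have h3 : Summable (fun n : ℕ => ((n : ℝ) + 1) ^ (-a)) := by
      refine h2.congr fun n => ?_
      rw [Real.rpow_neg (by positivity), one_div]
    apply Summable.mul_right
    apply Summable.mul_right
    exact h3.mul_left _
  · intro n s hs
    have habsz : 0 < ‖z n‖ := by
      exact norm_pos_iff.mpr (hz n)
    set L : ℝ := Real.log (‖z n‖) with hLdef
    have hdist : ‖s - s₀‖ < r := by
      rw [← Complex.dist_eq]; exact hs
    have hre : |s.re - s₀.re| < r := by
      have := Complex.abs_re_le_norm (s - s₀)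
      rw [Complex.sub_re] at this
      linarith
    have him : |s.im - s₀.im| < r := by
      have := Complex.abs_im_le_norm (s - s₀)
      rw [Complex.sub_im] at this
      linarith
    have hre1 : a ≤ s.re := by
      have := (abs_lt.mp hre).1; simp only [hadef]; linarith
    have hre2 : s.re ≤ A := by
      have := (abs_lt.mp hre).2; simp only [hAdef]; linarith
    have himT : |s.im| ≤ T := by
      calc |s.im| = |(s.im - s₀.im) + s₀.im| := by ring_nf
        _ ≤ |s.im - s₀.im| + |s₀.im| := abs_add_le _ _
        _ ≤ T := by simp only [hTdef]; linarith
    have hwre : (s * ((L : ℂ) + Complex.I * θ n)).re = s.re * L - s.im * θ n := by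
      simp [Complex.mul_re, Complex.add_re, Complex.add_im, Complex.mul_im]
    rw [Complex.norm_exp, hwre]
    have hdecomp : s.re * L - s.im * θ n = a * L + (s.re - a) * L + -(s.im * θ n) := by ring
    rw [hdecomp, Real.exp_add, Real.exp_add]
    have habs' : ‖z n‖ ≤ M' / ((n : ℝ) + 1) := by
      rw [le_div_iff₀ (by positivity)]
      calc ‖z n‖ * ((n : ℝ) + 1) = ((n : ℝ) + 1) * ‖z n‖ := by ring
        _ ≤ M := hM n
        _ ≤ M' := le_max_left _ _
    have habs'' : ‖z n‖ ≤ M' :=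
      le_trans habs' (div_le_self hM0.le (by norm_num : (1:ℝ) ≤ (n:ℝ) + 1))
    have hL : L ≤ Real.log M' := Real.log_le_log habsz habs''
    have e1 : Real.exp (a * L) ≤ M' ^ a * ((n : ℝ) + 1) ^ (-a) := by
      have : Real.exp (a * L) = ‖z n‖ ^ a := by
        rw [Real.rpow_def_of_pos habsz, mul_comm]
      rw [this]
      calc ‖z n‖ ^ a ≤ (M' / ((n : ℝ) + 1)) ^ a :=
            Real.rpow_le_rpow habsz.le habs' ha0.le
        _ = M' ^ a * ((n : ℝ) + 1) ^ (-a) := by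
            rw [Real.div_rpow hM0.le (by positivity), Real.rpow_neg (by positivity),
              div_eq_mul_inv]
    have e2 : Real.exp ((s.re - a) * L) ≤ Real.exp ((A - a) * Real.log M') := by
      apply Real.exp_le_exp.mpr
      rcases le_or_gt L 0 with hL0 | hLpos
      · calc (s.re - a) * L ≤ 0 := mul_nonpos_of_nonneg_of_nonpos (by linarith) hL0
          _ ≤ (A - a) * Real.log M' := mul_nonneg (by linarith) hlogM0
      · exact mul_le_mul (by linarith) hL hLpos.le (by linarith)
    have e3 : Real.exp (-(s.im * θ n)) ≤ Real.exp (T * Θ) := by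
      apply Real.exp_le_exp.mpr
      calc -(s.im * θ n) ≤ |s.im * θ n| := neg_le_abs _
        _ = |s.im| * |θ n| := abs_mul _ _
        _ ≤ T * Θ := mul_le_mul himT (hΘ n) (abs_nonneg _) hT0
    calc Real.exp (a * L) * Real.exp ((s.re - a) * L) * Real.exp (-(s.im * θ n))
        ≤ (M' ^ a * ((n : ℝ) + 1) ^ (-a)) * Real.exp ((A - a) * Real.log M')
          * Real.exp (T * Θ) := by
          apply mul_le_mul ?_ e3 (Real.exp_pos _).le (by positivity)
          exact mul_le_mul e1 e2 (Real.exp_pos _).le (by positivity)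
      _ = M' ^ a * ((n : ℝ) + 1) ^ (-a) * Real.exp ((A - a) * Real.log M')
          * Real.exp (T * Θ) := by ring

end ZetaAux

set_option maxHeartbeats 1000000
set_option synthInstance.maxHeartbeats 400000

/-- Local holomorphy of the analytic continuation of the Euler–Riemann zeta function
at a point `z` off the closure of the coordinate cross, with branch of `(z n)^s`
determined by a bounded choice of arguments `θ`: the function
`g(b, u, s) = ∑ b n · exp(s(log|z n| + iθ n)) · (1 + u n)^s` is analytic on
`{(b, u, s) : ‖u‖ < 1, Re s > 1}`. -/
theorem zeta_ER_continuation_locally_analytic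
    (z : ℕ → ℂ) (hz : ∀ n, z n ≠ 0)
    (hbig : ∃ M : ℝ, ∀ n : ℕ, ((n : ℝ) + 1) * ‖z n‖ ≤ M)
    (θ : ℕ → ℝ) (hθ : ∃ Θ : ℝ, ∀ n : ℕ, |θ n| ≤ Θ)
    (harg : ∀ n : ℕ, z n = (‖z n‖ : ℂ) * Complex.exp (Complex.I * θ n)) :
    AnalyticOnNhd ℂ
      (fun p : lp (fun _ : ℕ => ℂ) ∞ × lp (fun _ : ℕ => ℂ) ∞ × ℂ =>
        ∑' n : ℕ, p.1 n *
          Complex.exp (p.2.2 * (Real.log (‖z n‖) + Complex.I * θ n)) *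
          (1 + p.2.1 n) ^ p.2.2)
      {p : lp (fun _ : ℕ => ℂ) ∞ × lp (fun _ : ℕ => ℂ) ∞ × ℂ |
        ‖p.2.1‖ < 1 ∧ 1 < p.2.2.re} := by
  obtain ⟨M, hM⟩ := hbig
  obtain ⟨Θ, hΘ⟩ := hθ
  -- the branch exponents
  set c : ℕ → ℂ := fun n => (Real.log (‖z n‖) : ℂ) + Complex.I * θ n with hcdef
  -- the `ℓ¹`-valued Dirichlet series
  set W : ℂ → Lone := fun s => ∑' n : ℕ, Complex.exp (s * c n) • lp.single 1 n (1 : ℂ)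
    with hWdef
  -- the assembled analytic function
  set F : Linf × Linf × ℂ → ℂ := fun p =>
    pairL (W p.2.2) (p.1 * NormedSpace.exp (p.2.2 • logA p.2.1)) with hFdef
  set S : Set (Linf × Linf × ℂ) := {p | ‖p.2.1‖ < 1 ∧ 1 < p.2.2.re} with hSdef
  have hSopen : IsOpen S := by
    apply IsOpen.inter
    · exact isOpen_lt (continuous_norm.comp (continuous_fst.comp continuous_snd))
        continuous_const
    · exact isOpen_lt continuous_const
        (Complex.continuous_re.comp (continuous_snd.comp continuous_snd))
  -- the two functions agree on `S`
  have hEqOn : Set.EqOn F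
      (fun p : Linf × Linf × ℂ =>
        ∑' n : ℕ, p.1 n *
          Complex.exp (p.2.2 * (Real.log (‖z n‖) + Complex.I * θ n)) *
          (1 + p.2.1 n) ^ p.2.2) S := by
    rintro ⟨b, u, s⟩ ⟨hu, hs⟩
    obtain ⟨r, hr, v, hv, hvb⟩ := exp_bound_exists z hz M hM θ Θ hΘ s hs
    have hbs : ∀ n : ℕ, ‖Complex.exp (s * c n)‖ ≤ v n := fun n =>
      hvb n s (Metric.mem_ball_self hr)
    simp only [hFdef, pairL_apply]
    apply tsum_congr
    intro n
    have hWn : (W s) n = Complex.exp (s * c n) := W_apply c s v hv hbs n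
    have hun : ‖u n‖ < 1 := lt_of_le_of_lt (lp.norm_apply_le_norm ENNReal.top_ne_zero u n) hu
    have h1un : (1 : ℂ) + u n ≠ 0 := by
      intro h
      have : ‖u n‖ = 1 := by
        have : (u n : ℂ) = -1 := by linear_combination h
        rw [this]; simp
      exact absurd this (ne_of_lt hun)
    have hmul : (b * NormedSpace.exp (s • logA u)) n
        = b n * (NormedSpace.exp (s • logA u)) n :=
      congrFun (lp.infty_coeFn_mul b (NormedSpace.exp (s • logA u))) n
    have hexpn : (NormedSpace.exp (s • logA u)) n
        = Complex.exp (s * Complex.log (1 + u n)) := by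
      rw [expA_apply]
      congr 1
      have h2 : (s • logA u) n = s • ((logA u) n) := congrFun (lp.coeFn_smul s (logA u)) n
      rw [h2, logA_apply hu n, smul_eq_mul]
    rw [hWn, hmul, hexpn]
    rw [Complex.cpow_def_of_ne_zero h1un]
    rw [show Complex.log (1 + u n) * s = s * Complex.log (1 + u n) from mul_comm _ _]
    ring
  -- analyticity of `F` on `S`
  intro p hp
  obtain ⟨hpu, hps⟩ := hp
  obtain ⟨r, hr, v, hv, hvb⟩ := exp_bound_exists z hz M hM θ Θ hΘ p.2.2 hps
  have hWan : AnalyticAt ℂ W p.2.2 := analyticAt_W c p.2.2 r hr v hv hvb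
  have hproj2 : AnalyticAt ℂ (fun q : Linf × Linf × ℂ => q.2.2) p :=
    analyticAt_snd.comp analyticAt_snd
  have hproj1 : AnalyticAt ℂ (fun q : Linf × Linf × ℂ => q.2.1) p :=
    analyticAt_fst.comp analyticAt_snd
  have hWcomp : AnalyticAt ℂ (fun q : Linf × Linf × ℂ => W q.2.2) p :=
    AnalyticAt.comp (f := fun q : Linf × Linf × ℂ => q.2.2) hWan hproj2
  have hlog : AnalyticAt ℂ (fun q : Linf × Linf × ℂ => logA q.2.1) p :=
    AnalyticAt.comp (f := fun q : Linf × Linf × ℂ => q.2.1) (analyticAt_logA hpu) hproj1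
  have hsmul : AnalyticAt ℂ (fun q : Linf × Linf × ℂ => q.2.2 • logA q.2.1) p :=
    hproj2.smul hlog
  have hexp : AnalyticAt ℂ
      (fun q : Linf × Linf × ℂ => NormedSpace.exp (q.2.2 • logA q.2.1)) p :=
    (analyticAt_expA _).comp hsmul
  have hmul : AnalyticAt ℂ
      (fun q : Linf × Linf × ℂ => q.1 * NormedSpace.exp (q.2.2 • logA q.2.1)) p :=
    analyticAt_fst.mul hexp
  have hFan : AnalyticAt ℂ F p :=
    (pairL.analyticAt_bilinear _).comp₂ hWcomp hmul
  exact hFan.congr (hEqOn.eventuallyEq_of_mem (hSopen.mem_nhds ⟨hpu, hps⟩))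
end

section
/- Fix b : ℕ → ℂ bounded, z : ℕ → ℂ with z n ≠ 0 for all n, ε := ⨅_n (n+1)·|z n| > 0 and sup_n (n+1)·|z n| < ∞, and a bounded θ : ℕ → ℝ with z n = |z n|·exp(i·θ n) for all n; write z_n^c := exp(c·(log|z n| + i·θ n)). Let η ≥ 0, let β satisfy 0 < β < ε, let s ∈ ℂ with Re s > 1 − η, and let w : ℕ → ℂ satisfy |w n| ≤ β/(n+1)^{1+η} for all n. Then the doubly indexed family over (m, n) ∈ ℕ × ℕ given by ((∏_{i=0}^{m} (s − i))/(m+1)!) · b n · z_n^{s−(m+1)} · (w n)^{m+1} is absolutely summable (the family of its norms is summable over ℕ × ℕ). -/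
/-- Convergence of the Taylor expansion of `ζ(b, z, s) = ∑ b n (z n)^s` in the
vectorial variable `z` (item (ii) of Lemma on the Taylor expansion): for `η ≥ 0`,
`Re s > 1 − η`, `0 < β < ε = ⨅ (n+1)|z n|`, and `|w n| ≤ β/(n+1)^{1+η}`, the doubly
indexed family of Taylor terms is absolutely summable. -/
theorem zeta_taylor_summable_polydisc
    (b : ℕ → ℂ) (hb : ∃ M : ℝ, ∀ n, ‖b n‖ ≤ M)
    (z : ℕ → ℂ) (hz : ∀ n, z n ≠ 0)
    (hε : 0 < ⨅ n : ℕ, ((n : ℝ) + 1) * ‖z n‖)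
    (hbig : ∃ M : ℝ, ∀ n : ℕ, ((n : ℝ) + 1) * ‖z n‖ ≤ M)
    (θ : ℕ → ℝ) (hθ : ∃ Θ : ℝ, ∀ n, |θ n| ≤ Θ)
    (harg : ∀ n : ℕ, z n = (‖z n‖ : ℂ) * Complex.exp (Complex.I * θ n))
    (η : ℝ) (hη : 0 ≤ η)
    (β : ℝ) (hβ0 : 0 < β) (hβ : β < ⨅ n : ℕ, ((n : ℝ) + 1) * ‖z n‖)
    (s : ℂ) (hs : 1 - η < s.re)
    (w : ℕ → ℂ) (hw : ∀ n : ℕ, ‖w n‖ ≤ β / ((n : ℝ) + 1) ^ ((1 : ℝ) + η)) :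
    Summable fun p : ℕ × ℕ =>
      ‖(∏ i ∈ Finset.range (p.1 + 1), (s - (i : ℂ))) / ((Nat.factorial (p.1 + 1) : ℂ)) *
        b p.2 *
        Complex.exp ((s - ((p.1 : ℂ) + 1)) *
          (Real.log (‖z p.2‖) + Complex.I * θ p.2)) *
        (w p.2) ^ (p.1 + 1)‖ := by
  obtain ⟨Mb, hMb⟩ := hb
  obtain ⟨Mz, hMz⟩ := hbig
  obtain ⟨Θ, hΘ⟩ := hθ
  set ε : ℝ := ⨅ n : ℕ, ((n : ℝ) + 1) * ‖z n‖ with hεdef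
  have hεle : ∀ n : ℕ, ε ≤ ((n : ℝ) + 1) * ‖z n‖ := fun n =>
    ciInf_le ⟨0, by rintro x ⟨k, rfl⟩; positivity⟩ n
  have hMb0 : 0 ≤ Mb := (norm_nonneg _).trans (hMb 0)
  have hΘ0 : 0 ≤ Θ := (abs_nonneg _).trans (hΘ 0)
  set σ : ℝ := s.re with hσdef
  have hση : 1 < σ + η := by linarith
  set q : ℝ := β / ε with hqdef
  have hq0 : 0 < q := div_pos hβ0 hε
  have hq1 : q < 1 := (div_lt_one hε).2 hβ
  set K : ℝ := max (ε ^ σ) (Mz ^ σ) with hKdef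
  have hK0 : 0 ≤ K := le_max_of_le_left (Real.rpow_nonneg hε.le σ)
  set Cθ : ℝ := Real.exp (|s.im| * Θ) with hCdef
  have hC0 : 0 < Cθ := Real.exp_pos _
  set K' : ℝ := Mb * Cθ * K with hK'def
  have hK'0 : 0 ≤ K' := by positivity
  set a : ℕ → ℝ := fun m =>
    ‖∏ i ∈ Finset.range (m + 1), (s - (i : ℂ))‖ / (Nat.factorial (m + 1) : ℝ) * q ^ (m + 1)
    with hadef
  have ha0 : ∀ m, 0 ≤ a m := fun m => by
    have : (0:ℝ) < (Nat.factorial (m + 1) : ℝ) := by positivity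
    positivity
  -- summability of the m-family by the ratio test
  have hasum : Summable a := by
    set r : ℝ := (1 + q) / 2 with hrdef
    have hqr : q < r := by rw [hrdef]; linarith
    have hr1 : r < 1 := by rw [hrdef]; linarith
    obtain ⟨N, hN⟩ := exists_nat_ge ((q * ‖s‖ + q) / (r - q))
    refine summable_of_ratio_norm_eventually_le hr1 ?_
    filter_upwards [Filter.eventually_ge_atTop N] with m hm
    have hfac : ((Nat.factorial (m + 1) : ℝ)) ≠ 0 := by positivity
    have key : a (m + 1) = a m * (‖s - ((m : ℂ) + 1)‖ * q / ((m : ℝ) + 2)) := by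
      rw [hadef]
      simp only
      rw [Finset.prod_range_succ, norm_mul, Nat.factorial_succ (m + 1), pow_succ]
      push_cast
      field_simp
      ring
    have hstep : ‖s - ((m : ℂ) + 1)‖ * q / ((m : ℝ) + 2) ≤ r := by
      rw [div_le_iff₀ (by positivity)]
      have h1 : ‖s - ((m : ℂ) + 1)‖ ≤ ‖s‖ + ((m : ℝ) + 1) := by
        refine (norm_sub_le _ _).trans ?_
        have : ‖((m : ℂ) + 1)‖ = (m : ℝ) + 1 := by
          rw [show ((m : ℂ) + 1) = ((m + 1 : ℕ) : ℂ) by push_cast; ring,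
            Complex.norm_natCast]
          push_cast; ring
        rw [this]
      have hm' : (q * ‖s‖ + q) / (r - q) ≤ (m : ℝ) :=
        hN.trans (Nat.cast_le.2 hm)
      have h2 : q * ‖s‖ + q ≤ (m : ℝ) * (r - q) :=
        (div_le_iff₀ (by linarith)).1 hm'
      nlinarith [norm_nonneg (s - ((m : ℂ) + 1)), norm_nonneg s, hq0.le]
    calc ‖a (m + 1)‖ = a (m + 1) := Real.norm_of_nonneg (ha0 _)
      _ = a m * (‖s - ((m : ℂ) + 1)‖ * q / ((m : ℝ) + 2)) := key
      _ ≤ a m * r := mul_le_mul_of_nonneg_left hstep (ha0 m)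
      _ = r * ‖a m‖ := by rw [Real.norm_of_nonneg (ha0 m)]; ring
  -- summability of the n-family
  have hgsum : Summable fun n : ℕ => ((n : ℝ) + 1) ^ (-(σ + η)) := by
    have h := (Real.summable_nat_rpow (p := -(σ + η))).2 (by linarith)
    have h2 := (summable_nat_add_iff 1).2 h
    refine h2.congr fun n => ?_
    push_cast
    ring_nf
  refine Summable.of_nonneg_of_le (fun p => norm_nonneg _) ?_
    (((hasum.mul_left K').mul_of_nonneg hgsum
      (fun m => mul_nonneg hK'0 (ha0 m))
      (fun n => Real.rpow_nonneg (by positivity) _)) )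
  rintro ⟨m, n⟩
  dsimp only
  set u : ℝ := (n : ℝ) + 1 with hudef
  have hu0 : 0 < u := by rw [hudef]; positivity
  have hu1 : 1 ≤ u := by
    have : (0 : ℝ) ≤ (n : ℝ) := Nat.cast_nonneg n
    rw [hudef]; linarith
  set R : ℝ := ‖z n‖ with hRdef
  have hR0 : 0 < R := norm_pos_iff.mpr (hz n)
  set t : ℝ := u * R with htdef
  have ht0 : 0 < t := mul_pos hu0 hR0
  have hεt : ε ≤ t := hεle n
  have htM : t ≤ Mz := hMz n
  set ν : ℝ := ((m + 1 : ℕ) : ℝ) with hνdef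
  have hν1 : 1 ≤ ν := by rw [hνdef]; exact_mod_cast Nat.succ_le_succ (Nat.zero_le m)
  have hν0 : 0 ≤ ν := by linarith
  -- norm of the exponential factor
  have hexp : ‖Complex.exp ((s - ((m : ℂ) + 1)) * ((Real.log R : ℂ) + Complex.I * θ n))‖
      = R ^ (σ - ν) * Real.exp (-(s.im * θ n)) := by
    rw [Complex.norm_exp]
    have hre : ((s - ((m : ℂ) + 1)) * ((Real.log R : ℂ) + Complex.I * θ n)).re
        = Real.log R * (σ - ν) + -(s.im * θ n) := by
      simp [Complex.mul_re, Complex.add_re, Complex.sub_re, Complex.add_im, Complex.sub_im,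
        Complex.mul_im, Complex.I_re, Complex.I_im, Complex.ofReal_re, Complex.ofReal_im,
        hνdef, hσdef]
      push_cast
      ring
    rw [hre, Real.exp_add, Real.rpow_def_of_pos hR0]
  -- bound for |b n| * exp factor
  have hbe : ‖b n‖ * Real.exp (-(s.im * θ n)) ≤ Mb * Cθ := by
    have h1 : Real.exp (-(s.im * θ n)) ≤ Cθ := by
      rw [hCdef]
      apply Real.exp_le_exp.2
      calc -(s.im * θ n) ≤ |s.im * θ n| := neg_le_abs _
        _ = |s.im| * |θ n| := abs_mul _ _
        _ ≤ |s.im| * Θ := mul_le_mul_of_nonneg_left (hΘ n) (abs_nonneg _)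
    exact mul_le_mul (hMb n) h1 (Real.exp_pos _).le hMb0
  -- key bound on R^(σ-ν) * |w n|^(m+1)
  have h3 : R ^ (σ - ν) * ‖w n‖ ^ (m + 1)
      ≤ K * q ^ (m + 1) * u ^ (-(σ + η)) := by
    have hwn : ‖w n‖ ^ (m + 1) ≤ (β / u ^ ((1 : ℝ) + η)) ^ (m + 1) :=
      pow_le_pow_left₀ (norm_nonneg _) (hw n) _
    have idA : R ^ (σ - ν) = t ^ σ * (t ^ ν)⁻¹ * u ^ (ν - σ) := by
      have hRtu : R = t * u⁻¹ := by
        rw [htdef]; field_simp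
      rw [hRtu, Real.mul_rpow ht0.le (by positivity),
        Real.inv_rpow hu0.le, ← Real.rpow_neg hu0.le, neg_sub,
        Real.rpow_sub ht0, div_eq_mul_inv]
    have idB : (β / u ^ ((1 : ℝ) + η)) ^ (m + 1) = β ^ ν * u ^ (-((1 + η) * ν)) := by
      rw [← Real.rpow_natCast (β / u ^ ((1 : ℝ) + η)) (m + 1),
        Real.div_rpow hβ0.le (Real.rpow_nonneg hu0.le _),
        ← Real.rpow_mul hu0.le,
        div_eq_mul_inv, ← Real.rpow_neg hu0.le, hνdef]
    have htσ : t ^ σ ≤ K := by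
      rcases le_or_gt 0 σ with hσ0 | hσ0
      · exact le_max_of_le_right (Real.rpow_le_rpow ht0.le htM hσ0)
      · exact le_max_of_le_left (Real.rpow_le_rpow_of_nonpos hε hεt hσ0.le)
    have htν : (t ^ ν)⁻¹ ≤ (ε ^ ν)⁻¹ := by
      apply inv_anti₀ (Real.rpow_pos_of_pos hε ν)
      exact Real.rpow_le_rpow hε.le hεt hν0
    calc R ^ (σ - ν) * ‖w n‖ ^ (m + 1)
        ≤ R ^ (σ - ν) * (β / u ^ ((1 : ℝ) + η)) ^ (m + 1) :=
          mul_le_mul_of_nonneg_left hwn (Real.rpow_nonneg hR0.le _)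
      _ = (t ^ σ * (t ^ ν)⁻¹) * β ^ ν * (u ^ (ν - σ) * u ^ (-((1 + η) * ν))) := by
          rw [idA, idB]; ring
      _ = (t ^ σ * (t ^ ν)⁻¹) * β ^ ν * u ^ (-σ - η * ν) := by
          rw [← Real.rpow_add hu0]; congr 1; ring
      _ ≤ (K * (ε ^ ν)⁻¹) * β ^ ν * u ^ (-(σ + η)) := by
          have hexpmono : u ^ (-σ - η * ν) ≤ u ^ (-(σ + η)) := by
            apply Real.rpow_le_rpow_of_exponent_le hu1
            have := mul_le_mul_of_nonneg_left hν1 hη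
            linarith
          have h1 : t ^ σ * (t ^ ν)⁻¹ ≤ K * (ε ^ ν)⁻¹ :=
            mul_le_mul htσ htν (by positivity) hK0
          have h2 : t ^ σ * (t ^ ν)⁻¹ * β ^ ν ≤ K * (ε ^ ν)⁻¹ * β ^ ν :=
            mul_le_mul_of_nonneg_right h1 (Real.rpow_nonneg hβ0.le _)
          exact mul_le_mul h2 hexpmono (Real.rpow_nonneg hu0.le _)
            (by positivity)
      _ = K * q ^ (m + 1) * u ^ (-(σ + η)) := by
          rw [hqdef, ← Real.rpow_natCast (β / ε) (m + 1),
            Real.div_rpow hβ0.le hε.le, ← hνdef, div_eq_mul_inv]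
          ring
  -- assemble
  have hfac : (0:ℝ) < (Nat.factorial (m + 1) : ℝ) := by positivity
  calc ‖(∏ i ∈ Finset.range (m + 1), (s - (i : ℂ))) / ((Nat.factorial (m + 1) : ℂ)) *
        b n * Complex.exp ((s - ((m : ℂ) + 1)) * ((Real.log R : ℂ) + Complex.I * θ n)) *
        w n ^ (m + 1)‖
      = ‖∏ i ∈ Finset.range (m + 1), (s - (i : ℂ))‖ / (Nat.factorial (m + 1) : ℝ) *
        (R ^ (σ - ν) * ‖w n‖ ^ (m + 1)) *
        (‖b n‖ * Real.exp (-(s.im * θ n))) := by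
        simp only [norm_mul, norm_div, norm_pow, Complex.norm_natCast, hexp,
          Complex.norm_natCast]
        ring
    _ ≤ ‖∏ i ∈ Finset.range (m + 1), (s - (i : ℂ))‖ / (Nat.factorial (m + 1) : ℝ) *
        (K * q ^ (m + 1) * u ^ (-(σ + η))) * (Mb * Cθ) := by
        apply mul_le_mul (mul_le_mul_of_nonneg_left h3 (by positivity)) hbe
          (by positivity) (by positivity)
    _ = K' * a m * u ^ (-(σ + η)) := by
        rw [hK'def, hadef]; ring
end

section
/- Fix b : ℕ → ℂ bounded, z : ℕ → ℂ with z n ≠ 0 for all n, ε := ⨅_n (n+1)·|z n| > 0 and sup_n (n+1)·|z n| < ∞, and a bounded θ : ℕ → ℝ with z n = |z n|·exp(i·θ n) for all n; write z_n^c := exp(c·(log|z n| + i·θ n)). Let η > 0, let β satisfy 0 < β < ε, let s ∈ ℂ be arbitrary, and let w : ℕ → ℂ satisfy |w n| ≤ β·exp(−η·(n+1))/(n+1) for all n. Then the doubly indexed family over (m, n) ∈ ℕ × ℕ given by ((∏_{i=0}^{m} (s − i))/(m+1)!) · b n · z_n^{s−(m+1)} · (w n)^{m+1} is absolutely summable (the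 family of its norms is summable over ℕ × ℕ). -/
open Finset Filter

set_option maxHeartbeats 2000000 in
/-- Convergence of the Taylor expansion of `ζ(b, z, s) = ∑ b n (z n)^s` in the
vectorial variable `z` (item (iii) of Lemma on the Taylor expansion): for `η > 0`,
arbitrary `s ∈ ℂ`, `0 < β < ε = ⨅ (n+1)|z n|`, and `|w n| ≤ β·e^{−η(n+1)}/(n+1)`, the doubly
indexed family of Taylor terms is absolutely summable. -/
theorem zeta_taylor_summable_exp_polydisc
    (b : ℕ → ℂ) (hb : ∃ M : ℝ, ∀ n, ‖b n‖ ≤ M)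
    (z : ℕ → ℂ) (hz : ∀ n, z n ≠ 0)
    (hε : 0 < ⨅ n : ℕ, ((n : ℝ) + 1) * ‖z n‖)
    (hbig : ∃ M : ℝ, ∀ n : ℕ, ((n : ℝ) + 1) * ‖z n‖ ≤ M)
    (θ : ℕ → ℝ) (hθ : ∃ Θ : ℝ, ∀ n, |θ n| ≤ Θ)
    (harg : ∀ n : ℕ, z n = (‖z n‖ : ℂ) * Complex.exp (Complex.I * θ n))
    (η : ℝ) (hη : 0 < η)
    (β : ℝ) (hβ0 : 0 < β) (hβ : β < ⨅ n : ℕ, ((n : ℝ) + 1) * ‖z n‖)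
    (s : ℂ)
    (w : ℕ → ℂ) (hw : ∀ n : ℕ, ‖w n‖ ≤ β * Real.exp (-η * ((n : ℝ) + 1)) / ((n : ℝ) + 1)) :
    Summable fun p : ℕ × ℕ =>
      ‖(∏ i ∈ Finset.range (p.1 + 1), (s - (i : ℂ))) / ((Nat.factorial (p.1 + 1) : ℂ)) *
        b p.2 *
        Complex.exp ((s - ((p.1 : ℂ) + 1)) *
          (Real.log (‖z p.2‖) + Complex.I * θ p.2)) *
        (w p.2) ^ (p.1 + 1)‖ := by
  obtain ⟨Mb, hMb⟩ := hb
  obtain ⟨M, hM⟩ := hbig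
  obtain ⟨Θ, hΘ⟩ := hθ
  set ε := ⨅ n : ℕ, ((n : ℝ) + 1) * ‖z n‖ with hεdef
  have hrpos : ∀ n, 0 < ‖z n‖ := fun n => norm_pos_iff.mpr (hz n)
  have hbdd : BddBelow (Set.range fun n : ℕ => ((n : ℝ) + 1) * ‖z n‖) :=
    ⟨0, by rintro x ⟨n, rfl⟩; positivity⟩
  have hεle : ∀ n : ℕ, ε ≤ ((n : ℝ) + 1) * ‖z n‖ := fun n => ciInf_le hbdd n
  have hM0 : 0 < M := lt_of_lt_of_le hε (le_trans (hεle 0) (hM 0))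
  have hΘ0 : 0 ≤ Θ := le_trans (abs_nonneg _) (hΘ 0)
  set Mb' := max Mb 0 with hMb'def
  have hMb'0 : 0 ≤ Mb' := le_max_right _ _
  have hMb' : ∀ n, ‖b n‖ ≤ Mb' := fun n => le_trans (hMb n) (le_max_left _ _)
  set a := ‖s‖ with hadef
  have ha0 : 0 ≤ a := norm_nonneg s
  set q := β / ε with hqdef
  have hq0 : 0 < q := div_pos hβ0 hε
  have hq1 : q < 1 := (div_lt_one hε).2 hβ
  set K := ⌈|s.re|⌉₊ with hKdef
  set C := M ^ s.re + ε ^ s.re with hCdef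
  have hC0 : 0 < C := add_pos (Real.rpow_pos_of_pos hM0 _) (Real.rpow_pos_of_pos hε _)
  set E := Real.exp (|s.im| * Θ) with hEdef
  set f : ℕ → ℝ := fun m =>
    (∏ i ∈ Finset.range (m + 1), (a + i)) / (Nat.factorial (m + 1)) * q ^ (m + 1) with hfdef
  set g : ℕ → ℝ := fun n =>
    Mb' * C * E * ((n : ℝ) + 1) ^ K * Real.exp (-η * ((n : ℝ) + 1)) with hgdef
  have hf0 : ∀ m, 0 ≤ f m := by
    intro m
    apply mul_nonneg _ (by positivity)
    apply div_nonneg _ (by positivity)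
    exact Finset.prod_nonneg fun i _ => by positivity
  have hg0 : ∀ n, 0 ≤ g n := fun n => by positivity
  -- summability of f via ratio test
  have hf : Summable f := by
    set ρ := (1 + q) / 2 with hρdef
    have hρ1 : ρ < 1 := by rw [hρdef]; linarith
    have hρq : q < ρ := by rw [hρdef]; linarith
    apply summable_of_ratio_norm_eventually_le hρ1
    rw [eventually_atTop]
    refine ⟨⌈(a + 1) * q / (ρ - q)⌉₊, fun m hm => ?_⟩
    have hmge : ((⌈(a + 1) * q / (ρ - q)⌉₊ : ℝ)) ≤ m := Nat.cast_le.2 hm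
    have hceil : (a + 1) * q / (ρ - q) ≤ ⌈(a + 1) * q / (ρ - q)⌉₊ := Nat.le_ceil _
    have hkey : (a + (m + 1)) * q ≤ ρ * ((m : ℝ) + 2) := by
      have h1 : (a + 1) * q ≤ (ρ - q) * m := by
        rw [div_le_iff₀ (by linarith)] at hceil
        nlinarith [hceil, hmge]
      nlinarith
    have hstep : f (m + 1) = f m * ((a + (m + 1)) * q / ((m : ℝ) + 2)) := by
      rw [hfdef]
      simp only
      rw [Finset.prod_range_succ]
      rw [show m + 1 + 1 = m + 2 from rfl, Nat.factorial_succ (m + 1)]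
      push_cast
      field_simp
      ring
    rw [Real.norm_eq_abs, Real.norm_eq_abs, abs_of_nonneg (hf0 _), abs_of_nonneg (hf0 _),
      hstep]
    have : f m * ((a + (m + 1)) * q / ((m : ℝ) + 2)) ≤ f m * ρ := by
      apply mul_le_mul_of_nonneg_left _ (hf0 m)
      rw [div_le_iff₀ (by positivity)]
      nlinarith [hkey]
    linarith [this]
  -- summability of g
  have hg : Summable g := by
    have hx : ‖Real.exp (-η)‖ < 1 := by
      rw [Real.norm_eq_abs, abs_of_pos (Real.exp_pos _)]
      exact Real.exp_lt_one_iff.2 (by linarith)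
    have h1 : Summable fun n : ℕ => (n : ℝ) ^ K * Real.exp (-η) ^ n :=
      summable_pow_mul_geometric_of_norm_lt_one K hx
    have h2 : Summable fun n : ℕ => ((n : ℝ) + 1) ^ K * Real.exp (-η * ((n : ℝ) + 1)) := by
      have h3 := (summable_nat_add_iff 1).2 h1
      apply h3.congr
      intro n
      rw [← Real.exp_nat_mul]
      push_cast
      ring_nf
    exact (h2.mul_left (Mb' * C * E)).congr fun n => by rw [hgdef]; ring
  apply Summable.of_nonneg_of_le (fun p => norm_nonneg _) _
    (hf.mul_of_nonneg hg hf0 hg0)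
  rintro ⟨m, n⟩
  simp only
  set r := ‖z n‖ with hrdef
  have hr : 0 < r := hrpos n
  have hrn : ε / ((n : ℝ) + 1) ≤ r := by
    rw [div_le_iff₀ (by positivity)]
    linarith [hεle n]
  have hrM : r ≤ M := by nlinarith [hεle n, hM n, hr, Nat.cast_nonneg (α := ℝ) n]
  -- expand the norm
  have hre : ((s - ((m : ℂ) + 1)) * ((Real.log r : ℂ) + Complex.I * (θ n : ℂ))).re
      = (s.re - ((m : ℝ) + 1)) * Real.log r - s.im * θ n := by
    simp [Complex.mul_re, Complex.add_re, Complex.sub_re, Complex.add_im, Complex.sub_im]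
    try ring
  have hexp : Real.exp (((s - ((m : ℂ) + 1)) * ((Real.log r : ℂ) + Complex.I * (θ n : ℂ))).re)
      = r ^ s.re / r ^ (m + 1) * Real.exp (-(s.im * θ n)) := by
    rw [hre]
    rw [show (s.re - ((m : ℝ) + 1)) * Real.log r - s.im * θ n
        = s.re * Real.log r + (-(((m : ℝ) + 1) * Real.log r)) + (-(s.im * θ n)) by ring]
    rw [Real.exp_add, Real.exp_add, Real.exp_neg]
    congr 1
    rw [Real.rpow_def_of_pos hr, mul_comm (Real.log r)]
    congr 1
    rw [show ((m : ℝ) + 1) = ((m + 1 : ℕ) : ℝ) by push_cast; ring, Real.exp_nat_mul,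
      Real.exp_log hr]
  have hnorm : ‖(∏ i ∈ Finset.range (m + 1), (s - (i : ℂ))) / ((Nat.factorial (m + 1) : ℂ)) *
        b n * Complex.exp ((s - ((m : ℂ) + 1)) *
          ((Real.log r : ℂ) + Complex.I * (θ n : ℂ))) * (w n) ^ (m + 1)‖
      = (∏ i ∈ Finset.range (m + 1), ‖s - (i : ℂ)‖) / (Nat.factorial (m + 1))
        * ‖b n‖
        * (r ^ s.re * Real.exp (-(s.im * θ n)))
        * (‖w n‖ ^ (m + 1) / r ^ (m + 1)) := by
    rw [norm_mul, norm_mul, norm_mul, norm_div, norm_pow]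
    simp only [norm_prod, Complex.norm_natCast, Complex.norm_exp]
    rw [hexp]
    ring
  rw [hnorm]
  -- bounds
  have h1 : (∏ i ∈ Finset.range (m + 1), ‖s - (i : ℂ)‖)
      ≤ ∏ i ∈ Finset.range (m + 1), (a + i) := by
    apply Finset.prod_le_prod (fun i _ => norm_nonneg _)
    intro i _
    calc ‖s - (i : ℂ)‖ = ‖s - (i : ℂ)‖ := rfl
      _ ≤ ‖s‖ + ‖(i : ℂ)‖ := norm_sub_le _ _
      _ = a + i := by simp [Complex.norm_natCast, hadef]
  have h3 : r ^ s.re ≤ C * ((n : ℝ) + 1) ^ K := by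
    have hn1 : (1 : ℝ) ≤ (n : ℝ) + 1 := by
      have : (0:ℝ) ≤ (n:ℝ) := Nat.cast_nonneg n
      linarith
    have hnK : (1 : ℝ) ≤ ((n : ℝ) + 1) ^ K := one_le_pow₀ hn1
    rcases le_or_gt 0 s.re with hs | hs
    · have hMs : r ^ s.re ≤ M ^ s.re := Real.rpow_le_rpow hr.le hrM hs
      have hM' : (0 : ℝ) < M ^ s.re := Real.rpow_pos_of_pos hM0 _
      have hε' : (0 : ℝ) < ε ^ s.re := Real.rpow_pos_of_pos hε _
      calc r ^ s.re ≤ M ^ s.re := hMs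
        _ = M ^ s.re * 1 := (mul_one _).symm
        _ ≤ C * ((n : ℝ) + 1) ^ K :=
            mul_le_mul (by rw [hCdef]; linarith) hnK zero_le_one hC0.le
    · have h4 : r ^ s.re ≤ (ε / ((n : ℝ) + 1)) ^ s.re :=
        Real.rpow_le_rpow_of_nonpos (by positivity) hrn hs.le
      have h5 : (ε / ((n : ℝ) + 1)) ^ s.re = ε ^ s.re * ((n : ℝ) + 1) ^ (-s.re) := by
        rw [Real.div_rpow hε.le (by positivity), Real.rpow_neg (by positivity), div_eq_mul_inv]
      have h6 : ((n : ℝ) + 1) ^ (-s.re) ≤ ((n : ℝ) + 1) ^ (K : ℝ) := by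
        apply Real.rpow_le_rpow_of_exponent_le hn1
        calc -s.re ≤ |s.re| := neg_le_abs _
          _ ≤ K := Nat.le_ceil _
      have h7 : ((n : ℝ) + 1) ^ (K : ℝ) = ((n : ℝ) + 1) ^ K := Real.rpow_natCast _ K
      have hε' : (0 : ℝ) < ε ^ s.re := Real.rpow_pos_of_pos hε _
      have hM' : (0 : ℝ) < M ^ s.re := Real.rpow_pos_of_pos hM0 _
      calc r ^ s.re ≤ ε ^ s.re * ((n : ℝ) + 1) ^ (-s.re) := by rw [← h5]; exact h4
        _ ≤ ε ^ s.re * ((n : ℝ) + 1) ^ K := by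
            rw [← h7]; exact mul_le_mul_of_nonneg_left h6 hε'.le
        _ ≤ C * ((n : ℝ) + 1) ^ K := by
            apply mul_le_mul_of_nonneg_right _ (by positivity)
            rw [hCdef]; linarith
  have h4 : Real.exp (-(s.im * θ n)) ≤ E := by
    rw [hEdef]
    apply Real.exp_le_exp.2
    calc -(s.im * θ n) ≤ |s.im * θ n| := neg_le_abs _
      _ = |s.im| * |θ n| := abs_mul _ _
      _ ≤ |s.im| * Θ := mul_le_mul_of_nonneg_left (hΘ n) (abs_nonneg _)
  have h5 : ‖w n‖ ^ (m + 1) / r ^ (m + 1)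
      ≤ q ^ (m + 1) * Real.exp (-η * ((n : ℝ) + 1)) := by
    rw [← div_pow]
    have hwr : ‖w n‖ / r ≤ q * Real.exp (-η * ((n : ℝ) + 1)) := by
      have := div_le_div₀ (by positivity) (hw n) (by positivity : (0:ℝ) < ε / ((n : ℝ) + 1)) hrn
      calc ‖w n‖ / r
          ≤ (β * Real.exp (-η * ((n : ℝ) + 1)) / ((n : ℝ) + 1)) / (ε / ((n : ℝ) + 1)) := this
        _ = q * Real.exp (-η * ((n : ℝ) + 1)) := by
            rw [hqdef]; field_simp
    have hexp1 : Real.exp (-η * ((n : ℝ) + 1)) ≤ 1 :=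
      Real.exp_le_one_iff.2 (by nlinarith [Nat.cast_nonneg (α := ℝ) n])
    calc (‖w n‖ / r) ^ (m + 1)
        ≤ (q * Real.exp (-η * ((n : ℝ) + 1))) ^ (m + 1) := by
          apply pow_le_pow_left₀ (by positivity) hwr
      _ = q ^ (m + 1) * Real.exp (-η * ((n : ℝ) + 1)) ^ (m + 1) := mul_pow _ _ _
      _ ≤ q ^ (m + 1) * Real.exp (-η * ((n : ℝ) + 1)) := by
          apply mul_le_mul_of_nonneg_left _ (by positivity)
          exact pow_le_of_le_one (Real.exp_nonneg _) hexp1 (Nat.succ_ne_zero m)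
  calc (∏ i ∈ Finset.range (m + 1), ‖s - (i : ℂ)‖) / (Nat.factorial (m + 1))
        * ‖b n‖
        * (r ^ s.re * Real.exp (-(s.im * θ n)))
        * (‖w n‖ ^ (m + 1) / r ^ (m + 1))
      ≤ (∏ i ∈ Finset.range (m + 1), (a + i)) / (Nat.factorial (m + 1))
        * Mb'
        * ((C * ((n : ℝ) + 1) ^ K) * E)
        * (q ^ (m + 1) * Real.exp (-η * ((n : ℝ) + 1))) := by
        apply mul_le_mul
        · apply mul_le_mul
          · apply mul_le_mul
            · exact div_le_div_of_nonneg_right h1 (by positivity) |>.trans_eq rfl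
            · exact hMb' n
            · exact norm_nonneg _
            · positivity
          · exact mul_le_mul h3 h4 (Real.exp_nonneg _) (by positivity)
          · positivity
          · have : 0 ≤ (∏ i ∈ Finset.range (m + 1), (a + i)) :=
              Finset.prod_nonneg fun i _ => by positivity
            positivity
        · exact h5
        · positivity
        · have : 0 ≤ (∏ i ∈ Finset.range (m + 1), (a + i)) :=
            Finset.prod_nonneg fun i _ => by positivity
          positivity
    _ = f m * g n := by rw [hfdef, hgdef]; ring
end

section
/- Fix b : ℕ → ℂ bounded, z : ℕ → ℂ with z n ≠ 0 for all n, ε := ⨅_n (n+1)·|z n| > 0 and sup_n (n+1)·|z n| < ∞, and a bounded θ : ℕ → ℝ with z n = |z n|·exp(i·θ n) for all n; write z_n^c := exp(c·(log|z n| + i·θ n)). Suppose F : ℂ → ℂ is meromorphic on all of ℂ and F(s) = Σ'_n b n · z_n^s for every s with Re s > 1. Let w : ℕ → ℂ satisfy sup_n exp(n+1)·|w n| < ε (this forces |w n| < |z n| for every n, so Arg(1 + (w n)/(z n)) ∈ (−π/2, π/2) is defined). Then there exists G : ℂ → ℂ meromorphic on all of ℂ such that for every s with Re s > 1, G(s)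 = Σ'_n b n · exp(s·(log|z n + w n| + i·(θ n + Arg(1 + (w n)/(z n))))). -/
open Complex Filter Metric

private lemma aux_norm_exp_sub_one_le (a : ℂ) :
    ‖Complex.exp a - 1‖ ≤ 2 * ‖a‖ * Real.exp (‖a‖) := by
  rcases le_or_gt (‖a‖) 1 with h | h
  · calc ‖Complex.exp a - 1‖ ≤ 2 * ‖a‖ := Complex.norm_exp_sub_one_le h
      _ ≤ 2 * ‖a‖ * Real.exp (‖a‖) :=
        le_mul_of_one_le_right (by positivity) (Real.one_le_exp (norm_nonneg _))
  · have h1 : ‖Complex.exp a - 1‖ ≤ ‖Complex.exp a‖ + 1 := by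
      simpa using (norm_sub_le (Complex.exp a) 1)
    have h2 : ‖Complex.exp a‖ ≤ Real.exp (‖a‖) := by
      rw [Complex.norm_exp]
      exact Real.exp_le_exp.2 ((Complex.abs_re_le_norm a).trans' (le_abs_self _))
    have h3 : (1:ℝ) ≤ Real.exp (‖a‖) := Real.one_le_exp (norm_nonneg _)
    calc ‖Complex.exp a - 1‖ ≤ Real.exp (‖a‖) + Real.exp (‖a‖) := by
          linarith
      _ = 2 * 1 * Real.exp (‖a‖) := by ring
      _ ≤ 2 * ‖a‖ * Real.exp (‖a‖) := by
          have := Real.exp_pos (‖a‖); nlinarith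

private lemma aux_summable_pow_exp (k : ℕ) :
    Summable (fun n : ℕ => ((n : ℝ) + 1) ^ k * Real.exp (-((n : ℝ) + 1))) := by
  have hr : ‖Real.exp (-1)‖ < 1 := by
    rw [Real.norm_eq_abs, abs_of_pos (Real.exp_pos _)]
    exact Real.exp_lt_one_iff.2 (by norm_num)
  have h := summable_pow_mul_geometric_of_norm_lt_one (R := ℝ) k hr
  have h2 := (summable_nat_add_iff 1).2 h
  refine h2.congr fun n => ?_
  push_cast
  rw [← Real.exp_nat_mul]
  push_cast
  ring_nf

private lemma aux_log_eq (x : ℂ) : Complex.log x =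
    (Real.log (‖x‖) : ℂ) + Complex.I * (Complex.arg x : ℂ) := by
  apply Complex.ext <;> simp [Complex.log_re, Complex.log_im]

private lemma aux_ne (t : ℂ) (h : ‖t‖ ≤ 1/2) : (1 : ℂ) + t ≠ 0 := by
  intro h0
  have : t = -1 := by linear_combination h0
  rw [this] at h; norm_num at h

private lemma aux_log_bound (t : ℂ) (h : ‖t‖ ≤ 1/2) :
    ‖Complex.log (1 + t)‖ ≤ 2 * ‖t‖ := by
  have := Complex.norm_log_one_add_half_le_self (z := t) h
  nlinarith [norm_nonneg t]

private lemma aux_differentiable_tsum (f : ℕ → ℂ → ℂ) (hf : ∀ n, Differentiable ℂ (f n))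
    (h : ∀ R : ℝ, 0 < R → ∃ u : ℕ → ℝ, Summable u ∧
      ∀ n, ∀ s ∈ Metric.closedBall (0:ℂ) R, ‖f n s‖ ≤ u n) :
    Differentiable ℂ (fun s => ∑' n, f n s) := by
  intro s₀
  have hR : 0 < ‖s₀‖ + 1 := by positivity
  obtain ⟨u, hu, hb⟩ := h _ hR
  have ht := tendstoUniformlyOn_tsum hu (fun n x hx => hb n x hx)
  have hd : DifferentiableOn ℂ (fun s => ∑' n, f n s) (Metric.ball (0:ℂ) (‖s₀‖+1)) := by
    apply ((ht.mono Metric.ball_subset_closedBall).tendstoLocallyUniformlyOn).differentiableOn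
    · exact Filter.Eventually.of_forall fun N =>
        (Differentiable.fun_sum fun i _ => hf i).differentiableOn
    · exact Metric.isOpen_ball
  have hmem : s₀ ∈ Metric.ball (0:ℂ) (‖s₀‖+1) := by simp [Metric.mem_ball]
  exact hd.differentiableAt (Metric.isOpen_ball.mem_nhds hmem)

/-- If `ζ(b, z, ·) = ∑ b n (z n)^s` (branch given by bounded arguments `θ`) extends
to a meromorphic function `F` on all of `ℂ`, then for every perturbation `w` with
`sup_n e^{n+1}|w n| < ε = ⨅ (n+1)|z n|`, the series `∑ b n (z n + w n)^s` (with the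
continued branch of the argument) also extends to a meromorphic function on `ℂ`. -/
theorem zeta_meromorphic_continuation_stable
    (b : ℕ → ℂ) (hb : ∃ M : ℝ, ∀ n, ‖b n‖ ≤ M)
    (z : ℕ → ℂ) (hz : ∀ n, z n ≠ 0)
    (hε : 0 < ⨅ n : ℕ, ((n : ℝ) + 1) * ‖z n‖)
    (hbig : ∃ M : ℝ, ∀ n : ℕ, ((n : ℝ) + 1) * ‖z n‖ ≤ M)
    (θ : ℕ → ℝ) (hθ : ∃ Θ : ℝ, ∀ n, |θ n| ≤ Θ)
    (harg : ∀ n : ℕ, z n = (‖z n‖ : ℂ) * Complex.exp (Complex.I * θ n))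
    (F : ℂ → ℂ) (hF : MeromorphicOn F Set.univ)
    (hFeq : ∀ s : ℂ, 1 < s.re →
      F s = ∑' n : ℕ, b n *
        Complex.exp (s * (Real.log (‖z n‖) + Complex.I * θ n)))
    (w : ℕ → ℂ)
    (hw : ∃ δ : ℝ, δ < (⨅ n : ℕ, ((n : ℝ) + 1) * ‖z n‖) ∧
      ∀ n : ℕ, Real.exp ((n : ℝ) + 1) * ‖w n‖ ≤ δ) :
    ∃ G : ℂ → ℂ, MeromorphicOn G Set.univ ∧
      ∀ s : ℂ, 1 < s.re →
        G s = ∑' n : ℕ, b n *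
          Complex.exp (s * (Real.log (‖z n + w n‖) +
            Complex.I * (θ n + Complex.arg (1 + w n / z n)))) := by
  obtain ⟨Mb, hMb⟩ := hb
  obtain ⟨M, hM⟩ := hbig
  obtain ⟨Θ, hΘ⟩ := hθ
  obtain ⟨δ, hδε, hδ⟩ := hw
  set ε := ⨅ n : ℕ, ((n : ℝ) + 1) * ‖z n‖ with hε_def
  have hbdd : BddBelow (Set.range fun n : ℕ => ((n : ℝ) + 1) * ‖z n‖) :=
    ⟨0, by rintro x ⟨n, rfl⟩; positivity⟩
  have hεle : ∀ n : ℕ, ε ≤ ((n : ℝ) + 1) * ‖z n‖ := fun n => ciInf_le hbdd n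
  have hMb0 : 0 ≤ Mb := le_trans (norm_nonneg _) (hMb 0)
  have hΘ0 : 0 ≤ Θ := le_trans (abs_nonneg _) (hΘ 0)
  have hM0 : 0 < M := lt_of_lt_of_le (lt_of_lt_of_le hε (hεle 0)) (hM 0)
  have hzpos : ∀ n, (0:ℝ) < ‖z n‖ := fun n => norm_pos_iff.2 (hz n)
  have hzl : ∀ n : ℕ, ε / ((n:ℝ)+1) ≤ ‖z n‖ := by
    intro n
    rw [div_le_iff₀ (by positivity)]
    have := hεle n; nlinarith [hzpos n]
  have hzu : ∀ n : ℕ, ‖z n‖ ≤ M / ((n:ℝ)+1) := by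
    intro n
    rw [le_div_iff₀ (by positivity)]
    have := hM n; nlinarith [hzpos n]
  -- bound on the ratio
  have habs_t : ∀ n : ℕ, ‖w n / z n‖ ≤ ((n:ℝ)+1) * Real.exp (-((n:ℝ)+1)) := by
    intro n
    have hwn : ‖w n‖ ≤ ε * Real.exp (-((n:ℝ)+1)) := by
      have h1 := hδ n
      have h2 : (0:ℝ) < Real.exp ((n:ℝ)+1) := Real.exp_pos _
      rw [Real.exp_neg, ← div_eq_mul_inv, le_div_iff₀ h2]
      nlinarith
    rw [norm_div, div_le_iff₀ (hzpos n)]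
    calc ‖w n‖ ≤ ε * Real.exp (-((n:ℝ)+1)) := hwn
      _ = ((n:ℝ)+1) * Real.exp (-((n:ℝ)+1)) * (ε / ((n:ℝ)+1)) := by
          field_simp
      _ ≤ ((n:ℝ)+1) * Real.exp (-((n:ℝ)+1)) * ‖z n‖ :=
          mul_le_mul_of_nonneg_left (hzl n) (by positivity)
  have hpe : ∀ n : ℕ, ((n:ℝ)+1) * Real.exp (-((n:ℝ)+1)) ≤ 1/2 := by
    intro n
    have h1 : ((n:ℝ)+1) ≤ Real.exp (n:ℝ) := by
      have := Real.add_one_le_exp (n:ℝ); linarith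
    have h2 : ((n:ℝ)+1) * Real.exp (-((n:ℝ)+1)) ≤ Real.exp (n:ℝ) * Real.exp (-((n:ℝ)+1)) := by
      have := Real.exp_pos (-((n:ℝ)+1)); nlinarith
    have h3 : Real.exp (n:ℝ) * Real.exp (-((n:ℝ)+1)) = Real.exp (-1) := by
      rw [← Real.exp_add]; ring_nf
    have h4 : Real.exp (-1:ℝ) ≤ 1/2 := by
      have h5 : (2:ℝ) ≤ Real.exp 1 := by have := Real.add_one_le_exp (1:ℝ); linarith
      rw [Real.exp_neg]
      have h6 := Real.exp_pos (1:ℝ)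
      rw [inv_le_comm₀ (by positivity) (by norm_num)]
      simpa using h5
    linarith
  have hhalf : ∀ n : ℕ, ‖w n / z n‖ ≤ 1/2 := fun n => (habs_t n).trans (hpe n)
  have h1t : ∀ n : ℕ, (1 : ℂ) + w n / z n ≠ 0 := fun n => aux_ne _ (hhalf n)
  -- notation
  set L : ℕ → ℂ := fun n => (Real.log (‖z n‖) : ℂ) + Complex.I * (θ n : ℂ) with hL_def
  set c : ℕ → ℂ := fun n => Complex.log (1 + w n / z n) with hc_def
  have hcb : ∀ n, ‖c n‖ ≤ 2 * ‖w n / z n‖ :=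
    fun n => aux_log_bound _ (hhalf n)
  have hc1 : ∀ n, ‖c n‖ ≤ 1 := fun n => (hcb n).trans (by linarith [hhalf n])
  set K := max |Real.log ε| |Real.log M| with hK_def
  have hlogz : ∀ n : ℕ, |Real.log (‖z n‖)| ≤ Real.log ((n:ℝ)+1) + K := by
    intro n
    have hn1 : (0:ℝ) < (n:ℝ)+1 := by positivity
    have hlogn : 0 ≤ Real.log ((n:ℝ)+1) := Real.log_nonneg (by linarith)
    rw [abs_le]
    constructor
    · have h7 : Real.log (ε / ((n:ℝ)+1)) ≤ Real.log (‖z n‖) :=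
        (Real.log_le_log_iff (by positivity) (hzpos n)).2 (hzl n)
      rw [Real.log_div (ne_of_gt hε) (ne_of_gt hn1)] at h7
      have hKε : -K ≤ Real.log ε := by
        have := neg_abs_le (Real.log ε)
        have := le_max_left |Real.log ε| |Real.log M|
        rw [hK_def]; linarith
      linarith
    · have h7 : Real.log (‖z n‖) ≤ Real.log (M / ((n:ℝ)+1)) :=
        (Real.log_le_log_iff (hzpos n) (by positivity)).2 (hzu n)
      rw [Real.log_div (ne_of_gt hM0) (ne_of_gt hn1)] at h7
      have hKM : Real.log M ≤ K := (le_abs_self _).trans (le_max_right _ _)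
      linarith
  have hLb : ∀ n : ℕ, ‖L n‖ ≤ Real.log ((n:ℝ)+1) + K + Θ := by
    intro n
    calc ‖L n‖
        ≤ ‖(Real.log (‖z n‖) : ℂ)‖ + ‖Complex.I * (θ n : ℂ)‖ :=
          norm_add_le _ _
      _ = |Real.log (‖z n‖)| + |θ n| := by
          simp
      _ ≤ (Real.log ((n:ℝ)+1) + K) + Θ := add_le_add (hlogz n) (hΘ n)
      _ = Real.log ((n:ℝ)+1) + K + Θ := by ring
  -- the perturbation series
  set d : ℕ → ℂ → ℂ := fun n s =>
    b n * (Complex.exp (s * (L n + c n)) - Complex.exp (s * L n)) with hd_def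
  have hd_diff : ∀ n, Differentiable ℂ (d n) := by
    intro n
    apply Differentiable.const_mul
    exact ((differentiable_id.mul_const _).cexp).sub ((differentiable_id.mul_const _).cexp)
  -- the key uniform bound
  have hbound : ∀ R : ℝ, 1 ≤ R → ∀ n : ℕ, ∀ s ∈ Metric.closedBall (0:ℂ) R,
      ‖d n s‖ ≤ (Mb * Real.exp (R*(K+Θ)) * (4*R*Real.exp R)) *
        (((n:ℝ)+1)^(⌈R⌉₊ + 1) * Real.exp (-((n:ℝ)+1))) := by
    intro R hR n s hs
    have hR0 : (0:ℝ) < R := lt_of_lt_of_le one_pos hR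
    have hsR : ‖s‖ ≤ R := by
      simpa [Complex.dist_eq] using Metric.mem_closedBall.1 hs
    have hn1 : (0:ℝ) < (n:ℝ)+1 := by positivity
    have hlogn : 0 ≤ Real.log ((n:ℝ)+1) := Real.log_nonneg (by linarith)
    have hsplit : Complex.exp (s * (L n + c n)) - Complex.exp (s * L n)
        = Complex.exp (s * L n) * (Complex.exp (s * c n) - 1) := by
      rw [mul_add, Complex.exp_add]; ring
    have hA : ‖Complex.exp (s * L n)‖
        ≤ ((n:ℝ)+1)^(⌈R⌉₊) * Real.exp (R*(K+Θ)) := by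
      rw [Complex.norm_exp]
      have h1 : (s * L n).re ≤ ‖s * L n‖ := Complex.re_le_norm _
      have h2 : ‖s * L n‖ ≤ R * (Real.log ((n:ℝ)+1) + K + Θ) := by
        rw [norm_mul]
        exact mul_le_mul hsR (hLb n) (norm_nonneg _) hR0.le
      have h3 : R * Real.log ((n:ℝ)+1) ≤ (⌈R⌉₊ : ℝ) * Real.log ((n:ℝ)+1) :=
        mul_le_mul_of_nonneg_right (Nat.le_ceil R) hlogn
      calc Real.exp ((s * L n).re)
          ≤ Real.exp (R * (Real.log ((n:ℝ)+1) + K + Θ)) := Real.exp_le_exp.2 (h1.trans h2)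
        _ = Real.exp (R * Real.log ((n:ℝ)+1)) * Real.exp (R*(K+Θ)) := by
            rw [← Real.exp_add]; ring_nf
        _ ≤ Real.exp ((⌈R⌉₊ : ℝ) * Real.log ((n:ℝ)+1)) * Real.exp (R*(K+Θ)) := by
            have := Real.exp_pos (R*(K+Θ))
            exact mul_le_mul_of_nonneg_right (Real.exp_le_exp.2 h3) this.le
        _ = ((n:ℝ)+1)^(⌈R⌉₊) * Real.exp (R*(K+Θ)) := by
            rw [Real.exp_nat_mul, Real.exp_log hn1]
    have hB : ‖Complex.exp (s * c n) - 1‖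
        ≤ (4*R*Real.exp R) * (((n:ℝ)+1) * Real.exp (-((n:ℝ)+1))) := by
      have h3 : ‖s * c n‖ ≤ R * (2 * ‖w n / z n‖) := by
        rw [norm_mul]
        exact mul_le_mul hsR (hcb n) (norm_nonneg _) hR0.le
      have h4 : ‖s * c n‖ ≤ R := by
        rw [norm_mul]
        calc ‖s‖ * ‖c n‖ ≤ R * 1 :=
          mul_le_mul hsR (hc1 n) (norm_nonneg _) hR0.le
        _ = R := mul_one R
      calc ‖Complex.exp (s * c n) - 1‖
          ≤ 2 * ‖s * c n‖ * Real.exp (‖s * c n‖) :=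
            aux_norm_exp_sub_one_le _
        _ ≤ 2 * (R * (2 * ‖w n / z n‖)) * Real.exp R := by
            have h5 := Real.exp_le_exp.2 h4
            have h6 := norm_nonneg (s * c n)
            have h7 := Real.exp_pos (‖s * c n‖)
            nlinarith [norm_nonneg (w n / z n), Real.exp_pos R]
        _ = (4*R*Real.exp R) * ‖w n / z n‖ := by ring
        _ ≤ (4*R*Real.exp R) * (((n:ℝ)+1) * Real.exp (-((n:ℝ)+1))) := by
            have := habs_t n
            have : (0:ℝ) ≤ 4*R*Real.exp R := by positivity
            nlinarith [habs_t n]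
    rw [hd_def]
    rw [norm_mul, hsplit, norm_mul]
    calc ‖b n‖ * (‖Complex.exp (s * L n)‖ *
          ‖Complex.exp (s * c n) - 1‖)
        ≤ Mb * ((((n:ℝ)+1)^(⌈R⌉₊) * Real.exp (R*(K+Θ))) *
            ((4*R*Real.exp R) * (((n:ℝ)+1) * Real.exp (-((n:ℝ)+1))))) := by
          apply mul_le_mul (hMb n) _ (by positivity) hMb0
          apply mul_le_mul hA hB (norm_nonneg _) (by positivity)
      _ = (Mb * Real.exp (R*(K+Θ)) * (4*R*Real.exp R)) *
            (((n:ℝ)+1)^(⌈R⌉₊ + 1) * Real.exp (-((n:ℝ)+1))) := by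
          rw [pow_succ]; ring
  -- entirety of the perturbation
  have hH : Differentiable ℂ (fun s => ∑' n, d n s) := by
    apply aux_differentiable_tsum d hd_diff
    intro R hR0
    set R' := max R 1 with hR'_def
    refine ⟨_, (aux_summable_pow_exp (⌈R'⌉₊ + 1)).mul_left
      (Mb * Real.exp (R'*(K+Θ)) * (4*R'*Real.exp R')), ?_⟩
    intro n s hs
    exact hbound R' (le_max_right _ _) n s
      (Metric.closedBall_subset_closedBall (le_max_left _ _) hs)
  have hd_sum : ∀ s : ℂ, Summable (fun n => d n s) := by
    intro s
    set R := max ‖s‖ 1 with hR_def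
    apply Summable.of_norm_bounded ((aux_summable_pow_exp (⌈R⌉₊ + 1)).mul_left
      (Mb * Real.exp (R*(K+Θ)) * (4*R*Real.exp R)))
    intro n
    apply hbound R (le_max_right _ _) n s
    simp only [Metric.mem_closedBall, Complex.dist_eq, sub_zero]
    exact le_trans le_rfl (le_max_left _ _)
  -- summability of the unperturbed series for re s > 1
  have hg_sum : ∀ s : ℂ, 1 < s.re → Summable (fun n => b n * Complex.exp (s * L n)) := by
    intro s hs1
    have hp : (0:ℝ) < s.re := by linarith
    have hsum0 : Summable (fun n : ℕ => (((n:ℝ)+1) ^ s.re)⁻¹) := by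
      have h1 := Real.summable_nat_rpow_inv.2 hs1
      have h2 := (summable_nat_add_iff 1).2 h1
      refine h2.congr fun n => ?_
      push_cast
      ring_nf
    apply Summable.of_norm_bounded (hsum0.mul_left (Mb * Real.exp (|s.im| * Θ) * M ^ s.re))
    intro n
    have hn1 : (0:ℝ) < (n:ℝ)+1 := by positivity
    rw [norm_mul, Complex.norm_exp]
    have hre : (s * L n).re = s.re * Real.log (‖z n‖) - s.im * θ n := by
      rw [hL_def]
      simp [Complex.mul_re, Complex.add_re, Complex.add_im, Complex.mul_im]
    have hexp1 : Real.exp (s.re * Real.log (‖z n‖))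
        ≤ M ^ s.re * (((n:ℝ)+1) ^ s.re)⁻¹ := by
      have he : Real.exp (s.re * Real.log (‖z n‖))
          = (‖z n‖) ^ s.re := by
        rw [Real.rpow_def_of_pos (hzpos n), mul_comm]
      rw [he]
      calc (‖z n‖) ^ s.re ≤ (M / ((n:ℝ)+1)) ^ s.re :=
          Real.rpow_le_rpow (norm_nonneg _) (hzu n) hp.le
        _ = M ^ s.re * (((n:ℝ)+1) ^ s.re)⁻¹ := by
          rw [Real.div_rpow hM0.le hn1.le, div_eq_mul_inv]
    have hexp2 : Real.exp (-(s.im * θ n)) ≤ Real.exp (|s.im| * Θ) := by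
      apply Real.exp_le_exp.2
      calc -(s.im * θ n) ≤ |s.im * θ n| := neg_le_abs _
        _ = |s.im| * |θ n| := abs_mul _ _
        _ ≤ |s.im| * Θ := mul_le_mul_of_nonneg_left (hΘ n) (abs_nonneg _)
    calc ‖b n‖ * Real.exp ((s * L n).re)
        = ‖b n‖ *
          (Real.exp (s.re * Real.log (‖z n‖)) * Real.exp (-(s.im * θ n))) := by
          rw [hre, ← Real.exp_add]; ring_nf
      _ ≤ Mb * ((M ^ s.re * (((n:ℝ)+1) ^ s.re)⁻¹) * Real.exp (|s.im| * Θ)) := by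
          apply mul_le_mul (hMb n) _ (by positivity) hMb0
          apply mul_le_mul hexp1 hexp2 (Real.exp_pos _).le (by positivity)
      _ = (Mb * Real.exp (|s.im| * Θ) * M ^ s.re) * ((((n:ℝ)+1) ^ s.re)⁻¹) := by ring
  -- the branch identity
  have hL' : ∀ n : ℕ, (Real.log (‖z n + w n‖) : ℂ) +
      Complex.I * ((θ n : ℂ) + (Complex.arg (1 + w n / z n) : ℂ)) = L n + c n := by
    intro n
    have hzw : z n + w n = z n * (1 + w n / z n) := by
      field_simp [hz n]
    have habs : ‖z n + w n‖ = ‖z n‖ * ‖1 + w n / z n‖ := by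
      rw [hzw, norm_mul]
    have hlog : Real.log (‖z n + w n‖)
        = Real.log (‖z n‖) + Real.log (‖1 + w n / z n‖) := by
      rw [habs, Real.log_mul (ne_of_gt (hzpos n)) (ne_of_gt (norm_pos_iff.2 (h1t n)))]
    show (Real.log (‖z n + w n‖) : ℂ) +
        Complex.I * ((θ n : ℂ) + (Complex.arg (1 + w n / z n) : ℂ))
      = ((Real.log (‖z n‖) : ℂ) + Complex.I * (θ n : ℂ)) +
        Complex.log (1 + w n / z n)
    rw [aux_log_eq (1 + w n / z n), hlog]
    push_cast
    ring
  -- assemble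
  refine ⟨fun s => F s + ∑' n, d n s, ?_, ?_⟩
  · have hHm : MeromorphicOn (fun s => ∑' n, d n s) Set.univ :=
      (hH.differentiableOn.analyticOnNhd isOpen_univ).meromorphicOn
    exact hF.add hHm
  · intro s hs
    show F s + (∑' n, d n s) = _
    rw [hFeq s hs, ← Summable.tsum_add (hg_sum s hs) (hd_sum s)]
    apply tsum_congr
    intro n
    rw [hL' n]
    show b n * Complex.exp (s * L n) +
        b n * (Complex.exp (s * (L n + c n)) - Complex.exp (s * L n))
      = b n * Complex.exp (s * (L n + c n))
    ring
end

section
/- Let a : ℕ → ℂ be bounded and let λ : ℕ → ℂ satisfy sup_n |Im(λ n)| < ∞, ε := ⨅_n (n+1)·|exp(−λ n)| > 0 and sup_n (n+1)·|exp(−λ n)| < ∞. Suppose F : ℂ → ℂ is meromorphic on all of ℂ and F(s) = Σ'_n a n · exp(−(λ n)·s) for every s with Re s > 1. Let μ : ℕ → ℂ satisfy |Im(μ n − λ n)| < π for all n, and suppose there exists η > 0 with sup_n (n+1)·exp(η·(n+1))·|exp(−λ n) − exp(−μ n)| < ε. Then there exists G : ℂ → ℂ meromorphic on all of ℂ such that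 G(s) = Σ'_n a n · exp(−(μ n)·s) for every s with Re s > 1. -/
open Complex Filter

lemma dirichlet_aux_summable (a : ℕ → ℂ) (M : ℝ) (hM : ∀ n, ‖a n‖ ≤ M)
    (lam : ℕ → ℂ) (Mi : ℝ) (hIm : ∀ n, |(lam n).im| ≤ Mi)
    (C : ℝ) (hC : ∀ n : ℕ, ‖Complex.exp (-lam n)‖ ≤ C / ((n : ℝ) + 1))
    (s : ℂ) (hs : 1 < s.re) :
    Summable (fun n : ℕ => a n * Complex.exp (-(lam n) * s)) := by
  have hC0 : 0 ≤ C := by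
    have := (norm_nonneg _).trans (hC 0)
    simpa using this
  have hsum : Summable (fun n : ℕ => M * Real.exp (Mi * |s.im|) * C ^ s.re *
      (1 / ((n : ℝ) + 1) ^ s.re)) := by
    apply Summable.mul_left
    have h := (Real.summable_one_div_nat_rpow (p := s.re)).2 hs
    have h2 := (summable_nat_add_iff 1).2 h
    refine h2.congr fun n => ?_
    push_cast
    ring_nf
  refine Summable.of_norm_bounded hsum fun n => ?_
  have hM0 : 0 ≤ M := (norm_nonneg _).trans (hM 0)
  rw [norm_mul]
  have h1 : ‖Complex.exp (-(lam n) * s)‖ = Real.exp ((-(lam n) * s).re) := Complex.norm_exp _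
  have hre : (-(lam n) * s).re = -(lam n).re * s.re + (lam n).im * s.im := by
    simp [Complex.mul_re]
    ring
  have h2 : Real.exp ((-(lam n) * s).re) ≤ (C / ((n:ℝ)+1)) ^ s.re * Real.exp (Mi * |s.im|) := by
    rw [hre, Real.exp_add]
    have hA : Real.exp (-(lam n).re * s.re) ≤ (C / ((n:ℝ)+1)) ^ s.re := by
      rw [show -(lam n).re * s.re = (-(lam n).re) * s.re from rfl, Real.exp_mul]
      have : Real.exp (-(lam n).re) = ‖Complex.exp (-lam n)‖ := by
        rw [Complex.norm_exp]; simp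
      rw [this]
      exact Real.rpow_le_rpow (norm_nonneg _) (hC n) (by linarith)
    have hB : Real.exp ((lam n).im * s.im) ≤ Real.exp (Mi * |s.im|) := by
      apply Real.exp_le_exp.2
      calc (lam n).im * s.im ≤ |(lam n).im * s.im| := le_abs_self _
        _ = |(lam n).im| * |s.im| := abs_mul _ _
        _ ≤ Mi * |s.im| := mul_le_mul_of_nonneg_right (hIm n) (abs_nonneg _)
    exact mul_le_mul hA hB (Real.exp_nonneg _) (by positivity)
  have h3 : (C / ((n:ℝ)+1)) ^ s.re = C ^ s.re * (1 / ((n:ℝ)+1) ^ s.re) := by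
    rw [Real.div_rpow hC0 (by positivity)]
    ring
  calc ‖a n‖ * ‖Complex.exp (-(lam n) * s)‖
      ≤ M * ((C / ((n:ℝ)+1)) ^ s.re * Real.exp (Mi * |s.im|)) := by
        rw [h1]; exact mul_le_mul (hM n) h2 (Real.exp_nonneg _) hM0
    _ = M * Real.exp (Mi * |s.im|) * C ^ s.re * (1 / ((n : ℝ) + 1) ^ s.re) := by
        rw [h3]; ring



set_option maxHeartbeats 1000000 in
/-- Stability of meromorphic continuation of general Dirichlet series
`D(a, λ, s) = ∑ a n e^{−λ_n s}`: if the series extends meromorphically to all of `ℂ`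
and `μ` is an exponentially small perturbation of `λ` (in the sense that
`sup_n (n+1) e^{η(n+1)} |e^{−λ n} − e^{−μ n}| < ε = ⨅ (n+1)|e^{−λ n}|` for some
`η > 0`), then `D(a, μ, s)` also extends meromorphically to all of `ℂ`. -/
theorem dirichlet_series_meromorphic_continuation_stable
    (a : ℕ → ℂ) (ha : ∃ M : ℝ, ∀ n, ‖a n‖ ≤ M)
    (lam : ℕ → ℂ) (hIm : ∃ M : ℝ, ∀ n, |(lam n).im| ≤ M)
    (hε : 0 < ⨅ n : ℕ, ((n : ℝ) + 1) * ‖Complex.exp (-lam n)‖)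
    (hbig : ∃ M : ℝ, ∀ n : ℕ, ((n : ℝ) + 1) * ‖Complex.exp (-lam n)‖ ≤ M)
    (F : ℂ → ℂ) (hF : MeromorphicOn F Set.univ)
    (hFeq : ∀ s : ℂ, 1 < s.re → F s = ∑' n : ℕ, a n * Complex.exp (-(lam n) * s))
    (μ : ℕ → ℂ) (hμIm : ∀ n, |(μ n - lam n).im| < Real.pi)
    (hμ : ∃ η : ℝ, 0 < η ∧
      ∃ δ : ℝ, δ < (⨅ n : ℕ, ((n : ℝ) + 1) * ‖Complex.exp (-lam n)‖) ∧
        ∀ n : ℕ, ((n : ℝ) + 1) * Real.exp (η * ((n : ℝ) + 1)) *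
          ‖Complex.exp (-lam n) - Complex.exp (-μ n)‖ ≤ δ) :
    ∃ G : ℂ → ℂ, MeromorphicOn G Set.univ ∧
      ∀ s : ℂ, 1 < s.re → G s = ∑' n : ℕ, a n * Complex.exp (-(μ n) * s) := by
  classical
  obtain ⟨M0, hM0⟩ := ha
  set M : ℝ := max M0 0 with hMdef
  have hM : ∀ n, ‖a n‖ ≤ M := fun n => (hM0 n).trans (le_max_left _ _)
  have hMnn : 0 ≤ M := le_max_right _ _
  obtain ⟨Mi0, hMi0⟩ := hIm
  set Mi : ℝ := max Mi0 0 with hMidef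
  have hMi : ∀ n, |(lam n).im| ≤ Mi := fun n => (hMi0 n).trans (le_max_left _ _)
  have hMinn : 0 ≤ Mi := le_max_right _ _
  obtain ⟨M2, hM2⟩ := hbig
  set ε : ℝ := ⨅ n : ℕ, ((n : ℝ) + 1) * ‖Complex.exp (-lam n)‖ with hεdef
  obtain ⟨η, hη, δ, hδε, hδ⟩ := hμ
  have hδ0 : 0 ≤ δ := le_trans (by positivity) (hδ 0)
  have hbdd : BddBelow (Set.range fun n : ℕ =>
      ((n : ℝ) + 1) * ‖Complex.exp (-lam n)‖) := by
    refine ⟨0, ?_⟩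
    rintro x ⟨n, rfl⟩
    positivity
  have hlow : ∀ n : ℕ, ε / ((n:ℝ)+1) ≤ ‖Complex.exp (-lam n)‖ := by
    intro n
    rw [div_le_iff₀ (by positivity)]
    exact le_trans (ciInf_le hbdd n) (le_of_eq (mul_comm _ _))
  have hM2pos : 0 < M2 := by
    have h1 := ciInf_le hbdd 0
    have h2 := hM2 0
    rw [← hεdef] at h1
    calc (0:ℝ) < ε := hε
      _ ≤ _ := h1
      _ ≤ M2 := h2
  have hhi : ∀ n : ℕ, ‖Complex.exp (-lam n)‖ ≤ M2 / ((n:ℝ)+1) := by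
    intro n
    rw [le_div_iff₀ (by positivity)]
    exact le_trans (le_of_eq (mul_comm _ _)) (hM2 n)
  have hd : ∀ n : ℕ, ‖Complex.exp (-lam n) - Complex.exp (-μ n)‖ ≤
      δ / (((n:ℝ)+1) * Real.exp (η*((n:ℝ)+1))) := by
    intro n
    rw [le_div_iff₀ (by positivity)]
    calc ‖Complex.exp (-lam n) - Complex.exp (-μ n)‖ * (((n:ℝ)+1) * Real.exp (η*((n:ℝ)+1)))
        = ((n:ℝ)+1) * Real.exp (η*((n:ℝ)+1)) * ‖Complex.exp (-lam n) - Complex.exp (-μ n)‖ := by ring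
      _ ≤ δ := hδ n
  set q : ℝ := δ / ε with hqdef
  have hq0 : 0 ≤ q := by positivity
  have hq1 : q < 1 := (div_lt_one hε).2 hδε
  set w : ℕ → ℂ := fun n => (Complex.exp (-lam n) - Complex.exp (-μ n)) / Complex.exp (-lam n)
    with hwdef
  have hw : ∀ n, ‖w n‖ ≤ q * Real.exp (-(η*((n:ℝ)+1))) := by
    intro n
    rw [hwdef]
    simp only [norm_div]
    rw [div_le_iff₀ (norm_pos_iff.mpr (Complex.exp_ne_zero _))]
    have h2 : q * Real.exp (-(η*((n:ℝ)+1))) * (ε/((n:ℝ)+1)) =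
        δ / (((n:ℝ)+1) * Real.exp (η*((n:ℝ)+1))) := by
      rw [hqdef, Real.exp_neg]
      field_simp
    calc ‖Complex.exp (-lam n) - Complex.exp (-μ n)‖
        ≤ δ / (((n:ℝ)+1) * Real.exp (η*((n:ℝ)+1))) := hd n
      _ = q * Real.exp (-(η*((n:ℝ)+1))) * (ε/((n:ℝ)+1)) := h2.symm
      _ ≤ q * Real.exp (-(η*((n:ℝ)+1))) * ‖Complex.exp (-lam n)‖ := by
          exact mul_le_mul_of_nonneg_left (hlow n) (by positivity)
  have hwq : ∀ n, ‖w n‖ ≤ q := by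
    intro n
    refine (hw n).trans ?_
    have h1 : Real.exp (-(η*((n:ℝ)+1))) ≤ 1 := by
      rw [Real.exp_le_one_iff]
      have : (0:ℝ) ≤ η * ((n:ℝ)+1) := by positivity
      linarith
    nlinarith [hq0]
  have hw1 : ∀ n, ‖w n‖ < 1 := fun n => lt_of_le_of_lt (hwq n) hq1
  have hexpnu : ∀ n, Complex.exp (-(μ n - lam n)) = 1 - w n := by
    intro n
    have h1 : (1:ℂ) - w n = Complex.exp (-μ n) / Complex.exp (-lam n) := by
      rw [hwdef]
      field_simp
      ring
    rw [h1, ← Complex.exp_sub]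
    congr 1
    ring
  have hnu_eq : ∀ n, -(μ n - lam n) = Complex.log (1 - w n) := by
    intro n
    rw [← hexpnu n, Complex.log_exp]
    · have := (abs_lt.1 (hμIm n)).2
      simp only [Complex.neg_im]
      linarith
    · have := (abs_lt.1 (hμIm n)).1
      simp only [Complex.neg_im]
      linarith
  have h1q : (0:ℝ) < 1 - q := by linarith
  set Cq : ℝ := q * (1-q)⁻¹ / 2 + 1 with hCqdef
  have hCq0 : 0 ≤ Cq := by positivity
  set K : ℝ := Cq * q with hKdef
  have hK0 : 0 ≤ K := by positivity
  have hnu : ∀ n, ‖μ n - lam n‖ ≤ K * Real.exp (-(η*((n:ℝ)+1))) := by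
    intro n
    have hx : ‖(-w n : ℂ)‖ = ‖w n‖ := by
      rw [norm_neg]
    have h0 : ‖μ n - lam n‖ = ‖Complex.log (1 + (-w n))‖ := by
      rw [show (1:ℂ) + -w n = 1 - w n by ring, ← hnu_eq n, norm_neg]
    have h2 := Complex.norm_log_one_add_le (z := -w n) (by rw [hx]; exact hw1 n)
    rw [h0]
    set x : ℝ := ‖w n‖ with hxdef
    rw [hx] at h2
    have hx0 : 0 ≤ x := norm_nonneg _
    have hxq : x ≤ q := hwq n
    have h1x : (0:ℝ) < 1 - x := by linarith [hw1 n]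
    have hinv : (1-x)⁻¹ ≤ (1-q)⁻¹ := by
      apply inv_anti₀ h1q
      linarith
    have h5 : x^2 * (1-x)⁻¹ ≤ (q*x) * (1-q)⁻¹ := by
      apply mul_le_mul _ hinv (inv_nonneg.2 h1x.le) (mul_nonneg hq0 hx0)
      nlinarith
    calc ‖Complex.log (1 + -w n)‖ ≤ x ^ 2 * (1 - x)⁻¹ / 2 + x := h2
      _ ≤ Cq * x := by rw [hCqdef]; nlinarith
      _ ≤ Cq * (q * Real.exp (-(η*((n:ℝ)+1)))) := mul_le_mul_of_nonneg_left (hw n) hCq0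
      _ = K * Real.exp (-(η*((n:ℝ)+1))) := by rw [hKdef]; ring
  set CL0 : ℝ := max |Real.log ε| |Real.log M2| with hCL0def
  have hre : ∀ n : ℕ, |(lam n).re| ≤ Real.log ((n:ℝ)+1) + CL0 := by
    intro n
    have he : ‖Complex.exp (-lam n)‖ = Real.exp (-(lam n).re) := by
      rw [Complex.norm_exp, Complex.neg_re]
    have l1 : Real.log ε - Real.log ((n:ℝ)+1) ≤ -(lam n).re := by
      have h := Real.log_le_log (by positivity) ((hlow n).trans_eq he)
      rwa [Real.log_exp, Real.log_div (ne_of_gt hε) (by positivity)] at h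
    have l2 : -(lam n).re ≤ Real.log M2 - Real.log ((n:ℝ)+1) := by
      have h := Real.log_le_log (Real.exp_pos _) (he ▸ hhi n)
      rwa [Real.log_exp, Real.log_div (ne_of_gt hM2pos) (by positivity)] at h
    have hln : 0 ≤ Real.log ((n:ℝ)+1) := Real.log_nonneg (by push_cast; linarith [Nat.cast_nonneg (α := ℝ) n])
    have e1 : |Real.log ε| ≤ CL0 := le_max_left _ _
    have e2 : |Real.log M2| ≤ CL0 := le_max_right _ _
    rw [abs_le]
    constructor
    · linarith [le_abs_self (Real.log M2)]
    · linarith [neg_abs_le (Real.log ε)]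
  set CL : ℝ := CL0 + Mi with hCLdef
  have hCL0nn : 0 ≤ CL0 := le_trans (abs_nonneg _) (le_max_left _ _)
  have hCLnn : 0 ≤ CL := by positivity
  have hlamnorm : ∀ n : ℕ, ‖lam n‖ ≤ Real.log ((n:ℝ)+1) + CL := by
    intro n
    calc ‖lam n‖ ≤ |(lam n).re| + |(lam n).im| := Complex.norm_le_abs_re_add_abs_im _
      _ ≤ (Real.log ((n:ℝ)+1) + CL0) + Mi := add_le_add (hre n) (hMi n)
      _ = Real.log ((n:ℝ)+1) + CL := by rw [hCLdef]; ring
  set f : ℕ → ℂ → ℂ := fun n s => a n * (Complex.exp (-(μ n) * s) - Complex.exp (-(lam n) * s))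
    with hfdef
  have hfact : ∀ n s, f n s =
      a n * Complex.exp (-(lam n) * s) * (Complex.exp (-(μ n - lam n) * s) - 1) := by
    intro n s
    have h : Complex.exp (-(lam n)*s) * Complex.exp (-(μ n - lam n)*s) = Complex.exp (-(μ n)*s) := by
      rw [← Complex.exp_add]
      congr 1
      ring
    simp only [hfdef]
    linear_combination (-(a n)) * h
  have hdfn : ∀ n, Differentiable ℂ (f n) := by
    intro n
    rw [hfdef]
    fun_prop
  set H : ℂ → ℂ := fun s => ∑' n, f n s with hHdef
  have hHdiff : Differentiable ℂ H := by
    intro s0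
    set R : ℝ := ‖s0‖ + 1 with hRdef
    have hR : 0 < R := by positivity
    obtain ⟨N, hN⟩ : ∃ N : ℕ, ∀ n ≥ N, K * R * Real.exp (-(η*((n:ℝ)+1))) ≤ 1 := by
      have h1 : Filter.Tendsto (fun n : ℕ => -(η*((n:ℝ)+1))) Filter.atTop Filter.atBot := by
        apply Filter.tendsto_neg_atTop_atBot.comp
        apply Filter.Tendsto.const_mul_atTop hη
        apply Filter.tendsto_atTop_add_const_right
        exact tendsto_natCast_atTop_atTop
      have ht : Filter.Tendsto (fun n : ℕ => K * R * Real.exp (-(η*((n:ℝ)+1)))) Filter.atTop (nhds 0) := by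
        rw [show (0:ℝ) = K * R * 0 by ring]
        exact (Real.tendsto_exp_atBot.comp h1).const_mul _
      have := ht.eventually_lt_const (show (0:ℝ) < 1 by norm_num)
      rw [Filter.eventually_atTop] at this
      obtain ⟨N, hN⟩ := this
      exact ⟨N, fun n hn => (hN n hn).le⟩
    set u : ℕ → ℝ := fun n => (M * Real.exp (CL * R) * (2 * (K * R))) *
      (((n:ℝ)+1) ^ R * Real.exp (-(η*((n:ℝ)+1)))) with hudef
    have hu : Summable u := by
      rw [hudef]
      apply Summable.mul_left
      set k : ℕ := ⌈R⌉₊ with hkdef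
      have hg : Summable (fun m : ℕ => (m:ℝ)^k * Real.exp (-η) ^ m) := by
        apply summable_pow_mul_geometric_of_norm_lt_one
        rw [Real.norm_eq_abs, abs_of_pos (Real.exp_pos _)]
        rw [Real.exp_lt_one_iff]
        linarith
      have hg1 : Summable (fun n : ℕ => ((n+1:ℕ):ℝ)^k * Real.exp (-η) ^ (n+1)) :=
        (summable_nat_add_iff 1).2 hg
      apply Summable.of_nonneg_of_le (fun n => by positivity) ?_ hg1
      intro n
      have e1 : ((n:ℝ)+1)^R ≤ ((n:ℝ)+1)^(k:ℝ) :=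
        Real.rpow_le_rpow_of_exponent_le (by linarith [Nat.cast_nonneg (α := ℝ) n]) (Nat.le_ceil R)
      rw [Real.rpow_natCast] at e1
      have e2 : Real.exp (-(η*((n:ℝ)+1))) = Real.exp (-η) ^ (n+1) := by
        rw [← Real.exp_nat_mul]
        congr 1
        push_cast
        ring
      rw [e2]
      push_cast
      exact mul_le_mul_of_nonneg_right e1 (by positivity)
    have hfu : ∀ᶠ n in Filter.cofinite, ∀ x ∈ Metric.ball (0:ℂ) R, ‖f n x‖ ≤ u n := by
      rw [Nat.cofinite_eq_atTop]
      filter_upwards [Filter.eventually_ge_atTop N] with n hn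
      intro x hx
      have hxR : ‖x‖ < R := by
        simpa [Complex.dist_eq] using hx
      have b1 : ‖Complex.exp (-(lam n)*x)‖ ≤ ((n:ℝ)+1)^R * Real.exp (CL*R) := by
        rw [Complex.norm_exp]
        have h1 : (-(lam n)*x).re ≤ (Real.log ((n:ℝ)+1) + CL) * R := by
          calc (-(lam n)*x).re ≤ |(-(lam n)*x).re| := le_abs_self _
            _ ≤ ‖-(lam n)*x‖ := Complex.abs_re_le_norm _
            _ = ‖lam n‖ * ‖x‖ := by rw [norm_mul, norm_neg]
            _ ≤ (Real.log ((n:ℝ)+1) + CL) * R := by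
                apply mul_le_mul (hlamnorm n) hxR.le (norm_nonneg _)
                have : 0 ≤ Real.log ((n:ℝ)+1) :=
                  Real.log_nonneg (by linarith [Nat.cast_nonneg (α := ℝ) n])
                linarith
        calc Real.exp ((-(lam n)*x).re) ≤ Real.exp ((Real.log ((n:ℝ)+1) + CL) * R) :=
            Real.exp_le_exp.2 h1
          _ = ((n:ℝ)+1)^R * Real.exp (CL*R) := by
              rw [add_mul, Real.exp_add, Real.rpow_def_of_pos (by positivity)]
      have hz : ‖-(μ n - lam n)*x‖ ≤ K * R * Real.exp (-(η*((n:ℝ)+1))) := by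
        rw [norm_mul, norm_neg]
        calc ‖μ n - lam n‖ * ‖x‖
            ≤ (K * Real.exp (-(η*((n:ℝ)+1)))) * R :=
              mul_le_mul (hnu n) hxR.le (norm_nonneg _) (by positivity)
          _ = K * R * Real.exp (-(η*((n:ℝ)+1))) := by ring
      have b2 : ‖Complex.exp (-(μ n - lam n)*x) - 1‖ ≤
          2 * (K*R) * Real.exp (-(η*((n:ℝ)+1))) := by
        have hz1 : ‖-(μ n - lam n)*x‖ ≤ 1 := hz.trans (hN n hn)
        calc ‖Complex.exp (-(μ n - lam n)*x) - 1‖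
            ≤ 2 * ‖-(μ n - lam n)*x‖ := Complex.norm_exp_sub_one_le hz1
          _ ≤ 2 * (K * R * Real.exp (-(η*((n:ℝ)+1)))) := by linarith
          _ = 2 * (K*R) * Real.exp (-(η*((n:ℝ)+1))) := by ring
      rw [hfact n x]
      rw [norm_mul, norm_mul]
      calc ‖a n‖ * ‖Complex.exp (-(lam n)*x)‖ *
            ‖Complex.exp (-(μ n - lam n)*x) - 1‖
          ≤ M * (((n:ℝ)+1)^R * Real.exp (CL*R)) * (2 * (K*R) * Real.exp (-(η*((n:ℝ)+1)))) := by
            apply mul_le_mul _ b2 (norm_nonneg _) (by positivity)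
            exact mul_le_mul (hM n) b1 (norm_nonneg _) hMnn
        _ = u n := by rw [hudef]; ring
    have hdball : DifferentiableOn ℂ H (Metric.ball (0:ℂ) R) := by
      have hc := (tendstoUniformlyOn_tsum_of_cofinite_eventually hu hfu).tendstoLocallyUniformlyOn
      refine hc.differentiableOn (Filter.Eventually.of_forall fun t => ?_) Metric.isOpen_ball
      exact DifferentiableOn.fun_sum fun i _ => (hdfn i).differentiableOn
    have hmem : s0 ∈ Metric.ball (0:ℂ) R := by
      simp only [Metric.mem_ball, Complex.dist_eq, sub_zero, hRdef]
      linarith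
    exact (hdball.differentiableAt (Metric.isOpen_ball.mem_nhds hmem))
  have hHmero : MeromorphicOn H Set.univ :=
    ((hHdiff.differentiableOn).analyticOnNhd isOpen_univ).meromorphicOn
  refine ⟨fun s => F s + H s, fun x hx => (hF x hx).add (hHmero x hx), ?_⟩
  intro s hs
  have hSlam : Summable (fun n : ℕ => a n * Complex.exp (-(lam n) * s)) :=
    dirichlet_aux_summable a M hM lam Mi hMi M2 hhi s hs
  have hSmu : Summable (fun n : ℕ => a n * Complex.exp (-(μ n) * s)) := by
    apply dirichlet_aux_summable a M hM μ (Mi + Real.pi) ?_ (M2 + δ) ?_ s hs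
    · intro n
      have h1 : (μ n).im = (lam n).im + (μ n - lam n).im := by
        simp [Complex.sub_im]
      rw [h1]
      calc |(lam n).im + (μ n - lam n).im| ≤ |(lam n).im| + |(μ n - lam n).im| := abs_add_le _ _
        _ ≤ Mi + Real.pi := add_le_add (hMi n) (hμIm n).le
    · intro n
      have h1 : ‖Complex.exp (-μ n)‖ ≤ ‖Complex.exp (-lam n)‖ +
          ‖Complex.exp (-lam n) - Complex.exp (-μ n)‖ := by
        calc ‖Complex.exp (-μ n)‖
            = ‖Complex.exp (-lam n) - (Complex.exp (-lam n) - Complex.exp (-μ n))‖ := by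
              congr 1; ring
          _ ≤ _ := by
              exact
                norm_sub_le (Complex.exp (-lam n)) (Complex.exp (-lam n) - Complex.exp (-μ n))
      have h2 : ‖Complex.exp (-lam n) - Complex.exp (-μ n)‖ ≤ δ / ((n:ℝ)+1) := by
        refine (hd n).trans ?_
        apply div_le_div_of_nonneg_left hδ0 (by positivity)
        have := Real.one_le_exp (show (0:ℝ) ≤ η*((n:ℝ)+1) by positivity)
        nlinarith
      calc ‖Complex.exp (-μ n)‖ ≤ M2/((n:ℝ)+1) + δ/((n:ℝ)+1) :=
            le_trans h1 (add_le_add (hhi n) h2)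
        _ = (M2 + δ)/((n:ℝ)+1) := by ring
  have hHs : H s = (∑' n : ℕ, a n * Complex.exp (-(μ n) * s)) -
      ∑' n : ℕ, a n * Complex.exp (-(lam n) * s) := by
    have hstep : H s = ∑' n : ℕ,
        (a n * Complex.exp (-(μ n) * s) - a n * Complex.exp (-(lam n) * s)) := by
      simp only [hHdef, hfdef]
      exact tsum_congr fun n => by ring
    rw [hstep, Summable.tsum_sub hSmu hSlam]
  show F s + H s = ∑' n : ℕ, a n * Complex.exp (-(μ n) * s)
  rw [hFeq s hs, hHs]
  ring
end

section
/- Let a : ℕ → ℂ be bounded with Im(a n) ≥ 0 for all n. Let γ : ℝ → ℓ∞ be continuous on [0,1] with γ(0) = z0 and γ(1) = z1, such that for every t ∈ [0,1] and every n ∈ ℕ the complex number (n+1) + γ(t) n is not a real number ≤ 0. Suppose F0 : ℂ → ℂ is meromorphic on the half plane H₀ = {s : Re s > 0} and F0(s) = Σ'_n exp(2πi·(n+1)·a n) · ((n+1) + z0 n)^{−s} for every s with Re s > 1 (principal-branch powers). Then there exists F1 : ℂ → ℂ meromorphic on H₀ with F1(s) = Σ'_n exp(2πi·(n+1)·a n)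 · ((n+1) + z1 n)^{−s} for every s with Re s > 1. -/
open scoped ENNReal

/-- Norm bound for complex powers. -/
lemma zll_norm_cpow_le (z c : ℂ) :
    ‖z ^ c‖ ≤ ‖z‖ ^ c.re * Real.exp (Real.pi * |c.im|) := by
  refine (Complex.norm_cpow_le z c).trans ?_
  rw [div_le_iff₀ (Real.exp_pos _), mul_assoc, ← Real.exp_add]
  have h2 : |z.arg * c.im| ≤ Real.pi * |c.im| := by
    rw [abs_mul]
    exact mul_le_mul_of_nonneg_right (Complex.abs_arg_le_pi z) (abs_nonneg _)
  have h1 : (0:ℝ) ≤ Real.pi * |c.im| + z.arg * c.im := by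
    have := neg_abs_le (z.arg * c.im); linarith
  exact le_mul_of_one_le_right (Real.rpow_nonneg (norm_nonneg z) _)
    (Real.one_le_exp h1)

/-- Mean value bound for differences of complex powers on a right half-plane. -/
lemma zll_cpow_sub_norm_le {r : ℝ} (hr : 1 ≤ r) (s v w : ℂ)
    (hv : r ≤ v.re) (hw : r ≤ w.re) (hs : 0 < s.re) :
    ‖w ^ (-s) - v ^ (-s)‖ ≤
      ‖s‖ * Real.exp (Real.pi * |s.im|) * r ^ (-s.re - 1) * ‖w - v‖ := by
  have hconv : Convex ℝ {z : ℂ | r ≤ z.re} := convex_halfSpace_re_ge r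
  have hrpos : (0:ℝ) < r := lt_of_lt_of_le one_pos hr
  refine Convex.norm_image_sub_le_of_norm_hasDerivWithin_le
    (f := fun z : ℂ => z ^ (-s)) (f' := fun z : ℂ => -s * z ^ (-s - 1))
    (fun x hx => ?_) (fun x hx => ?_) hconv hv hw
  · have hx' : x ∈ Complex.slitPlane := Or.inl (lt_of_lt_of_le hrpos hx)
    exact ((Complex.hasStrictDerivAt_cpow_const (c := -s) hx').hasDerivAt).hasDerivWithinAt
  · have hx' : r ≤ ‖x‖ := le_trans hx (Complex.re_le_norm x)
    have h1 : ‖x ^ (-s - 1)‖ ≤ ‖x‖ ^ (-s.re - 1) * Real.exp (Real.pi * |s.im|) := by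
      have := zll_norm_cpow_le x (-s - 1)
      simpa using this
    have h2 : ‖x‖ ^ (-s.re - 1) ≤ r ^ (-s.re - 1) :=
      Real.rpow_le_rpow_of_nonpos hrpos hx' (by linarith)
    calc ‖-s * x ^ (-s - 1)‖ = ‖s‖ * ‖x ^ (-s - 1)‖ := by
          rw [norm_mul, norm_neg]
      _ ≤ ‖s‖ * (‖x‖ ^ (-s.re - 1) * Real.exp (Real.pi * |s.im|)) :=
          mul_le_mul_of_nonneg_left h1 (norm_nonneg s)
      _ ≤ ‖s‖ * (r ^ (-s.re - 1) * Real.exp (Real.pi * |s.im|)) := by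
          have := mul_le_mul_of_nonneg_right h2 (Real.exp_pos (Real.pi * |s.im|)).le
          exact mul_le_mul_of_nonneg_left this (norm_nonneg s)
      _ = ‖s‖ * Real.exp (Real.pi * |s.im|) * r ^ (-s.re - 1) := by ring

lemma zll_summable_aux {p : ℝ} (hp : p < -1) :
    Summable (fun n : ℕ => ((n : ℝ) + 1) ^ p) := by
  have h := (summable_nat_add_iff 1).mpr (Real.summable_nat_rpow.mpr hp)
  exact h.congr fun n => by push_cast; ring_nf

lemma zll_rpow_exp_bound {b ε R x : ℝ} (hb : 0 < b) (hε : ε ≤ x) (hR : x ≤ R) :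
    b ^ (-x) ≤ b ^ (-ε) + b ^ (-R) := by
  rcases le_total 1 b with h1 | h1
  · have := Real.rpow_le_rpow_of_exponent_le h1 (neg_le_neg hε)
    have h0 : (0:ℝ) ≤ b ^ (-R) := Real.rpow_nonneg hb.le _
    linarith
  · have := Real.rpow_le_rpow_of_exponent_ge hb h1 (neg_le_neg hR)
    have h0 : (0:ℝ) ≤ b ^ (-ε) := Real.rpow_nonneg hb.le _
    linarith

/-- Summability of the Lerch–Lipschitz series for `Re s > 1`. -/
lemma zll_summable_main (c : ℕ → ℂ) (hc : ∀ n, ‖c n‖ ≤ 1)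
    (z : ℕ → ℂ) (M : ℝ) (hM : 0 < M) (hz : ∀ n, ‖z n‖ ≤ M) (s : ℂ)
    (hs : 1 < s.re) :
    Summable (fun n : ℕ => c n * (((n : ℂ) + 1) + z n) ^ (-s)) := by
  refine Summable.of_norm_bounded_eventually_nat
    (g := fun n => (((n:ℝ)+1)/2) ^ (-s.re) * Real.exp (Real.pi * |s.im|)) ?_ ?_
  · have h : Summable (fun n : ℕ => ((n:ℝ)+1) ^ (-s.re)) := zll_summable_aux (by linarith)
    refine Summable.congr ((h.mul_right (((2:ℝ) ^ (-s.re))⁻¹)).mul_right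
      (Real.exp (Real.pi * |s.im|))) fun n => ?_
    rw [Real.div_rpow (by positivity) (by norm_num)]
    ring
  · filter_upwards [Filter.eventually_ge_atTop ⌈2*M⌉₊] with n hn
    have h2M : 2*M ≤ (n:ℝ) := le_trans (Nat.le_ceil _) (Nat.cast_le.mpr hn)
    have hzre : -M ≤ (z n).re := (abs_le.mp ((Complex.abs_re_le_norm (z n)).trans (hz n))).1
    have hreb : ((((n:ℂ)+1) + z n)).re = ((n:ℝ)+1) + (z n).re := by simp
    have hb : ((n:ℝ)+1)/2 ≤ ‖((n:ℂ)+1) + z n‖ := by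
      have := Complex.re_le_norm (((n:ℂ)+1) + z n)
      rw [hreb] at this
      linarith
    rw [norm_mul]
    have h1 : ‖(((n:ℂ)+1) + z n) ^ (-s)‖
        ≤ (((n:ℝ)+1)/2) ^ (-s.re) * Real.exp (Real.pi * |s.im|) := by
      refine le_trans (by simpa using zll_norm_cpow_le (((n:ℂ)+1) + z n) (-s)) ?_
      have hmono : ‖((n:ℂ)+1) + z n‖ ^ (-s.re) ≤ (((n:ℝ)+1)/2) ^ (-s.re) :=
        Real.rpow_le_rpow_of_nonpos (by positivity) hb (by linarith)
      exact mul_le_mul_of_nonneg_right hmono (Real.exp_pos _).le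
    calc ‖c n‖ * ‖(((n:ℂ)+1) + z n) ^ (-s)‖ ≤ 1 * ((((n:ℝ)+1)/2) ^ (-s.re)
          * Real.exp (Real.pi * |s.im|)) := by
          refine mul_le_mul ?_ h1 (norm_nonneg _) one_pos.le
          simpa using hc n
      _ = (((n:ℝ)+1)/2) ^ (-s.re) * Real.exp (Real.pi * |s.im|) := one_mul _

/-- If the Lerch–Lipschitz zeta series `ζ^{LL}(a, z0, s) = ∑ e^{2πi(n+1)a n}((n+1)+z0 n)^{−s}`
extends meromorphically to the half-plane `H₀ = {Re s > 0}`, and `z1` is joined to `z0` by a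
continuous path in `ℓ∞` along which every base `(n+1) + γ(t) n` avoids the closed negative
real axis, then `ζ^{LL}(a, z1, ·)` also extends meromorphically to `H₀`. -/
theorem zeta_LL_meromorphic_continuation_H0
    (a : ℕ → ℂ) (ha : ∃ M : ℝ, ∀ n, ‖a n‖ ≤ M)
    (haIm : ∀ n, 0 ≤ (a n).im)
    (z0 z1 : lp (fun _ : ℕ => ℂ) ∞)
    (γ : ℝ → lp (fun _ : ℕ => ℂ) ∞)
    (hγ : ContinuousOn γ (Set.Icc 0 1)) (h0 : γ 0 = z0) (h1 : γ 1 = z1)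
    (hray : ∀ t ∈ Set.Icc (0:ℝ) 1, ∀ n : ℕ,
      ¬ ∃ x : ℝ, x ≤ 0 ∧ ((n : ℂ) + 1) + γ t n = (x : ℂ))
    (F0 : ℂ → ℂ) (hF0 : MeromorphicOn F0 {s : ℂ | 0 < s.re})
    (hF0eq : ∀ s : ℂ, 1 < s.re →
      F0 s = ∑' n : ℕ,
        Complex.exp (2 * Real.pi * Complex.I * ((n : ℂ) + 1) * a n) *
          (((n : ℂ) + 1) + z0 n) ^ (-s)) :
    ∃ F1 : ℂ → ℂ, MeromorphicOn F1 {s : ℂ | 0 < s.re} ∧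
      ∀ s : ℂ, 1 < s.re →
        F1 s = ∑' n : ℕ,
          Complex.exp (2 * Real.pi * Complex.I * ((n : ℂ) + 1) * a n) *
            (((n : ℂ) + 1) + z1 n) ^ (-s) := by
  classical
  have hopen : IsOpen {s : ℂ | 0 < s.re} := isOpen_lt continuous_const Complex.continuous_re
  set M : ℝ := max 1 (max ‖z0‖ ‖z1‖) with hM_def
  have hM1 : (1:ℝ) ≤ M := le_max_left _ _
  have hM0 : (0:ℝ) < M := lt_of_lt_of_le one_pos hM1
  have hz0M : ∀ n, ‖z0 n‖ ≤ M := fun n =>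
    (lp.norm_apply_le_norm ENNReal.top_ne_zero z0 n).trans
      (le_trans (le_max_left _ _) (le_max_right _ _))
  have hz1M : ∀ n, ‖z1 n‖ ≤ M := fun n =>
    (lp.norm_apply_le_norm ENNReal.top_ne_zero z1 n).trans
      (le_trans (le_max_right _ _) (le_max_right _ _))
  have hv0 : ∀ n : ℕ, ((n : ℂ) + 1) + z0 n ≠ 0 := by
    intro n hn
    refine hray 0 (Set.left_mem_Icc.mpr zero_le_one) n ⟨0, le_refl 0, ?_⟩
    rw [h0, Complex.ofReal_zero]; exact hn
  have hw0 : ∀ n : ℕ, ((n : ℂ) + 1) + z1 n ≠ 0 := by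
    intro n hn
    refine hray 1 (Set.right_mem_Icc.mpr zero_le_one) n ⟨0, le_refl 0, ?_⟩
    rw [h1, Complex.ofReal_zero]; exact hn
  have he1 : ∀ n : ℕ,
      ‖Complex.exp (2 * Real.pi * Complex.I * ((n : ℂ) + 1) * a n)‖ ≤ 1 := by
    intro n
    rw [Complex.norm_exp, Real.exp_le_one_iff]
    have hre : (2 * (Real.pi:ℂ) * Complex.I * ((n : ℂ) + 1) * a n).re
        = -(2 * Real.pi * ((n:ℝ) + 1) * (a n).im) := by
      simp [Complex.mul_re, Complex.mul_im]
    rw [hre]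
    have h1 := haIm n
    have hπ := Real.pi_pos
    have hn : (0:ℝ) ≤ (n:ℝ) := n.cast_nonneg
    have hprod : 0 ≤ 2 * Real.pi * ((n:ℝ) + 1) * (a n).im :=
      mul_nonneg (mul_nonneg (by linarith) (by linarith)) h1
    linarith
  -- the correction term is holomorphic on the half-plane
  have hdiffG : DifferentiableOn ℂ (fun s : ℂ => ∑' n : ℕ,
      (Complex.exp (2 * Real.pi * Complex.I * ((n : ℂ) + 1) * a n) *
          (((n : ℂ) + 1) + z1 n) ^ (-s)
        - Complex.exp (2 * Real.pi * Complex.I * ((n : ℂ) + 1) * a n) *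
          (((n : ℂ) + 1) + z0 n) ^ (-s))) {s : ℂ | 0 < s.re} := by
    intro s₀ hs₀
    have hs₀re : 0 < s₀.re := hs₀
    set ε : ℝ := s₀.re / 2 with hε_def
    have hε : 0 < ε := by positivity
    set R : ℝ := ‖s₀‖ + 1 with hR_def
    have hR : 0 < R := by positivity
    set S : Set ℂ := {s : ℂ | ε < s.re} ∩ Metric.ball 0 R with hS_def
    have hSopen : IsOpen S :=
      (isOpen_lt continuous_const Complex.continuous_re).inter Metric.isOpen_ball
    have hs₀S : s₀ ∈ S := by
      constructor
      · show ε < s₀.re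
        rw [hε_def]; linarith
      · rw [Metric.mem_ball, dist_zero_right, hR_def]; linarith
    set N : ℕ := ⌈2*M⌉₊ with hN_def
    set B : ℕ → ℝ := fun n => R * Real.exp (Real.pi * R) * (((n:ℝ)+1)/2) ^ (-ε - 1) * (2*M)
      with hB_def
    set A : ℕ → ℝ := fun n => if n < N then
        (‖((n:ℂ)+1) + z1 n‖ ^ (-ε) + ‖((n:ℂ)+1) + z1 n‖ ^ (-R)
          + (‖((n:ℂ)+1) + z0 n‖ ^ (-ε) + ‖((n:ℂ)+1) + z0 n‖ ^ (-R)))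
          * Real.exp (Real.pi * R)
      else 0 with hA_def
    have hBsum : Summable B := by
      have h : Summable (fun n : ℕ => ((n:ℝ)+1) ^ (-ε - 1)) := zll_summable_aux (by linarith)
      refine Summable.congr (((h.mul_right (((2:ℝ) ^ (-ε-1))⁻¹)).mul_left
        (R * Real.exp (Real.pi * R))).mul_right (2*M)) fun n => ?_
      rw [hB_def]
      simp only []
      rw [Real.div_rpow (by positivity) (by norm_num)]
      ring
    have hAsum : Summable A := by
      refine summable_of_ne_finset_zero (s := Finset.range N) fun n hn => ?_
      rw [hA_def]
      simp only []
      rw [if_neg (by simpa using hn)]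
    have hf : ∀ n : ℕ, DifferentiableOn ℂ (fun s : ℂ =>
        Complex.exp (2 * Real.pi * Complex.I * ((n : ℂ) + 1) * a n) *
            (((n : ℂ) + 1) + z1 n) ^ (-s)
          - Complex.exp (2 * Real.pi * Complex.I * ((n : ℂ) + 1) * a n) *
            (((n : ℂ) + 1) + z0 n) ^ (-s)) S := by
      intro n
      have hdw : Differentiable ℂ (fun s : ℂ => (((n:ℂ)+1) + z1 n) ^ (-s)) := fun s =>
        ((hasDerivAt_neg s).const_cpow (Or.inl (hw0 n))).differentiableAt
      have hdv : Differentiable ℂ (fun s : ℂ => (((n:ℂ)+1) + z0 n) ^ (-s)) := fun s =>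
        ((hasDerivAt_neg s).const_cpow (Or.inl (hv0 n))).differentiableAt
      exact ((hdw.const_mul _).sub (hdv.const_mul _)).differentiableOn
    have hle : ∀ (n : ℕ) (s : ℂ), s ∈ S →
        ‖Complex.exp (2 * Real.pi * Complex.I * ((n : ℂ) + 1) * a n) *
              (((n : ℂ) + 1) + z1 n) ^ (-s)
            - Complex.exp (2 * Real.pi * Complex.I * ((n : ℂ) + 1) * a n) *
              (((n : ℂ) + 1) + z0 n) ^ (-s)‖ ≤ A n + B n := by
      intro n s hsS
      obtain ⟨hs1, hs2⟩ := hsS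
      have hsre : ε < s.re := hs1
      have hsabs : ‖s‖ < R := by
        rwa [Metric.mem_ball, dist_zero_right] at hs2
      have hsreR : s.re ≤ R := le_trans (Complex.re_le_norm s) hsabs.le
      have hsim : |s.im| ≤ R := le_trans (Complex.abs_im_le_norm s) hsabs.le
      have hexp : Real.exp (Real.pi * |s.im|) ≤ Real.exp (Real.pi * R) :=
        Real.exp_le_exp.mpr (mul_le_mul_of_nonneg_left hsim Real.pi_pos.le)
      have hBnn : 0 ≤ B n := by
        rw [hB_def]
        simp only []
        refine mul_nonneg (mul_nonneg (mul_nonneg hR.le (Real.exp_pos _).le)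
          (Real.rpow_nonneg (by positivity) _)) (by linarith)
      by_cases hn : n < N
      · -- small indices: crude bound on each term separately
        have hw' : ‖(((n:ℂ)+1) + z1 n) ^ (-s)‖
            ≤ (‖((n:ℂ)+1) + z1 n‖ ^ (-ε) + ‖((n:ℂ)+1) + z1 n‖ ^ (-R))
              * Real.exp (Real.pi * R) := by
          refine le_trans (by simpa using zll_norm_cpow_le (((n:ℂ)+1) + z1 n) (-s)) ?_
          refine mul_le_mul (zll_rpow_exp_bound ((norm_pos_iff.mpr (hw0 n))) hsre.le hsreR)
            hexp (Real.exp_pos _).le ?_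
          have := Real.rpow_nonneg (norm_nonneg (((n:ℂ)+1) + z1 n)) (-ε)
          have := Real.rpow_nonneg (norm_nonneg (((n:ℂ)+1) + z1 n)) (-R)
          linarith
        have hv' : ‖(((n:ℂ)+1) + z0 n) ^ (-s)‖
            ≤ (‖((n:ℂ)+1) + z0 n‖ ^ (-ε) + ‖((n:ℂ)+1) + z0 n‖ ^ (-R))
              * Real.exp (Real.pi * R) := by
          refine le_trans (by simpa using zll_norm_cpow_le (((n:ℂ)+1) + z0 n) (-s)) ?_
          refine mul_le_mul (zll_rpow_exp_bound ((norm_pos_iff.mpr (hv0 n))) hsre.le hsreR)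
            hexp (Real.exp_pos _).le ?_
          have := Real.rpow_nonneg (norm_nonneg (((n:ℂ)+1) + z0 n)) (-ε)
          have := Real.rpow_nonneg (norm_nonneg (((n:ℂ)+1) + z0 n)) (-R)
          linarith
        have hAn : A n = (‖((n:ℂ)+1) + z1 n‖ ^ (-ε)
            + ‖((n:ℂ)+1) + z1 n‖ ^ (-R)
            + (‖((n:ℂ)+1) + z0 n‖ ^ (-ε) + ‖((n:ℂ)+1) + z0 n‖ ^ (-R)))
            * Real.exp (Real.pi * R) := by
          rw [hA_def]; simp only []; rw [if_pos hn]
        have hcw : ‖Complex.exp (2 * Real.pi * Complex.I * ((n : ℂ) + 1) * a n) *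
            (((n : ℂ) + 1) + z1 n) ^ (-s)‖ ≤ ‖(((n:ℂ)+1) + z1 n) ^ (-s)‖ := by
          rw [norm_mul]
          exact mul_le_of_le_one_left (norm_nonneg _)
            (by simpa using he1 n)
        have hcv : ‖Complex.exp (2 * Real.pi * Complex.I * ((n : ℂ) + 1) * a n) *
            (((n : ℂ) + 1) + z0 n) ^ (-s)‖ ≤ ‖(((n:ℂ)+1) + z0 n) ^ (-s)‖ := by
          rw [norm_mul]
          exact mul_le_of_le_one_left (norm_nonneg _)
            (by simpa using he1 n)
        calc ‖Complex.exp (2 * Real.pi * Complex.I * ((n : ℂ) + 1) * a n) *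
                (((n : ℂ) + 1) + z1 n) ^ (-s)
              - Complex.exp (2 * Real.pi * Complex.I * ((n : ℂ) + 1) * a n) *
                (((n : ℂ) + 1) + z0 n) ^ (-s)‖
            ≤ ‖Complex.exp (2 * Real.pi * Complex.I * ((n : ℂ) + 1) * a n) *
                (((n : ℂ) + 1) + z1 n) ^ (-s)‖
              + ‖Complex.exp (2 * Real.pi * Complex.I * ((n : ℂ) + 1) * a n) *
                (((n : ℂ) + 1) + z0 n) ^ (-s)‖ := norm_sub_le _ _
          _ ≤ ‖(((n:ℂ)+1) + z1 n) ^ (-s)‖ + ‖(((n:ℂ)+1) + z0 n) ^ (-s)‖ := add_le_add hcw hcv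
          _ ≤ A n + B n := by
              rw [hAn, add_mul]
              have := add_le_add hw' hv'
              linarith
      · -- large indices: mean value bound
        push_neg at hn
        have h2M : 2*M ≤ (n:ℝ) := le_trans (Nat.le_ceil _) (Nat.cast_le.mpr hn)
        have hr1 : (1:ℝ) ≤ ((n:ℝ)+1)/2 := by linarith
        have hzre0 : -M ≤ (z0 n).re :=
          (abs_le.mp ((Complex.abs_re_le_norm (z0 n)).trans (hz0M n))).1
        have hzre1 : -M ≤ (z1 n).re :=
          (abs_le.mp ((Complex.abs_re_le_norm (z1 n)).trans (hz1M n))).1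
        have hrv : ((n:ℝ)+1)/2 ≤ ((((n:ℂ)+1) + z0 n)).re := by
          have : ((((n:ℂ)+1) + z0 n)).re = ((n:ℝ)+1) + (z0 n).re := by simp
          rw [this]; linarith
        have hrw : ((n:ℝ)+1)/2 ≤ ((((n:ℂ)+1) + z1 n)).re := by
          have : ((((n:ℂ)+1) + z1 n)).re = ((n:ℝ)+1) + (z1 n).re := by simp
          rw [this]; linarith
        have hsrepos : 0 < s.re := lt_trans hε hsre
        have key := zll_cpow_sub_norm_le hr1 s _ _ hrv hrw hsrepos
        have hwv : ‖(((n:ℂ)+1) + z1 n) - (((n:ℂ)+1) + z0 n)‖ ≤ 2*M := by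
          have heq : (((n:ℂ)+1) + z1 n) - (((n:ℂ)+1) + z0 n) = z1 n - z0 n := by ring
          rw [heq]
          calc ‖z1 n - z0 n‖ ≤ ‖z1 n‖ + ‖z0 n‖ := norm_sub_le _ _
            _ ≤ 2*M := by
                have := hz1M n; have := hz0M n
                linarith
        have hrm : (((n:ℝ)+1)/2) ^ (-s.re - 1) ≤ (((n:ℝ)+1)/2) ^ (-ε - 1) :=
          Real.rpow_le_rpow_of_exponent_le hr1 (by linarith)
        have hmain : ‖(((n:ℂ)+1) + z1 n) ^ (-s) - (((n:ℂ)+1) + z0 n) ^ (-s)‖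
            ≤ R * Real.exp (Real.pi * R) * (((n:ℝ)+1)/2) ^ (-ε - 1) * (2*M) := by
          refine key.trans ?_
          refine mul_le_mul (mul_le_mul (mul_le_mul hsabs.le hexp (Real.exp_pos _).le hR.le)
            hrm (Real.rpow_nonneg (by positivity) _)
            (mul_nonneg hR.le (Real.exp_pos _).le)) hwv (norm_nonneg _) ?_
          exact mul_nonneg (mul_nonneg hR.le (Real.exp_pos _).le)
            (Real.rpow_nonneg (by positivity) _)
        have hAn : A n = 0 := by rw [hA_def]; simp only []; rw [if_neg (not_lt.mpr hn)]
        have heqmul : Complex.exp (2 * Real.pi * Complex.I * ((n : ℂ) + 1) * a n) *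
              (((n : ℂ) + 1) + z1 n) ^ (-s)
            - Complex.exp (2 * Real.pi * Complex.I * ((n : ℂ) + 1) * a n) *
              (((n : ℂ) + 1) + z0 n) ^ (-s)
            = Complex.exp (2 * Real.pi * Complex.I * ((n : ℂ) + 1) * a n) *
              ((((n : ℂ) + 1) + z1 n) ^ (-s) - (((n : ℂ) + 1) + z0 n) ^ (-s)) := by ring
        rw [heqmul, norm_mul, hAn, zero_add, hB_def]
        simp only []
        calc ‖Complex.exp (2 * Real.pi * Complex.I * ((n : ℂ) + 1) * a n)‖ *
              ‖(((n : ℂ) + 1) + z1 n) ^ (-s) - (((n : ℂ) + 1) + z0 n) ^ (-s)‖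
            ≤ 1 * (R * Real.exp (Real.pi * R) * (((n:ℝ)+1)/2) ^ (-ε - 1) * (2*M)) := by
              refine mul_le_mul ?_ hmain (norm_nonneg _) one_pos.le
              simpa using he1 n
          _ = R * Real.exp (Real.pi * R) * (((n:ℝ)+1)/2) ^ (-ε - 1) * (2*M) := one_mul _
    exact ((Complex.differentiableOn_tsum_of_summable_norm (hAsum.add hBsum) hf hSopen
      hle).differentiableAt (hSopen.mem_nhds hs₀S)).differentiableWithinAt
  refine ⟨fun s => F0 s + ∑' n : ℕ,
      (Complex.exp (2 * Real.pi * Complex.I * ((n : ℂ) + 1) * a n) *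
          (((n : ℂ) + 1) + z1 n) ^ (-s)
        - Complex.exp (2 * Real.pi * Complex.I * ((n : ℂ) + 1) * a n) *
          (((n : ℂ) + 1) + z0 n) ^ (-s)), ?_, ?_⟩
  · exact hF0.add ((hdiffG.analyticOnNhd hopen).meromorphicOn)
  · intro s hs
    have h1' : Summable (fun n : ℕ =>
        Complex.exp (2 * Real.pi * Complex.I * ((n : ℂ) + 1) * a n) *
          (((n : ℂ) + 1) + z1 n) ^ (-s)) :=
      zll_summable_main _ he1 (fun n => z1 n) M hM0 hz1M s hs
    have h0' : Summable (fun n : ℕ =>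
        Complex.exp (2 * Real.pi * Complex.I * ((n : ℂ) + 1) * a n) *
          (((n : ℂ) + 1) + z0 n) ^ (-s)) :=
      zll_summable_main _ he1 (fun n => z0 n) M hM0 hz0M s hs
    beta_reduce
    rw [hF0eq s hs, h1'.tsum_sub h0']
    ring
end

section
/- Fix an integer k ≥ 1, a : Fin k → ℂ with Im(a j) ≥ 0 for all j, x : Fin k → ℝ with x j ≥ 0 for all j, and s ∈ ℂ with Re s > 1. Then Γ(s) · Σ_{n=1}^∞ exp(2πi·n·a_{ι(n)}) · (n + x_{ι(n)})^{−s} = Σ_{j ∈ Fin k} exp(2πi·(j+1)·(a j)) · ∫_{0}^{∞} t^{s−1} · exp(−((j+1) + x j)·t) / (1 − exp(2πi·k·(a j) − k·t)) dt, where t^{s−1} is the power of the positive real t, Γ is the complex Gamma function, and the integrals are over (0, ∞) (note |exp(2πi k a j − k t)| = e^{−2πk·Im(a j)}·e^{−kt} < 1 for t > 0, so the integrands are well defined, and both sides converge absolutely). -/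
open MeasureTheory Real Set

private lemma sum_aux {σ : ℝ} (hσ : 1 < σ) :
    Summable (fun n : ℕ ↦ (((n : ℝ) + 1) ^ σ)⁻¹) := by
  have := (Real.summable_nat_rpow_inv.mpr hσ).comp_injective Nat.succ_injective
  exact this.congr fun n ↦ by simp [Function.comp, Nat.succ_eq_add_one]

private lemma re_aux (c : ℝ) (A : ℂ) : (2 * (Real.pi : ℂ) * Complex.I * (c : ℂ) * A).re
    = -(2 * Real.pi * c * A.im) := by
  simp [Complex.mul_re, Complex.mul_im]

private lemma norm_exp_aux {c : ℝ} (hc : 0 ≤ c) {A : ℂ} (hA : 0 ≤ A.im) :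
    ‖Complex.exp (2 * (Real.pi : ℂ) * Complex.I * (c : ℂ) * A)‖ ≤ 1 := by
  rw [Complex.norm_exp, re_aux]
  apply Real.exp_le_one_iff.mpr
  have : 0 ≤ 2 * Real.pi * c * A.im := by positivity
  linarith

private lemma hasSum_fiber (k : ℕ) (hk : 0 < k) (j : ℕ) (hj : j < k)
    (A : ℂ) (hA : 0 ≤ A.im) (X : ℝ) (hX : 0 ≤ X) (s : ℂ) (hs : 1 < s.re) :
    HasSum (fun m : ℕ ↦ Complex.Gamma s *
        Complex.exp (2 * Real.pi * Complex.I * (((m * k + j : ℕ) : ℂ) + 1) * A) /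
        ((((m * k + j : ℕ) : ℝ) + 1 + X : ℝ) : ℂ) ^ s)
      (Complex.exp (2 * Real.pi * Complex.I * ((j : ℂ) + 1) * A) *
        ∫ t in Set.Ioi (0 : ℝ),
          (t : ℂ) ^ (s - 1) * Complex.exp (-(((j : ℂ) + 1) + (X : ℂ)) * t) /
            (1 - Complex.exp (2 * Real.pi * Complex.I * (k : ℂ) * A - (k : ℂ) * t))) := by
  have hs0 : 0 < s.re := by linarith
  set p : ℕ → ℝ := fun m ↦ ((m * k + j : ℕ) : ℝ) + 1 + X with hp_def
  have hp : ∀ m, (0 : ℝ) < p m := by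
    intro m
    have h0 : (0:ℝ) ≤ ((m * k + j : ℕ) : ℝ) := Nat.cast_nonneg _
    simp only [hp_def]
    linarith
  set c : ℕ → ℂ := fun m ↦ Complex.exp (2 * Real.pi * Complex.I * (((m * k + j : ℕ) : ℂ) + 1) * A)
    with hc_def
  set F : ℝ → ℂ := fun t ↦ Complex.exp (2 * Real.pi * Complex.I * ((j : ℂ) + 1) * A) *
      (Complex.exp (-(((j : ℂ) + 1) + (X : ℂ)) * t) /
        (1 - Complex.exp (2 * Real.pi * Complex.I * (k : ℂ) * A - (k : ℂ) * t))) with hF_def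
  have hF : ∀ t ∈ Ioi (0:ℝ), HasSum (fun m ↦ c m * rexp (-p m * t)) (F t) := by
    intro t ht
    rw [mem_Ioi] at ht
    set r : ℂ := Complex.exp (2 * Real.pi * Complex.I * (k : ℂ) * A - (k : ℂ) * t) with hr_def
    have hr : ‖r‖ < 1 := by
      rw [hr_def, Complex.norm_exp]
      apply Real.exp_lt_one_iff.mpr
      have h1 : (2 * (Real.pi:ℂ) * Complex.I * (k : ℂ) * A - (k : ℂ) * t).re
          = -(2 * Real.pi * (k:ℝ) * A.im) - k * t := by
        simp [Complex.sub_re, Complex.mul_re, Complex.mul_im]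
      rw [h1]
      have h2 : 0 ≤ 2 * Real.pi * (k:ℝ) * A.im := by positivity
      have h3 : 0 < (k:ℝ) * t := by positivity
      linarith
    set C : ℂ := Complex.exp (2 * Real.pi * Complex.I * ((j : ℂ) + 1) * A) *
        Complex.exp (-(((j : ℂ) + 1) + (X : ℂ)) * t) with hC_def
    have hgeo := (hasSum_geometric_of_norm_lt_one hr).mul_left C
    have heq : (fun m : ℕ ↦ C * r ^ m) = fun m ↦ c m * rexp (-p m * t) := by
      funext m
      simp only [hC_def, hr_def, hc_def, hp_def, Complex.ofReal_exp, ← Complex.exp_nat_mul,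
        ← Complex.exp_add]
      congr 1
      push_cast
      ring
    have hFt : F t = C * (1 - r)⁻¹ := by
      simp only [hF_def, hC_def, hr_def, div_eq_mul_inv]
      ring
    rw [← heq, hFt]
    exact hgeo
  have hsum : Summable fun m ↦ ‖c m‖ / p m ^ s.re := by
    refine Summable.of_nonneg_of_le
      (fun m ↦ div_nonneg (norm_nonneg _) (Real.rpow_nonneg (hp m).le _))
      (fun m ↦ ?_) (sum_aux hs)
    have h1 : ‖c m‖ ≤ 1 := by
      simp only [hc_def]
      have h : (((m * k + j : ℕ) : ℂ) + 1) = ((((m * k + j : ℕ) : ℝ) + 1 : ℝ) : ℂ) := by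
        push_cast; ring
      rw [h]
      exact norm_exp_aux (by positivity) hA
    have h2 : ((m : ℝ) + 1) ^ s.re ≤ p m ^ s.re := by
      apply Real.rpow_le_rpow (by positivity) _ (le_of_lt hs0)
      have hmn : (m:ℝ) ≤ ((m * k + j : ℕ):ℝ) := by
        exact_mod_cast le_trans (Nat.le_mul_of_pos_right m hk) (Nat.le_add_right _ _)
      simp only [hp_def]
      linarith
    have h3 : (p m ^ s.re)⁻¹ ≤ (((m:ℝ)+1) ^ s.re)⁻¹ := by
      apply inv_anti₀ (by positivity) h2
    rw [div_eq_mul_inv]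
    calc ‖c m‖ * (p m ^ s.re)⁻¹ ≤ 1 * (((m:ℝ)+1)^s.re)⁻¹ :=
          mul_le_mul h1 h3 (le_of_lt (inv_pos.mpr (Real.rpow_pos_of_pos (hp m) _))) zero_le_one
      _ = _ := one_mul _
  have key := hasSum_mellin (fun m ↦ Or.inr (hp m)) hs0 hF hsum
  have hmellin : mellin F s = Complex.exp (2 * Real.pi * Complex.I * ((j : ℂ) + 1) * A) *
      ∫ t in Set.Ioi (0 : ℝ),
        (t : ℂ) ^ (s - 1) * Complex.exp (-(((j : ℂ) + 1) + (X : ℂ)) * t) /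
          (1 - Complex.exp (2 * Real.pi * Complex.I * (k : ℂ) * A - (k : ℂ) * t)) := by
    rw [mellin, ← integral_const_mul]
    apply setIntegral_congr_fun measurableSet_Ioi
    intro t ht
    simp only [hF_def, smul_eq_mul]
    ring
  rw [hmellin] at key
  exact key

set_option maxHeartbeats 1000000 in
/-- Integral representation of the `k`-periodic Lerch–Lipschitz zeta function: for
`Re s > 1`, `Γ(s) ζ_k(a, x, s) = ∑_{j=1}^{k} e^{2πi j a_j} ∫_0^∞ t^{s−1}
e^{−(j+x_j)t}/(1 − e^{2πik a_j − kt}) dt`. -/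
theorem zeta_k_gamma_integral_representation
    (k : ℕ) (hk : 0 < k)
    (a : Fin k → ℂ) (haIm : ∀ j, 0 ≤ (a j).im)
    (x : Fin k → ℝ) (hx : ∀ j, 0 ≤ x j)
    (s : ℂ) (hs : 1 < s.re) :
    Complex.Gamma s *
        ∑' n : ℕ,
          Complex.exp (2 * Real.pi * Complex.I * ((n : ℂ) + 1) *
              a ⟨n % k, Nat.mod_lt n hk⟩) *
            ((((n : ℝ) + 1 + x ⟨n % k, Nat.mod_lt n hk⟩ : ℝ)) : ℂ) ^ (-s) =
      ∑ j : Fin k,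
        Complex.exp (2 * Real.pi * Complex.I * ((j : ℂ) + 1) * a j) *
          ∫ t in Set.Ioi (0 : ℝ),
            (t : ℂ) ^ (s - 1) * Complex.exp (-(((j : ℂ) + 1) + (x j : ℂ)) * t) /
              (1 - Complex.exp (2 * Real.pi * Complex.I * (k : ℂ) * a j - (k : ℂ) * t)) := by
  haveI : NeZero k := ⟨hk.ne'⟩
  set g : ℕ → ℂ := fun n ↦ Complex.Gamma s *
      Complex.exp (2 * Real.pi * Complex.I * ((n : ℂ) + 1) * a ⟨n % k, Nat.mod_lt n hk⟩) /
      ((((n : ℝ) + 1 + x ⟨n % k, Nat.mod_lt n hk⟩ : ℝ)) : ℂ) ^ s with hg_def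
  set e : Fin k × ℕ ≃ ℕ := (Equiv.prodComm (Fin k) ℕ).trans (Nat.divModEquiv k).symm with he_def
  have he : ∀ (j : Fin k) (m : ℕ), e (j, m) = m * k + (j : ℕ) := fun j m ↦ rfl
  -- step 1 : LHS = ∑' n, g n
  have step1 : Complex.Gamma s *
        ∑' n : ℕ,
          Complex.exp (2 * Real.pi * Complex.I * ((n : ℂ) + 1) *
              a ⟨n % k, Nat.mod_lt n hk⟩) *
            ((((n : ℝ) + 1 + x ⟨n % k, Nat.mod_lt n hk⟩ : ℝ)) : ℂ) ^ (-s)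
      = ∑' n, g n := by
    rw [← tsum_mul_left]
    apply tsum_congr
    intro n
    simp only [hg_def]
    rw [Complex.cpow_neg, div_eq_mul_inv]
    ring
  -- summability of g
  have hgsum : Summable g := by
    apply Summable.of_norm
    refine Summable.of_nonneg_of_le (fun n ↦ norm_nonneg _) (fun n ↦ ?_)
      ((sum_aux hs).mul_left ‖Complex.Gamma s‖)
    have hxn := hx ⟨n % k, Nat.mod_lt n hk⟩
    have hn0 : (0:ℝ) ≤ (n:ℝ) := Nat.cast_nonneg n
    have hN : (0:ℝ) < (n:ℝ) + 1 + x ⟨n % k, Nat.mod_lt n hk⟩ := by linarith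
    simp only [hg_def, norm_div, norm_mul]
    rw [Complex.norm_cpow_eq_rpow_re_of_pos hN]
    have he1 : ‖Complex.exp (2 * Real.pi * Complex.I * ((n : ℂ) + 1) *
        a ⟨n % k, Nat.mod_lt n hk⟩)‖ ≤ 1 := by
      have h : ((n : ℂ) + 1) = ((((n:ℝ) + 1 : ℝ)) : ℂ) := by push_cast; ring
      rw [h]
      exact norm_exp_aux (by positivity) (haIm _)
    have hmono : ((n:ℝ)+1) ^ s.re ≤ ((n:ℝ) + 1 + x ⟨n % k, Nat.mod_lt n hk⟩) ^ s.re :=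
      Real.rpow_le_rpow (by positivity) (by linarith) (by linarith)
    calc ‖Complex.Gamma s‖ * ‖Complex.exp (2 * Real.pi * Complex.I * ((n : ℂ) + 1) *
            a ⟨n % k, Nat.mod_lt n hk⟩)‖ /
          ((n:ℝ) + 1 + x ⟨n % k, Nat.mod_lt n hk⟩) ^ s.re
        ≤ ‖Complex.Gamma s‖ / ((n:ℝ)+1) ^ s.re := by
          apply div_le_div₀ (norm_nonneg _)
            (mul_le_of_le_one_right (norm_nonneg _) he1) (by positivity) hmono
      _ = ‖Complex.Gamma s‖ * (((n:ℝ)+1) ^ s.re)⁻¹ := by rw [div_eq_mul_inv]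
  have hsum2 : Summable fun p : Fin k × ℕ ↦ g (e p) := e.summable_iff.mpr hgsum
  -- fiber description
  have hcongr : ∀ j : Fin k, (fun m : ℕ ↦ g (e (j, m))) =
      fun m : ℕ ↦ Complex.Gamma s *
        Complex.exp (2 * Real.pi * Complex.I * (((m * k + (j:ℕ) : ℕ) : ℂ) + 1) * a j) /
        ((((m * k + (j:ℕ) : ℕ) : ℝ) + 1 + x j : ℝ) : ℂ) ^ s := by
    intro j
    funext m
    rw [he j m]
    have hfin : (⟨(m * k + (j:ℕ)) % k, Nat.mod_lt (m * k + (j:ℕ)) hk⟩ : Fin k) = j := by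
      apply Fin.ext
      exact Nat.mul_add_mod_of_lt j.isLt
    simp only [hg_def]
    rw [hfin]
  have hfib : ∀ j : Fin k, HasSum (fun m : ℕ ↦ g (e (j, m)))
      (Complex.exp (2 * Real.pi * Complex.I * ((j : ℂ) + 1) * a j) *
        ∫ t in Set.Ioi (0 : ℝ),
          (t : ℂ) ^ (s - 1) * Complex.exp (-(((j : ℂ) + 1) + (x j : ℂ)) * t) /
            (1 - Complex.exp (2 * Real.pi * Complex.I * (k : ℂ) * a j - (k : ℂ) * t))) := by
    intro j
    rw [hcongr j]
    exact hasSum_fiber k hk (j : ℕ) j.isLt (a j) (haIm j) (x j) (hx j) s hs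
  calc Complex.Gamma s *
        ∑' n : ℕ,
          Complex.exp (2 * Real.pi * Complex.I * ((n : ℂ) + 1) *
              a ⟨n % k, Nat.mod_lt n hk⟩) *
            ((((n : ℝ) + 1 + x ⟨n % k, Nat.mod_lt n hk⟩ : ℝ)) : ℂ) ^ (-s)
      = ∑' n, g n := step1
    _ = ∑' p : Fin k × ℕ, g (e p) := (e.tsum_eq g).symm
    _ = ∑' (j : Fin k), ∑' (m : ℕ), g (e (j, m)) := Summable.tsum_prod' hsum2 (fun j ↦ (hfib j).summable)
    _ = ∑ j : Fin k, ∑' (m : ℕ), g (e (j, m)) := tsum_fintype _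
    _ = _ := Finset.sum_congr rfl (fun j _ ↦ (hfib j).tsum_eq)
end

section
/- Uniqueness along the real slice: let z0 ∈ ℓ∞ and β > 0, and let f : ℓ∞ → ℂ be analytic on the open ball B(z0, β) ⊂ ℓ∞. If f(z) = 0 for every z ∈ B(z0, β) such that Im(z n) = Im(z0 n) for all n ∈ ℕ, then f(z) = 0 for every z ∈ B(z0, β). -/
open scoped ENNReal

set_option maxHeartbeats 1000000 in
set_option synthInstance.maxHeartbeats 200000 in
/-- Uniqueness along the real slice: an analytic function on a ball in `ℓ∞` vanishing
on the translate of the real subspace through the center vanishes identically. -/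
theorem analytic_eq_zero_of_vanishing_on_real_slice
    (z0 : lp (fun _ : ℕ => ℂ) ∞) (β : ℝ) (hβ : 0 < β)
    (f : lp (fun _ : ℕ => ℂ) ∞ → ℂ)
    (hf : AnalyticOnNhd ℂ f (Metric.ball z0 β))
    (hzero : ∀ z ∈ Metric.ball z0 β, (∀ n : ℕ, (z n).im = (z0 n).im) → f z = 0) :
    ∀ z ∈ Metric.ball z0 β, f z = 0 := by
  intro z hz
  set u : lp (fun _ : ℕ => ℂ) ∞ := z - z0 with hu
  have hubdd : Memℓp (fun n : ℕ => ((u n).re : ℂ)) ∞ := by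
    apply memℓp_infty
    refine ⟨‖u‖, ?_⟩
    rintro r ⟨n, rfl⟩
    simp only [Complex.norm_real]
    exact le_trans (Complex.abs_re_le_norm _) (lp.norm_apply_le_norm ENNReal.top_ne_zero u n)
  have hvbdd : Memℓp (fun n : ℕ => ((u n).im : ℂ)) ∞ := by
    apply memℓp_infty
    refine ⟨‖u‖, ?_⟩
    rintro r ⟨n, rfl⟩
    simp only [Complex.norm_real]
    exact le_trans (Complex.abs_im_le_norm _) (lp.norm_apply_le_norm ENNReal.top_ne_zero u n)
  set x : lp (fun _ : ℕ => ℂ) ∞ := ⟨fun n => ((u n).re : ℂ), hubdd⟩ with hx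
  set v : lp (fun _ : ℕ => ℂ) ∞ := ⟨fun n => ((u n).im : ℂ), hvbdd⟩ with hv
  have hxnorm : ‖x‖ ≤ ‖u‖ := by
    apply lp.norm_le_of_forall_le (norm_nonneg u)
    intro n
    exact le_trans (by show ‖((u n).re : ℂ)‖ ≤ ‖u n‖; simpa using Complex.abs_re_le_norm (u n))
      (lp.norm_apply_le_norm ENNReal.top_ne_zero u n)
  have hvnorm : ‖v‖ ≤ ‖u‖ := by
    apply lp.norm_le_of_forall_le (norm_nonneg u)
    intro n
    exact le_trans (by show ‖((u n).im : ℂ)‖ ≤ ‖u n‖; simpa using Complex.abs_im_le_norm (u n))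
      (lp.norm_apply_le_norm ENNReal.top_ne_zero u n)
  have hunorm : ‖u‖ < β := by
    rw [hu]
    simpa [dist_eq_norm] using hz
  -- the affine slice map
  set φ : ℂ → lp (fun _ : ℕ => ℂ) ∞ := fun w => z0 + x + w • v with hφ
  set D : Set ℂ := φ ⁻¹' (Metric.ball z0 β) with hD
  have hφan : AnalyticOnNhd ℂ φ Set.univ := by
    apply AnalyticOnNhd.add
    · exact analyticOnNhd_const
    · exact analyticOnNhd_id.smul analyticOnNhd_const
  have hφcont : Continuous φ := by
    rw [← continuousOn_univ]
    exact hφan.continuousOn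
  have hDopen : IsOpen D := Metric.isOpen_ball.preimage hφcont
  have hDconv : Convex ℝ D := by
    intro a ha b hb s t hs ht hst
    have key : φ (s • a + t • b) = s • φ a + t • φ b := by
      have h1 : s • φ a + t • φ b = (s + t) • (z0 + x) + (s • a + t • b) • v := by
        simp only [hφ, smul_add, add_smul, smul_assoc]
        abel
      rw [h1, hst, one_smul, hφ]
    have hmemb := (convex_ball z0 β) ha hb hs ht hst
    simp only [hD, Set.mem_preimage] at *
    rw [key]
    exact hmemb
  have hg : AnalyticOnNhd ℂ (f ∘ φ) D := by
    apply hf.comp (hφan.mono (Set.subset_univ D))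
    intro w hw
    exact hw
  -- membership criterion
  have hmem : ∀ w : ℂ, (φ w ∈ Metric.ball z0 β ↔ ‖x + w • v‖ < β) := by
    intro w
    rw [Metric.mem_ball, dist_eq_norm, hφ]
    have e : (z0 + x + w • v) - z0 = x + w • v := by abel
    rw [e]
  have hI : φ Complex.I = z := by
    have hxv : x + Complex.I • v = u := by
      ext n
      simp only [lp.coeFn_add, lp.coeFn_smul, Pi.add_apply, Pi.smul_apply, hx, hv,
        smul_eq_mul]
      simpa [mul_comm] using (Complex.re_add_im (u n))
    rw [hφ]
    show z0 + x + Complex.I • v = z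
    rw [add_assoc, hxv, hu]
    abel
  have hID : Complex.I ∈ D := by
    simp only [hD, Set.mem_preimage, hI]
    exact hz
  -- real points near 0 are in D and in the slice
  set δ : ℝ := (β - ‖x‖) / (‖v‖ + 1) with hδ
  have hδpos : 0 < δ := by
    apply div_pos
    · linarith [lt_of_le_of_lt hxnorm hunorm]
    · positivity
  have hreal : ∀ t : ℝ, |t| < δ → f (φ (t : ℂ)) = 0 := by
    intro t ht
    have hball : φ (t : ℂ) ∈ Metric.ball z0 β := by
      rw [hmem]
      calc ‖x + (t : ℂ) • v‖ ≤ ‖x‖ + ‖(t : ℂ) • v‖ := norm_add_le _ _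
        _ = ‖x‖ + |t| * ‖v‖ := by rw [norm_smul]; simp
        _ < ‖x‖ + δ * (‖v‖ + 1) := by
            have h1 : |t| * ‖v‖ ≤ |t| * (‖v‖ + 1) := by
              apply mul_le_mul_of_nonneg_left (by linarith) (abs_nonneg t)
            have h2 : |t| * (‖v‖ + 1) < δ * (‖v‖ + 1) := by
              apply mul_lt_mul_of_pos_right ht (by positivity)
            linarith
        _ = ‖x‖ + (β - ‖x‖) := by
            rw [hδ, div_mul_cancel₀]
            positivity
        _ = β := by ring
    apply hzero _ hball
    intro n
    have : (φ (t : ℂ)) n = z0 n + ((u n).re : ℂ) + (t : ℂ) * ((u n).im : ℂ) := by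
      simp only [hφ, lp.coeFn_add, lp.coeFn_smul, Pi.add_apply, Pi.smul_apply, hx, hv,
        smul_eq_mul]
    rw [this]
    simp
  -- frequently zero at 0 within punctured nbhd
  have hfreq : ∃ᶠ w in nhdsWithin (0 : ℂ) {(0 : ℂ)}ᶜ, (f ∘ φ) w = 0 := by
    have htend : Filter.Tendsto (fun k : ℕ => ((δ / (k + 2) : ℝ) : ℂ)) Filter.atTop
        (nhdsWithin (0 : ℂ) {(0 : ℂ)}ᶜ) := by
      rw [tendsto_nhdsWithin_iff]
      constructor
      · have h0 : Filter.Tendsto (fun k : ℕ => (δ / (k + 2) : ℝ)) Filter.atTop (nhds 0) := by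
          apply Filter.Tendsto.div_atTop tendsto_const_nhds
          exact Filter.tendsto_atTop_add_const_right _ _ tendsto_natCast_atTop_atTop
        have := (Complex.continuous_ofReal.tendsto 0).comp h0
        simpa [Function.comp_def] using this
      · filter_upwards with k
        simp only [Set.mem_compl_iff, Set.mem_singleton_iff]
        intro h
        have h' : (δ / (k + 2) : ℝ) = 0 := by exact_mod_cast h
        rw [div_eq_zero_iff] at h'
        rcases h' with h' | h'
        · linarith
        · have hk : (0:ℝ) ≤ (k:ℝ) := Nat.cast_nonneg k
          linarith
    apply htend.frequently
    apply Filter.Frequently.of_forall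
    intro k
    apply hreal
    rw [abs_of_pos (by positivity)]
    rw [div_lt_iff₀ (by positivity)]
    nlinarith [hδpos]
  have h0D : (0 : ℂ) ∈ D := by
    rw [hD, Set.mem_preimage, hmem]
    simpa using lt_of_le_of_lt hxnorm hunorm
  have heq := hg.eqOn_zero_of_preconnected_of_frequently_eq_zero hDconv.isPreconnected h0D hfreq
  have := heq hID
  simpa [hI] using this
end
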